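/- arXiv:0906.4536 — 5 statements merged into one kernel-verified Lean document; each statement's English description precedes it below -/
import Mathlib

section
/- For every integer m ≥ 1 and every real number θ with cos θ ≠ 0, the evaluation of the polynomial T̂_{2m} at the real number 1/(4cos²θ) equals 2cos(2mθ) / (2cosθ)^{2m}. -/
/-- `Tnat` is the shifted recursion: `Tnat (m+1) = Tpoly m`. -/
noncomputable def Tnat : ℕ → Polynomial ℤ
  | 0 => 1
  | 1 => 1
  | (n + 2) => Tnat (n + 1) - Polynomial.X * Tnat n

/-- `Tpoly m = 1` for `m ≤ 0` and `Tpoly m = Tpoly (m-1) - X * Tpoly (m-2)` for `m ≥ 1`. -/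
noncomputable def Tpoly (m : ℤ) : Polynomial ℤ := Tnat (m + 1).toNat

/-- `T̂_{2m} = T_{2m-1} - t·T_{2m-3}`, for `m ≥ 1`. -/
noncomputable def Thatpoly (m : ℤ) : Polynomial ℤ :=
  Tpoly (2 * m - 1) - Polynomial.X * Tpoly (2 * m - 3)

open Polynomial Polynomial.Chebyshev in
lemma key (c x : ℝ) (h : 4 * c ^ 2 * x = 1) (n : ℕ) :
    (Polynomial.aeval x (Tnat n)) * (2 * c) ^ n = (U ℝ (n : ℤ)).eval c := by
  induction n using Nat.strong_induction_on with
  | _ n ih =>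
    match n with
    | 0 => simp [Tnat]
    | 1 => simp [Tnat, U_one]
    | (n + 2) =>
      have h1 := ih (n + 1) (by omega)
      have h0 := ih n (by omega)
      have hU : (U ℝ ((n : ℤ) + 2)).eval c
          = 2 * c * (U ℝ ((n : ℤ) + 1)).eval c - (U ℝ (n : ℤ)).eval c := by
        rw [U_add_two]; simp
      have : ((n + 2 : ℕ) : ℤ) = (n : ℤ) + 2 := by push_cast; ring
      rw [this, hU]
      have : ((n + 1 : ℕ) : ℤ) = (n : ℤ) + 1 := by push_cast; ring
      rw [← this, ← h1, ← h0]
      simp only [Tnat, map_sub, map_mul, aeval_X]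
      linear_combination (-(((Polynomial.aeval x) (Tnat n)) * (2 * c) ^ n)) * h

theorem stmt1 (m : ℤ) (hm : 1 ≤ m) (θ : ℝ) (hc : Real.cos θ ≠ 0) :
    Polynomial.aeval (1 / (4 * Real.cos θ ^ 2)) (Thatpoly m)
      = 2 * Real.cos (2 * (m : ℝ) * θ) / (2 * Real.cos θ) ^ (2 * m) := by
  open Polynomial Polynomial.Chebyshev in
  set c := Real.cos θ with hcdef
  set x : ℝ := 1 / (4 * c ^ 2) with hx
  have hc2 : (4 : ℝ) * c ^ 2 ≠ 0 := by positivity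
  have h : 4 * c ^ 2 * x = 1 := by rw [hx]; exact mul_one_div_cancel hc2
  obtain ⟨n, rfl⟩ : ∃ n : ℕ, m = (n : ℤ) + 1 := ⟨(m - 1).toNat, by omega⟩
  have e1 : Tpoly (2 * ((n : ℤ) + 1) - 1) = Tnat (2 * n + 2) := by
    unfold Tpoly; congr 1; omega
  have e2 : Tpoly (2 * ((n : ℤ) + 1) - 3) = Tnat (2 * n) := by
    unfold Tpoly; congr 1; omega
  have k2 := key c x h (2 * n + 2)
  have k0 := key c x h (2 * n)
  have h2c : (2 * c) ≠ 0 := by simpa using hc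
  have hpow : (2 * c) ^ (2 * ((n : ℤ) + 1)) = (2 * c) ^ (2 * n + 2 : ℕ) := by
    rw [show (2 * ((n : ℤ) + 1)) = ((2 * n + 2 : ℕ) : ℤ) by push_cast; ring,
      zpow_natCast]
  have hT : Real.cos (2 * (((n : ℝ) + 1)) * θ) = (T ℝ ((2 * n + 2 : ℕ) : ℤ)).eval c := by
    rw [T_real_cos]; push_cast; ring_nf
  have hUT : (U ℝ ((2 * n + 2 : ℕ) : ℤ)).eval c - (U ℝ ((2 * n : ℕ) : ℤ)).eval c
      = 2 * (T ℝ ((2 * n + 2 : ℕ) : ℤ)).eval c := by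
    have hA := T_eq_U_sub_X_mul_U ℝ ((2 * n : ℤ) + 2)
    have hB := U_add_two ℝ (2 * n : ℤ)
    have hc1 : ((2 * n + 2 : ℕ) : ℤ) = (2 * n : ℤ) + 2 := by push_cast; ring
    have hc0 : ((2 * n : ℕ) : ℤ) = (2 * n : ℤ) := by push_cast; ring
    rw [hc1, hc0, hA, hB]
    simp only [eval_sub, eval_mul, eval_X, eval_add, eval_ofNat]
    have : ((2 * n : ℤ) + 2 - 1) = (2 * n : ℤ) + 1 := by ring
    rw [this]
    ring
  rw [Thatpoly, map_sub, map_mul, Polynomial.aeval_X, e1, e2, hpow]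
  push_cast
  rw [hT]
  rw [eq_div_iff (by positivity), sub_mul]
  rw [show (2 * n + 2 : ℕ) = (2 * n) + 2 by ring] at k2 ⊢
  have hx2 : x * (2 * c) ^ (2 * n + 2) = (2 * c) ^ (2 * n) := by
    rw [pow_add]
    have : (2 * c) ^ 2 = 4 * c ^ 2 := by ring
    rw [this]
    field_simp [hx]
    linear_combination h
  calc (Polynomial.aeval x) (Tnat (2 * n + 2)) * (2 * c) ^ (2 * n + 2)
        - x * (Polynomial.aeval x) (Tnat (2 * n)) * (2 * c) ^ (2 * n + 2)
      = (Polynomial.aeval x) (Tnat (2 * n + 2)) * (2 * c) ^ (2 * n + 2)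
        - (Polynomial.aeval x) (Tnat (2 * n)) * (2 * c) ^ (2 * n) := by
        rw [mul_comm x, mul_assoc, hx2]
    _ = 2 * (T ℝ ((2 * n + 2 : ℕ) : ℤ)).eval c := by
        rw [k2, k0]
        rw [show ((2 * n) + 2 : ℕ) = (2 * n + 2 : ℕ) by ring] at hUT ⊢
        exact hUT
end

section
/- For every integer m ≥ 0, all complex roots of T_m are real and simple (T_m has no repeated roots), so that T_m has exactly ⌈m/2⌉ distinct real roots; likewise, for every integer m ≥ 1, all complex roots of T̂_{2m} are real and simple, so that T̂_{2m} has exactly m distinct real roots. -/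
open Polynomial Complex

lemma Tnat_closed (n : ℕ) (z : ℂ) :
    (2*z - 1) * Polynomial.aeval (z - z^2) (Tnat n) = z^(n+1) - (1-z)^(n+1) := by
  induction n using Nat.strong_induction_on with
  | _ n ih =>
    match n with
    | 0 => simp [Tnat]; ring
    | 1 => simp [Tnat]; ring
    | (k+2) =>
      have h1 := ih (k+1) (by omega)
      have h2 := ih k (by omega)
      rw [show Tnat (k+2) = Tnat (k+1) - Polynomial.X * Tnat k from rfl]
      simp only [map_sub, map_mul, aeval_X] at *
      linear_combination h1 - (z - z^2) * h2

lemma Tnat_natDegree_le (n : ℕ) : (Tnat n).natDegree ≤ n / 2 := by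
  induction n using Nat.strong_induction_on with
  | _ n ih =>
    match n with
    | 0 => simp [Tnat]
    | 1 => simp [Tnat]
    | (k+2) =>
      rw [show Tnat (k+2) = Tnat (k+1) - Polynomial.X * Tnat k from rfl]
      refine (Polynomial.natDegree_sub_le _ _).trans ?_
      have h1 := ih (k+1) (by omega)
      have h2 := ih k (by omega)
      have h3 : (Polynomial.X * Tnat k).natDegree ≤ 1 + k/2 :=
        (Polynomial.natDegree_mul_le).trans (by simpa using h2)
      omega

lemma Tnat_coeff_zero (n : ℕ) : (Tnat n).coeff 0 = 1 := by
  induction n using Nat.strong_induction_on with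
  | _ n ih =>
    match n with
    | 0 => simp [Tnat]
    | 1 => simp [Tnat]
    | (k+2) =>
      rw [show Tnat (k+2) = Tnat (k+1) - Polynomial.X * Tnat k from rfl]
      have h1 := ih (k+1) (by omega)
      simp [Polynomial.coeff_sub, Polynomial.mul_coeff_zero, h1]

lemma aeval_real_complex (p : Polynomial ℤ) (x : ℝ) :
    ((Polynomial.aeval x p : ℝ) : ℂ) = Polynomial.aeval (x : ℂ) p := by
  rw [Polynomial.aeval_def, Polynomial.aeval_def]
  have h := Polynomial.hom_eval₂ p (algebraMap ℤ ℝ) Complex.ofRealHom x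
  have h2 : (Complex.ofRealHom.comp (algebraMap ℤ ℝ)) = algebraMap ℤ ℂ :=
    Subsingleton.elim _ _
  rw [h2] at h
  exact h

lemma key_s3 (φ : ℝ) (hc : Real.cos φ ≠ 0) (hs : Real.sin φ ≠ 0) :
    ∃ z : ℂ, z - z^2 = ((1/(4*Real.cos φ^2) : ℝ) : ℂ) ∧ 2*z - 1 ≠ 0 ∧
      ∀ n : ℕ, (z^n - (1-z)^n) * (2*(Real.cos φ : ℂ))^n = 2 * I * (Real.sin (n*φ) : ℂ) ∧
               (z^n + (1-z)^n) * (2*(Real.cos φ : ℂ))^n = 2 * (Real.cos (n*φ) : ℂ) := by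
  set c : ℂ := (Real.cos φ : ℂ) with hcc
  have hc' : c ≠ 0 := by rw [hcc]; exact_mod_cast hc
  set e : ℂ := Complex.exp (φ * I) with he
  set e' : ℂ := Complex.exp (-(φ:ℂ) * I) with he'
  have hee' : e * e' = 1 := by
    rw [he, he', ← Complex.exp_add]; ring_nf; exact Complex.exp_zero
  have hen : ∀ n : ℕ, e^n = Complex.exp ((((n:ℝ)*φ : ℝ):ℂ) * I) := by
    intro n
    rw [he, ← Complex.exp_nat_mul]
    push_cast
    ring_nf
  have hen' : ∀ n : ℕ, e'^n = Complex.exp (-(((n:ℝ)*φ : ℝ):ℂ) * I) := by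
    intro n
    rw [he', ← Complex.exp_nat_mul]
    push_cast
    ring_nf
  have hdiffgen : ∀ n : ℕ, e^n - e'^n = 2 * I * (Real.sin ((n:ℝ)*φ) : ℂ) := by
    intro n
    rw [hen n, hen' n, Complex.ofReal_sin, Complex.sin]
    have h2 : I * I = -1 := Complex.I_mul_I
    set w := (((n:ℝ)*φ : ℝ):ℂ)
    linear_combination (Complex.exp (w*I) - Complex.exp (-w*I)) * h2
  have hsumgen : ∀ n : ℕ, e^n + e'^n = 2 * (Real.cos ((n:ℝ)*φ) : ℂ) := by
    intro n
    rw [hen n, hen' n, Complex.ofReal_cos, Complex.cos]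
    ring
  have hsum : e + e' = 2 * c := by
    have := hsumgen 1
    simpa [hcc] using this
  set z : ℂ := e / (2*c) with hz0
  have hz : 2*c*z = e := by rw [hz0]; field_simp
  have h1z : 2*c*(1-z) = e' := by
    linear_combination (-1 : ℂ) * hz - hsum
  clear_value z e e' c
  refine ⟨z, ?_, ?_, ?_⟩
  · have hzz : (z - z^2) * (4*c^2) = 1 := by
      linear_combination (2*c*(1-z)) * hz + e * h1z + hee'
    have hcast : ((1/(4*Real.cos φ^2) : ℝ) : ℂ) = 1/(4*c^2) := by
      rw [hcc]; push_cast; ring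
    rw [hcast]
    field_simp
    linear_combination hzz
  · intro h
    have hd1 := hdiffgen 1
    have hz1 : e - e' = 0 := by
      rw [← hz, ← h1z]; linear_combination (2*c) * h
    rw [pow_one, pow_one, hz1] at hd1
    have h2I : (2*I : ℂ) ≠ 0 := by simp [Complex.I_ne_zero]
    have h0 : (Real.sin (((1:ℕ):ℝ)*φ) : ℂ) = 0 := by
      have h3 : (2*I) * (Real.sin (((1:ℕ):ℝ)*φ):ℂ) = (2*I) * 0 := by
        rw [mul_zero, ← hd1]
      exact mul_left_cancel₀ h2I h3
    apply hs
    have h4 := Complex.ofReal_eq_zero.mp h0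
    simpa using h4
  · intro n
    constructor
    · calc (z^n - (1-z)^n) * (2*c)^n = (2*c*z)^n - (2*c*(1-z))^n := by
            simp only [mul_pow]; ring
        _ = e^n - e'^n := by rw [hz, h1z]
        _ = _ := hdiffgen n
    · calc (z^n + (1-z)^n) * (2*c)^n = (2*c*z)^n + (2*c*(1-z))^n := by
            simp only [mul_pow]; ring
        _ = e^n + e'^n := by rw [hz, h1z]
        _ = _ := hsumgen n

lemma cpow_ne (φ : ℝ) (hc : Real.cos φ ≠ 0) (n : ℕ) : (2*(Real.cos φ : ℂ))^n ≠ 0 := by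
  exact pow_ne_zero _ (mul_ne_zero two_ne_zero (Complex.ofReal_ne_zero.mpr hc))

lemma Tnat_root (n : ℕ) (φ : ℝ) (hc : Real.cos φ ≠ 0) (hs : Real.sin φ ≠ 0)
    (h0 : Real.sin ((((n:ℝ)+1))*φ) = 0) :
    Polynomial.aeval ((1/(4*Real.cos φ^2) : ℝ) : ℂ) (Tnat n) = 0 := by
  obtain ⟨z, hzz, hz1, hpows⟩ := key_s3 φ hc hs
  have hA := Tnat_closed n z
  have hp := (hpows (n+1)).1
  rw [show (((n+1:ℕ)):ℝ) = (n:ℝ)+1 by push_cast; ring, h0] at hp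
  simp only [Complex.ofReal_zero, mul_zero] at hp
  have hdz : z^(n+1) - (1-z)^(n+1) = 0 :=
    by
      have := cpow_ne φ hc (n+1)
      exact (mul_eq_zero.mp hp).resolve_right this
  rw [hdz] at hA
  rw [← hzz]
  exact (mul_eq_zero.mp hA).resolve_left hz1

lemma That_root (k : ℕ) (φ : ℝ) (hc : Real.cos φ ≠ 0) (hs : Real.sin φ ≠ 0)
    (h0 : Real.cos ((2*(k:ℝ)+2)*φ) = 0) :
    Polynomial.aeval ((1/(4*Real.cos φ^2) : ℝ) : ℂ)
      (Tnat (2*k+2) - Polynomial.X * Tnat (2*k)) = 0 := by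
  obtain ⟨z, hzz, hz1, hpows⟩ := key_s3 φ hc hs
  have hA1 := Tnat_closed (2*k+2) z
  have hA2 := Tnat_closed (2*k) z
  have hp := (hpows (2*k+2)).2
  rw [show (((2*k+2:ℕ)):ℝ) = 2*(k:ℝ)+2 by push_cast; ring, h0] at hp
  simp only [Complex.ofReal_zero, mul_zero] at hp
  have hdz : z^(2*k+2) + (1-z)^(2*k+2) = 0 := by
    have := cpow_ne φ hc (2*k+2)
    exact (mul_eq_zero.mp hp).resolve_right this
  have hval : (2*z-1) * Polynomial.aeval (z - z^2) (Tnat (2*k+2) - Polynomial.X * Tnat (2*k)) = 0 := by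
    simp only [map_sub, map_mul, Polynomial.aeval_X]
    have : (2*k+2)+1 = 2*k+3 := by ring
    rw [this] at hA1
    have : (2*k)+1 = 2*k+1 := rfl
    calc (2*z-1) * (Polynomial.aeval (z - z^2) (Tnat (2*k+2)) -
          (z - z^2) * Polynomial.aeval (z - z^2) (Tnat (2*k)))
        = (2*z-1) * Polynomial.aeval (z - z^2) (Tnat (2*k+2)) -
          (z - z^2) * ((2*z-1) * Polynomial.aeval (z - z^2) (Tnat (2*k))) := by ring
      _ = (z^(2*k+3) - (1-z)^(2*k+3)) - (z - z^2) * (z^(2*k+1) - (1-z)^(2*k+1)) := by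
          rw [hA1, hA2]
      _ = (2*z-1) * (z^(2*k+2) + (1-z)^(2*k+2)) := by
          simp only [pow_succ, pow_mul]
          ring
      _ = 0 := by rw [hdz, mul_zero]
  rw [← hzz]
  exact (mul_eq_zero.mp hval).resolve_left hz1

lemma main_count (p : Polynomial ℤ) (d : ℕ) (hdeg : p.natDegree ≤ d)
    (h0 : p.coeff 0 = 1) (f : ℕ → ℝ)
    (hinj : ∀ k ∈ Finset.Icc 1 d, ∀ l ∈ Finset.Icc 1 d, f k = f l → k = l)
    (hroot : ∀ k ∈ Finset.Icc 1 d, Polynomial.aeval ((f k : ℝ) : ℂ) p = 0) :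
    (∀ z : ℂ, Polynomial.aeval z p = 0 → z.im = 0) ∧
    (p.map (Int.castRingHom ℂ)).roots.Nodup ∧
    {x : ℝ | Polynomial.aeval x p = 0}.ncard = d := by
  set P : Polynomial ℂ := p.map (Int.castRingHom ℂ) with hP
  have hev : ∀ z : ℂ, Polynomial.aeval z p = Polynomial.eval z P := by
    intro z
    rw [Polynomial.aeval_def, Polynomial.eval₂_eq_eval_map]
    congr 1
  have hPne : P ≠ 0 := by
    intro h
    have : P.coeff 0 = 1 := by simp [hP, Polynomial.coeff_map, h0]
    rw [h] at this; simp at this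
  have hPdeg : P.natDegree ≤ d := le_trans Polynomial.natDegree_map_le hdeg
  set F : Finset ℝ := (Finset.Icc 1 d).image f with hF
  have hFcard : F.card = d := by
    rw [hF, Finset.card_image_of_injOn (fun a ha b hb => hinj a ha b hb), Nat.card_Icc]
    omega
  set G : Finset ℂ := F.image Complex.ofReal with hG
  have hGcard : G.card = d := by
    rw [hG, Finset.card_image_of_injective _ Complex.ofReal_injective, hFcard]
  have hGroot : ∀ z ∈ G, Polynomial.aeval z p = 0 := by
    intro z hz
    simp only [hG, Finset.mem_image, hF] at hz
    obtain ⟨r, hr, rfl⟩ := hz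
    obtain ⟨k, hk, rfl⟩ := hr
    exact hroot k hk
  have hle : G.val ≤ P.roots := by
    rw [Finset.val_le_iff_val_subset]
    intro z hz
    rw [Polynomial.mem_roots hPne]
    rw [Polynomial.IsRoot, ← hev]; exact hGroot z hz
  have hcard : Multiset.card P.roots ≤ Multiset.card G.val := by
    rw [show Multiset.card G.val = d from hGcard]
    exact le_trans (Polynomial.card_roots' P) hPdeg
  have heq : G.val = P.roots := Multiset.eq_of_le_of_card_le hle hcard
  have hmem : ∀ z : ℂ, Polynomial.aeval z p = 0 → z ∈ G := by
    intro z hz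
    have : z ∈ P.roots := by
      rw [Polynomial.mem_roots hPne, Polynomial.IsRoot, ← hev]; exact hz
    rwa [← heq] at this
  refine ⟨?_, ?_, ?_⟩
  · intro z hz
    obtain ⟨r, _, rfl⟩ := Finset.mem_image.mp (hmem z hz)
    simp
  · rw [← heq]; exact G.nodup
  · have hset : {x : ℝ | Polynomial.aeval x p = 0} = ↑F := by
      ext x
      simp only [Set.mem_setOf_eq, Finset.mem_coe]
      constructor
      · intro hx
        have : ((x:ℝ):ℂ) ∈ G := hmem _ (by rw [← aeval_real_complex, hx]; simp)
        obtain ⟨r, hr, hrx⟩ := Finset.mem_image.mp this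
        rwa [show r = x from Complex.ofReal_injective hrx] at hr
      · intro hx
        have : Polynomial.aeval ((x:ℝ):ℂ) p = 0 := hGroot _ (Finset.mem_image_of_mem _ hx)
        rw [← aeval_real_complex] at this
        exact_mod_cast this
    rw [hset, Set.ncard_coe_finset, hFcard]


lemma cos_pos_of (x : ℝ) (h1 : 0 < x) (h2 : x < Real.pi/2) : 0 < Real.cos x :=
  Real.cos_pos_of_mem_Ioo ⟨by linarith [Real.pi_pos], h2⟩

lemma sin_pos_of (x : ℝ) (h1 : 0 < x) (h2 : x < Real.pi/2) : 0 < Real.sin x :=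
  Real.sin_pos_of_pos_of_lt_pi h1 (by linarith [Real.pi_pos])

lemma inj_helper (x y : ℝ) (hx : 0 < x) (hx2 : x < Real.pi/2)
    (hy : 0 < y) (hy2 : y < Real.pi/2)
    (h : 1/(4*Real.cos x^2) = 1/(4*Real.cos y^2)) : x = y := by
  have hcx : 0 < Real.cos x := cos_pos_of x hx hx2
  have hcy : 0 < Real.cos y := cos_pos_of y hy hy2
  have h3 : Real.cos x = Real.cos y := by
    field_simp at h
    nlinarith [h, hcx, hcy]
  have hpi := Real.pi_pos
  exact Real.strictAntiOn_cos.injOn ⟨le_of_lt hx, by linarith⟩ ⟨le_of_lt hy, by linarith⟩ h3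


theorem stmt3 :
    (∀ m : ℤ, 0 ≤ m →
      (∀ z : ℂ, Polynomial.aeval z (Tpoly m) = 0 → z.im = 0) ∧
      ((Tpoly m).map (Int.castRingHom ℂ)).roots.Nodup ∧
      {x : ℝ | Polynomial.aeval x (Tpoly m) = 0}.ncard = ((m + 1) / 2).toNat) ∧
    (∀ m : ℤ, 1 ≤ m →
      (∀ z : ℂ, Polynomial.aeval z (Thatpoly m) = 0 → z.im = 0) ∧
      ((Thatpoly m).map (Int.castRingHom ℂ)).roots.Nodup ∧
      {x : ℝ | Polynomial.aeval x (Thatpoly m) = 0}.ncard = m.toNat) := by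
  have hπ := Real.pi_pos
  have hπ0 := Real.pi_ne_zero
  constructor
  · intro m hm
    set n : ℕ := (m+1).toNat with hn
    have hTp : Tpoly m = Tnat n := by rw [Tpoly]
    have hd : ((m + 1) / 2).toNat = n / 2 := by omega
    rw [hTp, hd]
    set θ : ℕ → ℝ := fun k => (k:ℝ)*Real.pi/((n:ℝ)+1) with hθ
    have hang : ∀ k ∈ Finset.Icc 1 (n/2), 0 < θ k ∧ θ k < Real.pi/2 := by
      intro k hk
      simp only [Finset.mem_Icc] at hk
      obtain ⟨h1, h2⟩ := hk
      have hk0 : (0:ℝ) < k := by exact_mod_cast h1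
      constructor
      · apply div_pos (mul_pos hk0 hπ) (by positivity)
      · rw [div_lt_iff₀ (by positivity)]
        have h3 : (2*(k:ℝ)) ≤ (n:ℝ) := by exact_mod_cast (by omega : 2*k ≤ n)
        nlinarith
    refine main_count (Tnat n) (n/2) (Tnat_natDegree_le n) (Tnat_coeff_zero n)
      (fun k => 1/(4*Real.cos (θ k)^2)) ?_ ?_
    · intro k hk l hl h
      obtain ⟨ha1, ha2⟩ := hang k hk
      obtain ⟨hb1, hb2⟩ := hang l hl
      have h5 := inj_helper _ _ ha1 ha2 hb1 hb2 h
      rw [hθ] at h5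
      simp only at h5
      have hD : ((n:ℝ)+1) ≠ 0 := by positivity
      have h6 := (div_eq_div_iff hD hD).mp h5
      have h7 := mul_right_cancel₀ hD h6
      have h8 := mul_right_cancel₀ hπ0 h7
      exact_mod_cast h8
    · intro k hk
      obtain ⟨ha1, ha2⟩ := hang k hk
      refine Tnat_root n (θ k) (ne_of_gt (cos_pos_of _ ha1 ha2))
        (ne_of_gt (sin_pos_of _ ha1 ha2)) ?_
      have hD : ((n:ℝ)+1) ≠ 0 := by positivity
      have h9 : ((n:ℝ)+1) * θ k = (k:ℝ)*Real.pi := by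
        rw [hθ]; field_simp
      rw [h9]
      have := Real.sin_int_mul_pi (k:ℤ); push_cast at this; exact this
  · intro m hm
    set K : ℕ := (m-1).toNat with hK
    have h1 : (2*m-1+1).toNat = 2*K+2 := by omega
    have h2 : (2*m-3+1).toNat = 2*K := by omega
    have hT : Thatpoly m = Tnat (2*K+2) - Polynomial.X * Tnat (2*K) := by
      rw [Thatpoly, Tpoly, Tpoly, h1, h2]
    have hmt : m.toNat = K+1 := by omega
    rw [hT, hmt]
    set ψ : ℕ → ℝ := fun j => (2*(j:ℝ)-1)*Real.pi/(4*(K:ℝ)+4) with hψ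
    have hang : ∀ j ∈ Finset.Icc 1 (K+1), 0 < ψ j ∧ ψ j < Real.pi/2 := by
      intro j hj
      simp only [Finset.mem_Icc] at hj
      obtain ⟨hj1, hj2⟩ := hj
      have hj0 : (1:ℝ) ≤ j := by exact_mod_cast hj1
      have hj3 : (j:ℝ) ≤ (K:ℝ)+1 := by exact_mod_cast hj2
      constructor
      · apply div_pos (by nlinarith) (by positivity)
      · rw [div_lt_iff₀ (by positivity)]
        nlinarith
    have hdeg : (Tnat (2*K+2) - Polynomial.X * Tnat (2*K)).natDegree ≤ K+1 := by
      refine (Polynomial.natDegree_sub_le _ _).trans ?_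
      have ha := Tnat_natDegree_le (2*K+2)
      have hb : (Polynomial.X * Tnat (2*K)).natDegree ≤ 1 + (2*K)/2 :=
        (Polynomial.natDegree_mul_le).trans (by simpa using Tnat_natDegree_le (2*K))
      omega
    have hc0 : (Tnat (2*K+2) - Polynomial.X * Tnat (2*K)).coeff 0 = 1 := by
      simp [Polynomial.coeff_sub, Polynomial.mul_coeff_zero, Tnat_coeff_zero]
    refine main_count _ (K+1) hdeg hc0 (fun j => 1/(4*Real.cos (ψ j)^2)) ?_ ?_
    · intro k hk l hl h
      obtain ⟨ha1, ha2⟩ := hang k hk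
      obtain ⟨hb1, hb2⟩ := hang l hl
      have h5 := inj_helper _ _ ha1 ha2 hb1 hb2 h
      rw [hψ] at h5
      simp only at h5
      have hD : (4*(K:ℝ)+4) ≠ 0 := by positivity
      have h6 := (div_eq_div_iff hD hD).mp h5
      have h7 := mul_right_cancel₀ hD h6
      have h8 := mul_right_cancel₀ hπ0 h7
      have h9 : (k:ℝ) = (l:ℝ) := by linarith
      exact_mod_cast h9
    · intro j hj
      obtain ⟨ha1, ha2⟩ := hang j hj
      refine That_root K (ψ j) (ne_of_gt (cos_pos_of _ ha1 ha2))
        (ne_of_gt (sin_pos_of _ ha1 ha2)) ?_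
      have hD : (4*(K:ℝ)+4) ≠ 0 := by positivity
      have h9 : (2*(K:ℝ)+2) * ψ j = (j:ℝ)*Real.pi - Real.pi/2 := by
        rw [hψ]; field_simp; ring
      rw [h9, Real.cos_sub_pi_div_two]
      have := Real.sin_int_mul_pi (j:ℤ); push_cast at this; exact this
end

section
/- For every integer m ≥ 1, the real number ρ_m := 1/(4cos²(π/(m+2))) is a root of T_m and every real root x of T_m satisfies x ≥ ρ_m; and the real number σ_{2m} := 1/(4cos²(π/(4m))) is a root of T̂_{2m} and every real root x of T̂_{2m} satisfies x ≥ σ_{2m}. In other words, ρ_m and σ_{2m} are the smallest roots of T_m and T̂_{2m} respectively. -/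
noncomputable def aT (x : ℝ) (n : ℕ) : ℝ := Polynomial.aeval x (Tnat n)

lemma aT_zero (x : ℝ) : aT x 0 = 1 := by simp [aT, Tnat]
lemma aT_one (x : ℝ) : aT x 1 = 1 := by simp [aT, Tnat]
lemma aT_rec (x : ℝ) (n : ℕ) : aT x (n+2) = aT x (n+1) - x * aT x n := by
  simp [aT, Tnat]

lemma aT_trig (θ : ℝ) (hc : Real.cos θ ≠ 0) (n : ℕ) :
    aT (1/(4*Real.cos θ^2)) n * (Real.sin θ * (2*Real.cos θ)^n)
      = Real.sin (((n:ℝ)+1)*θ) := by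
  induction n using Nat.twoStepInduction with
  | zero => simp [aT_zero]
  | one =>
    rw [aT_one, show ((1:ℕ):ℝ)+1 = 2 by norm_num, Real.sin_two_mul]
    ring
  | more n ih1 ih2 =>
    have hx : (1/(4*Real.cos θ^2)) * (2*Real.cos θ)^2 = 1 := by
      field_simp; ring
    have key : Real.sin (((n:ℝ)+3)*θ)
        = 2*Real.cos θ * Real.sin (((n:ℝ)+2)*θ) - Real.sin (((n:ℝ)+1)*θ) := by
      rw [show ((n:ℝ)+3)*θ = ((n:ℝ)+2)*θ + θ by ring,
        show ((n:ℝ)+1)*θ = ((n:ℝ)+2)*θ - θ by ring, Real.sin_add, Real.sin_sub]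
      ring
    push_cast at ih1 ih2 ⊢
    rw [show ((n:ℝ)+1+1)*θ = ((n:ℝ)+2)*θ by ring] at ih2
    rw [aT_rec, show ((n:ℝ)+2+1) = ((n:ℝ)+3) by ring, key]
    linear_combination (2*Real.cos θ) * ih2
      - ((1/(4*Real.cos θ^2))*(2*Real.cos θ)^2) * ih1
      - Real.sin (((n:ℝ)+1)*θ) * hx

lemma aThat_trig (θ : ℝ) (hc : Real.cos θ ≠ 0) (j : ℕ) :
    (aT (1/(4*Real.cos θ^2)) (2*j+2) - (1/(4*Real.cos θ^2)) * aT (1/(4*Real.cos θ^2)) (2*j))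
        * ((2*Real.cos θ)^(2*j+2) * Real.sin θ)
      = 2*Real.cos ((2*(j:ℝ)+2)*θ) * Real.sin θ := by
  have t1 := aT_trig θ hc (2*j+2)
  have t2 := aT_trig θ hc (2*j)
  have hx : (1/(4*Real.cos θ^2)) * (2*Real.cos θ)^2 = 1 := by field_simp; ring
  push_cast at t1 t2
  rw [show (2*(j:ℝ)+2+1)*θ = (2*(j:ℝ)+2)*θ + θ by ring, Real.sin_add] at t1
  rw [show (2*(j:ℝ)+1)*θ = (2*(j:ℝ)+2)*θ - θ by ring, Real.sin_sub] at t2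
  linear_combination t1 - ((1/(4*Real.cos θ^2))*(2*Real.cos θ)^2) * t2
    - (Real.sin ((2*(j:ℝ)+2)*θ)*Real.cos θ - Real.cos ((2*(j:ℝ)+2)*θ)*Real.sin θ) * hx
lemma aT_mono (x : ℝ) (hx : x ≤ 0) (n : ℕ) : 1 ≤ aT x n ∧ aT x n ≤ aT x (n+1) := by
  induction n using Nat.twoStepInduction with
  | zero => rw [aT_zero, aT_one]; norm_num
  | one =>
    rw [aT_one, aT_rec, aT_zero, aT_one]
    constructor
    · norm_num
    · nlinarith
  | more n ih1 ih2 =>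
    obtain ⟨h1, h2⟩ := ih1
    obtain ⟨h3, h4⟩ := ih2
    have h5 : 1 ≤ aT x (n+2) := by linarith
    refine ⟨h5, ?_⟩
    rw [aT_rec x (n+1)]
    nlinarith

lemma aT_ratio (x r : ℝ) (hx0 : 0 < x) (hr : r^2 = r - x) (hr0 : 0 < r) (hr1 : r < 1)
    (n : ℕ) : 0 < aT x n ∧ r * aT x n ≤ aT x (n+1) ∧ (1 ≤ n → r * aT x n < aT x (n+1)) := by
  induction n with
  | zero =>
    rw [aT_zero, aT_one]
    exact ⟨one_pos, by linarith, by omega⟩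
  | succ n ih =>
    obtain ⟨h1, h2, h3⟩ := ih
    have hpos : 0 < aT x (n+1) := lt_of_lt_of_le (by positivity) h2
    refine ⟨hpos, ?_, fun _ => ?_⟩
    · rw [aT_rec]
      nlinarith
    · rw [aT_rec]
      match n, h3 with
      | 0, _ =>
        rw [aT_zero, aT_one] at *
        nlinarith
      | (k+1), h3 =>
        have h3' := h3 (by omega)
        nlinarith

lemma aT_pos (x : ℝ) (hx : x ≤ 1/4) (n : ℕ) : 0 < aT x n := by
  rcases le_or_gt x 0 with h | h
  · have := (aT_mono x h n).1; linarith
  · have hs0 : (0:ℝ) ≤ 1 - 4*x := by linarith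
    set s := Real.sqrt (1-4*x) with hs
    have hs2 : s^2 = 1-4*x := Real.sq_sqrt hs0
    have hs0' : 0 ≤ s := Real.sqrt_nonneg _
    have hs1 : s < 1 := by nlinarith
    exact (aT_ratio x ((1+s)/2) h (by nlinarith) (by linarith) (by linarith) n).1

lemma aThat_pos (x : ℝ) (hx : x ≤ 1/4) (j : ℕ) :
    0 < aT x (2*j+2) - x * aT x (2*j) := by
  rcases le_or_gt x 0 with h | h
  · have h1 := (aT_mono x h (2*j)).1
    have h2 := (aT_mono x h (2*j+1)).1
    nlinarith [(aT_mono x h (2*j)).2, (aT_mono x h (2*j+1)).2]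
  · have hs0 : (0:ℝ) ≤ 1 - 4*x := by linarith
    set s := Real.sqrt (1-4*x) with hs
    have hs2 : s^2 = 1-4*x := Real.sq_sqrt hs0
    have hs0' : 0 ≤ s := Real.sqrt_nonneg _
    have hs1 : s < 1 := by nlinarith
    set r := (1+s)/2 with hrdef
    have hr : r^2 = r - x := by rw [hrdef]; nlinarith
    have h1 := aT_ratio x r h hr (by rw [hrdef]; linarith) (by rw [hrdef]; linarith) (2*j)
    have h2 := aT_ratio x r h hr (by rw [hrdef]; linarith) (by rw [hrdef]; linarith) (2*j+1)
    have h3 := h2.2.2 (by omega)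
    have h4 := h1.2.1
    have h5 := h1.1
    -- aT (2j+2) > r * aT(2j+1) ≥ r^2 * aT(2j) = (r-x) aT(2j); r ≥ 1/2 ≥ 2x
    have hr12 : 1/2 ≤ r := by rw [hrdef]; linarith
    nlinarith

lemma exists_theta (x : ℝ) (hx : 1/4 < x) :
    ∃ θ : ℝ, 0 < θ ∧ θ < Real.pi/2 ∧ 0 < Real.sin θ ∧ 0 < Real.cos θ ∧
      x = 1/(4*Real.cos θ^2) ∧
      ∀ ψ : ℝ, 0 < ψ → ψ ≤ Real.pi/2 → x < 1/(4*Real.cos ψ^2) → θ < ψ := by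
  have hx0 : (0:ℝ) < x := by linarith
  have hsx : 1/2 < Real.sqrt x := by
    have : Real.sqrt (1/4) < Real.sqrt x := Real.sqrt_lt_sqrt (by norm_num) hx
    rwa [show (1/4:ℝ) = (1/2)^2 by norm_num, Real.sqrt_sq (by norm_num)] at this
  set y := 1/(2*Real.sqrt x) with hy
  have hy0 : 0 < y := by positivity
  have hy1 : y < 1 := by
    rw [hy]; rw [div_lt_one (by linarith)]; linarith
  have hysq : y^2 = 1/(4*x) := by
    rw [hy]; rw [div_pow]; rw [mul_pow, Real.sq_sqrt hx0.le]; norm_num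
  refine ⟨Real.arccos y, Real.arccos_pos.2 hy1, ?_, ?_, ?_, ?_, ?_⟩
  · have h1 : 0 < Real.arcsin y := Real.arcsin_pos.2 hy0
    rw [Real.arccos_eq_pi_div_two_sub_arcsin]
    linarith
  · rw [Real.sin_arccos]
    apply Real.sqrt_pos.2; nlinarith
  · rw [Real.cos_arccos (by linarith) hy1.le]; exact hy0
  · rw [Real.cos_arccos (by linarith) hy1.le, hysq]
    field_simp
  · intro ψ hψ0 hψ2 hlt
    have hcψ : Real.cos ψ ≠ 0 := by
      intro h
      rw [h] at hlt; norm_num at hlt; linarith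
    have hcψ0 : 0 < Real.cos ψ := by
      rcases (Real.cos_nonneg_of_mem_Icc ⟨by linarith, hψ2⟩).lt_or_eq with h | h
      · exact h
      · exact absurd h.symm hcψ
    have hcc : Real.cos ψ < Real.cos (Real.arccos y) := by
      rw [Real.cos_arccos (by linarith) hy1.le]
      have h1 : 0 < 4*Real.cos ψ^2 := by positivity
      have h2 : 4*Real.cos ψ^2 < 1/x := by
        rw [lt_div_iff₀ hx0]
        calc 4*Real.cos ψ^2 * x < 4*Real.cos ψ^2 * (1/(4*Real.cos ψ^2)) := by
              apply mul_lt_mul_of_pos_left hlt h1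
          _ = 1 := by field_simp
      -- cos ψ ^2 < 1/(4x) = y^2, both nonneg
      have h3 : Real.cos ψ^2 < y^2 := by
        rw [hysq, show 1/(4*x) = (1/x)/4 by ring]; linarith
      nlinarith
    by_contra hcon
    push_neg at hcon
    have := Real.cos_le_cos_of_nonneg_of_le_pi hψ0.le (Real.arccos_le_pi y) hcon
    linarith

lemma T_part (j : ℕ) :
    aT (1/(4*Real.cos (Real.pi/((j:ℝ)+3))^2)) (j+2) = 0 ∧
    ∀ x : ℝ, aT x (j+2) = 0 → 1/(4*Real.cos (Real.pi/((j:ℝ)+3))^2) ≤ x := by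
  have hj3 : (0:ℝ) < (j:ℝ)+3 := by positivity
  set θ₁ := Real.pi/((j:ℝ)+3) with hθ₁
  have hθ0 : 0 < θ₁ := by positivity
  have hθlt : θ₁ < Real.pi/2 := by
    rw [hθ₁, div_lt_div_iff₀ hj3 (by norm_num)]
    nlinarith [Real.pi_pos]
  have hc : 0 < Real.cos θ₁ := Real.cos_pos_of_mem_Ioo ⟨by linarith, hθlt⟩
  have hs : 0 < Real.sin θ₁ := Real.sin_pos_of_pos_of_lt_pi hθ0
    (by linarith [Real.pi_pos])
  have hmulpi : ((j:ℝ)+3)*θ₁ = Real.pi := by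
    rw [hθ₁]; field_simp
  have htrig := aT_trig θ₁ hc.ne' (j+2)
  push_cast at htrig
  rw [show ((j:ℝ)+2+1) = ((j:ℝ)+3) by ring, hmulpi, Real.sin_pi] at htrig
  have hmne : Real.sin θ₁ * (2*Real.cos θ₁)^(j+2) ≠ 0 := by positivity
  constructor
  · exact (mul_eq_zero.1 htrig).resolve_right hmne
  · intro x hroot
    by_contra hcon
    push_neg at hcon
    rcases le_or_gt x (1/4) with h4 | h4
    · exact absurd hroot (aT_pos x h4 (j+2)).ne'
    · obtain ⟨θ, hθ0', hθlt', hsθ, hcθ, hxeq, hcomp⟩ := exists_theta x h4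
      have hθθ₁ : θ < θ₁ := hcomp θ₁ hθ0 hθlt.le hcon
      have htrig2 := aT_trig θ hcθ.ne' (j+2)
      rw [← hxeq, hroot] at htrig2
      push_cast at htrig2
      have hposs : 0 < Real.sin (((j:ℝ)+2+1)*θ) := by
        apply Real.sin_pos_of_pos_of_lt_pi (by positivity)
        calc ((j:ℝ)+2+1)*θ < ((j:ℝ)+3)*θ₁ := by
              rw [show ((j:ℝ)+2+1) = ((j:ℝ)+3) by ring]
              exact mul_lt_mul_of_pos_left hθθ₁ hj3
          _ = Real.pi := hmulpi
      rw [← htrig2] at hposs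
      simp at hposs
  
lemma That_part (j : ℕ) :
    (aT (1/(4*Real.cos (Real.pi/(4*(j:ℝ)+4))^2)) (2*j+2)
      - (1/(4*Real.cos (Real.pi/(4*(j:ℝ)+4))^2))
        * aT (1/(4*Real.cos (Real.pi/(4*(j:ℝ)+4))^2)) (2*j) = 0) ∧
    ∀ x : ℝ, aT x (2*j+2) - x * aT x (2*j) = 0 →
      1/(4*Real.cos (Real.pi/(4*(j:ℝ)+4))^2) ≤ x := by
  have hj4 : (0:ℝ) < 4*(j:ℝ)+4 := by positivity
  set θ₂ := Real.pi/(4*(j:ℝ)+4) with hθ₂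
  have hθ0 : 0 < θ₂ := by positivity
  have hθlt : θ₂ < Real.pi/2 := by
    rw [hθ₂, div_lt_div_iff₀ hj4 (by norm_num)]
    nlinarith [Real.pi_pos]
  have hc : 0 < Real.cos θ₂ := Real.cos_pos_of_mem_Ioo ⟨by linarith, hθlt⟩
  have hs : 0 < Real.sin θ₂ := Real.sin_pos_of_pos_of_lt_pi hθ0
    (by linarith [Real.pi_pos])
  have hmulpi : (2*(j:ℝ)+2)*θ₂ = Real.pi/2 := by
    rw [hθ₂]; field_simp; ring
  have htrig := aThat_trig θ₂ hc.ne' j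
  rw [hmulpi, Real.cos_pi_div_two] at htrig
  have hmne : (2*Real.cos θ₂)^(2*j+2) * Real.sin θ₂ ≠ 0 := by positivity
  constructor
  · have h0 : (aT (1/(4*Real.cos θ₂^2)) (2*j+2)
        - (1/(4*Real.cos θ₂^2)) * aT (1/(4*Real.cos θ₂^2)) (2*j))
        * ((2*Real.cos θ₂)^(2*j+2) * Real.sin θ₂) = 0 := by
      rw [htrig]; ring
    exact (mul_eq_zero.1 h0).resolve_right hmne
  · intro x hroot
    by_contra hcon
    push_neg at hcon
    rcases le_or_gt x (1/4) with h4 | h4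
    · exact absurd hroot (aThat_pos x h4 j).ne'
    · obtain ⟨θ, hθ0', hθlt', hsθ, hcθ, hxeq, hcomp⟩ := exists_theta x h4
      have hθθ₂ : θ < θ₂ := hcomp θ₂ hθ0 hθlt.le hcon
      have htrig2 := aThat_trig θ hcθ.ne' j
      rw [← hxeq, hroot] at htrig2
      have hposc : 0 < Real.cos ((2*(j:ℝ)+2)*θ) := by
        apply Real.cos_pos_of_mem_Ioo
        constructor
        · have : (0:ℝ) < (2*(j:ℝ)+2)*θ := by positivity
          linarith [Real.pi_pos]
        · calc (2*(j:ℝ)+2)*θ < (2*(j:ℝ)+2)*θ₂ :=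
                mul_lt_mul_of_pos_left hθθ₂ (by positivity)
            _ = Real.pi/2 := hmulpi
      have : (0:ℝ) = 2*Real.cos ((2*(j:ℝ)+2)*θ) * Real.sin θ := by
        simpa using htrig2.symm
      nlinarith

theorem stmt4 (m : ℤ) (hm : 1 ≤ m) :
    (Polynomial.aeval (1 / (4 * Real.cos (Real.pi / ((m : ℝ) + 2)) ^ 2)) (Tpoly m) = 0 ∧
      ∀ x : ℝ, Polynomial.aeval x (Tpoly m) = 0 →
        1 / (4 * Real.cos (Real.pi / ((m : ℝ) + 2)) ^ 2) ≤ x) ∧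
    (Polynomial.aeval (1 / (4 * Real.cos (Real.pi / (4 * (m : ℝ))) ^ 2)) (Thatpoly m) = 0 ∧
      ∀ x : ℝ, Polynomial.aeval x (Thatpoly m) = 0 →
        1 / (4 * Real.cos (Real.pi / (4 * (m : ℝ))) ^ 2) ≤ x) := by
  obtain ⟨j, rfl⟩ : ∃ j : ℕ, m = (j:ℤ)+1 := ⟨(m-1).toNat, by omega⟩
  have hT : Tpoly ((j:ℤ)+1) = Tnat (j+2) := by
    unfold Tpoly
    rw [show ((j:ℤ)+1+1).toNat = j+2 by omega]
  have hT1 : Tpoly (2*((j:ℤ)+1)-1) = Tnat (2*j+2) := by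
    unfold Tpoly
    rw [show (2*((j:ℤ)+1)-1+1).toNat = 2*j+2 by omega]
  have hT3 : Tpoly (2*((j:ℤ)+1)-3) = Tnat (2*j) := by
    unfold Tpoly
    rw [show (2*((j:ℤ)+1)-3+1).toNat = 2*j by omega]
  have hhat : Thatpoly ((j:ℤ)+1) = Tnat (2*j+2) - Polynomial.X * Tnat (2*j) := by
    unfold Thatpoly; rw [hT1, hT3]
  have hcast : ((((j:ℤ)+1 : ℤ)):ℝ) = (j:ℝ)+1 := by push_cast; ring
  have e1 : Real.pi / (((((j:ℤ)+1 : ℤ)):ℝ)+2) = Real.pi/((j:ℝ)+3) := by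
    rw [hcast]; ring_nf
  have e2 : Real.pi / (4*((((j:ℤ)+1 : ℤ)):ℝ)) = Real.pi/(4*(j:ℝ)+4) := by
    rw [hcast]; ring_nf
  rw [hT, hhat, e1, e2]
  have heval : ∀ x : ℝ,
      Polynomial.aeval x (Tnat (2*j+2) - Polynomial.X * Tnat (2*j))
        = aT x (2*j+2) - x * aT x (2*j) := by
    intro x; simp [aT]
  refine ⟨⟨(T_part j).1, (T_part j).2⟩, ?_, ?_⟩
  · rw [heval]; exact (That_part j).1
  · intro x hx; rw [heval] at hx; exact (That_part j).2 x hx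
end

section
/- For every integer m ≥ 1, the identity (1 + 𝒟_m(t)) · T_m(t) = T_{m−1}(t) holds in the ring of formal power series ℤ[[t]], where the polynomials T_m are regarded as power series. -/
/-- A triangular-lattice directed animal over positions `Q ⊆ ℤ` with source `S`:
sites on line `0` are exactly the source, and every higher site is supported at
the left, at the right, or at the center (two lines below). -/
def IsTriAnimal (Q : Set ℤ) (S : Finset ℤ) (A : Finset (ℤ × ℕ)) : Prop :=
  (∀ x ∈ A, x.1 ∈ Q) ∧
  (∀ q : ℤ, (q, 0) ∈ A ↔ q ∈ S) ∧
  ∀ x ∈ A, 1 ≤ x.2 →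
    (x.1 - 1, x.2 - 1) ∈ A ∨ (x.1 + 1, x.2 - 1) ∈ A ∨ (2 ≤ x.2 ∧ (x.1, x.2 - 2) ∈ A)

/-- A square-lattice directed animal over positions `Q ⊆ ℤ` with source `S`. -/
def IsSqAnimal (Q : Set ℤ) (S : Finset ℤ) (A : Finset (ℤ × ℕ)) : Prop :=
  (∀ x ∈ A, x.1 ∈ Q) ∧
  (∀ q : ℤ, (q, 0) ∈ A ↔ q ∈ S) ∧
  ∀ x ∈ A, 1 ≤ x.2 →
    (x.1 - 1, x.2 - 1) ∈ A ∨ (x.1 + 1, x.2 - 1) ∈ A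

/-- Number of triangular-lattice directed animals over `Q` with source `S` and area `n`. -/
noncomputable def triCount (Q : Set ℤ) (S : Finset ℤ) (n : ℕ) : ℕ :=
  {A : Finset (ℤ × ℕ) | IsTriAnimal Q S A ∧ A.card = n}.ncard

/-- Number of square-lattice directed animals over `Q` with source `S` and area `n`. -/
noncomputable def sqCount (Q : Set ℤ) (S : Finset ℤ) (n : ℕ) : ℕ :=
  {A : Finset (ℤ × ℕ) | IsSqAnimal Q S A ∧ A.card = n}.ncard

/-- Generating function of triangular-lattice directed animals over `Q` with source `S`. -/
noncomputable def triGF (Q : Set ℤ) (S : Finset ℤ) : PowerSeries ℤ :=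
  PowerSeries.mk fun n => (triCount Q S n : ℤ)

/-- Generating function of square-lattice directed animals over `Q` with source `S`. -/
noncomputable def sqGF (Q : Set ℤ) (S : Finset ℤ) : PowerSeries ℤ :=
  PowerSeries.mk fun n => (sqCount Q S n : ℤ)

namespace AnimProof

attribute [local instance] Classical.propDecidable

/-- vertical gap contributed by a support in the same (2) or adjacent (1) column -/
def dlt (x y : ℤ × ℕ) : ℕ := if x.1 = y.1 then 2 else 1

lemma one_le_dlt (x y : ℤ × ℕ) : 1 ≤ dlt x y := by unfold dlt; split <;> omega

lemma dlt_le_two (x y : ℤ × ℕ) : dlt x y ≤ 2 := by unfold dlt; split <;> omega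

lemma dlt_congr {x y x' y' : ℤ × ℕ} (h1 : x.1 = x'.1) (h2 : y.1 = y'.1) :
    dlt x y = dlt x' y' := by unfold dlt; rw [h1, h2]

/-- From the animal condition: every positive-level cell has a support. -/
lemma exists_sup {Q : Set ℤ} {S : Finset ℤ} {A : Finset (ℤ × ℕ)}
    (hA : IsTriAnimal Q S A) {x : ℤ × ℕ} (hx : x ∈ A) (h1 : 1 ≤ x.2) :
    ∃ y ∈ A, |x.1 - y.1| ≤ 1 ∧ y.2 < x.2 ∧ y.2 + dlt x y = x.2 := by
  rcases hA.2.2 x hx h1 with h | h | ⟨h2, h⟩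
  · refine ⟨(x.1 - 1, x.2 - 1), h, ?_, by simp; omega, ?_⟩
    · rw [show x.1 - (x.1 - 1) = 1 by ring]; norm_num
    · simp only [dlt, show ¬ (x.1 = x.1 - 1) by omega, if_neg, ite_false]; omega
  · refine ⟨(x.1 + 1, x.2 - 1), h, ?_, by simp; omega, ?_⟩
    · rw [show x.1 - (x.1 + 1) = -1 by ring]; norm_num
    · simp only [dlt, show ¬ (x.1 = x.1 + 1) by omega, if_neg, ite_false]; omega
  · refine ⟨(x.1, x.2 - 2), h, by simp, by simp; omega, ?_⟩
    simp only [dlt, ite_true, if_pos rfl]; omega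

/-- Converse: a cell with a "tight" neighbour below satisfies the support clause. -/
lemma sup_clause {A : Finset (ℤ × ℕ)} {x y : ℤ × ℕ} (hy : y ∈ A)
    (hc : |x.1 - y.1| ≤ 1) (he : y.2 + dlt x y = x.2) :
    (x.1 - 1, x.2 - 1) ∈ A ∨ (x.1 + 1, x.2 - 1) ∈ A ∨ (2 ≤ x.2 ∧ (x.1, x.2 - 2) ∈ A) := by
  have hc' := abs_le.mp hc
  by_cases h : x.1 = y.1
  · simp only [dlt, h, if_pos rfl, ite_true] at he
    right; right
    refine ⟨by omega, ?_⟩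
    have hy' : y = (x.1, x.2 - 2) := Prod.ext h.symm (by omega)
    rwa [← hy']
  · simp only [dlt, h, if_neg, ite_false] at he
    have h1 : y.1 = x.1 - 1 ∨ y.1 = x.1 + 1 := by omega
    rcases h1 with h1 | h1
    · left
      have hy' : y = (x.1 - 1, x.2 - 1) := Prod.ext h1 (by omega)
      rwa [← hy']
    · right; left
      have hy' : y = (x.1 + 1, x.2 - 1) := Prod.ext h1 (by omega)
      rwa [← hy']

/-- Parity: in an animal with one-point source `{s}`, every cell satisfies
`x.1 + x.2 ≡ s (mod 2)`. -/
lemma parity {Q : Set ℤ} {s : ℤ} {A : Finset (ℤ × ℕ)}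
    (hA : IsTriAnimal Q {s} A) :
    ∀ x ∈ A, (x.1 + (x.2 : ℤ) - s) % 2 = 0 := by
  suffices H : ∀ n : ℕ, ∀ x ∈ A, x.2 = n → (x.1 + (x.2 : ℤ) - s) % 2 = 0 by
    intro x hx; exact H x.2 x hx rfl
  intro n
  induction n using Nat.strong_induction_on with
  | _ n ih =>
    intro x hx hxn
    rcases Nat.eq_zero_or_pos n with h0 | hpos
    · subst h0
      have hx1 : x.1 ∈ ({s} : Finset ℤ) :=
        (hA.2.1 x.1).mp (by rwa [show (x.1, 0) = x from Prod.ext rfl hxn.symm])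
      simp only [Finset.mem_singleton] at hx1
      omega
    · obtain ⟨y, hyA, hc, hlt, he⟩ := exists_sup hA hx (by omega)
      have hy := ih y.2 (by omega) y hyA rfl
      have hc' := abs_le.mp hc
      by_cases h : x.1 = y.1
      · simp only [dlt, h, if_pos rfl, ite_true] at he
        omega
      · simp only [dlt, h, if_neg, ite_false] at he
        omega

/-- Tightness: the level of a positive cell is exactly the sup of `y.2 + dlt x y`
over all conflicting cells strictly below it. -/
lemma tight {Q : Set ℤ} {s : ℤ} {A : Finset (ℤ × ℕ)}
    (hA : IsTriAnimal Q {s} A) {x : ℤ × ℕ} (hx : x ∈ A) (h1 : 1 ≤ x.2) :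
    (A.filter (fun y => |x.1 - y.1| ≤ 1 ∧ y.2 < x.2)).sup (fun y => y.2 + dlt x y) = x.2 := by
  apply le_antisymm
  · apply Finset.sup_le
    intro y hy
    rw [Finset.mem_filter] at hy
    obtain ⟨hyA, hc, hlt⟩ := hy
    have px := parity hA x hx
    have py := parity hA y hyA
    have hc' := abs_le.mp hc
    by_cases h : x.1 = y.1
    · simp only [dlt, h, if_pos rfl, ite_true]
      omega
    · simp only [dlt, h, if_neg, ite_false]
      omega
  · obtain ⟨y, hyA, hc, hlt, he⟩ := exists_sup hA hx h1
    calc x.2 = y.2 + dlt x y := he.symm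
    _ ≤ _ := Finset.le_sup (f := fun y => y.2 + dlt x y)
        (Finset.mem_filter.mpr ⟨hyA, hc, hlt⟩)

end AnimProof
namespace AnimProof

/-- Re-leveling: drop the cells of `U` (keeping their columns) on top of the fixed
configuration `D`. `rl D U x` is the new level of the cell `x` of `U`. -/
def rl (D U : Finset (ℤ × ℕ)) (x : ℤ × ℕ) : ℕ :=
  max ((D.filter (fun y => |x.1 - y.1| ≤ 1)).sup (fun y => y.2 + dlt x y))
    (((U.filter (fun u => |x.1 - u.1| ≤ 1 ∧ u.2 < x.2)).attach).sup
      (fun u => rl D U u.1 + dlt x u.1))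
termination_by x.2
decreasing_by
  exact (Finset.mem_filter.mp u.2).2.2

lemma rl_eq (D U : Finset (ℤ × ℕ)) (x : ℤ × ℕ) :
    rl D U x = max ((D.filter (fun y => |x.1 - y.1| ≤ 1)).sup (fun y => y.2 + dlt x y))
      ((U.filter (fun u => |x.1 - u.1| ≤ 1 ∧ u.2 < x.2)).sup
        (fun u => rl D U u + dlt x u)) := by
  rw [rl]
  congr 1
  exact Finset.sup_attach (U.filter fun u => |x.1 - u.1| ≤ 1 ∧ u.2 < x.2) (fun u => rl D U u + dlt x u)

lemma rl_ge_left {D U : Finset (ℤ × ℕ)} {x y : ℤ × ℕ} (hy : y ∈ D)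
    (hc : |x.1 - y.1| ≤ 1) : y.2 + dlt x y ≤ rl D U x := by
  rw [rl_eq]
  have hmem : y ∈ D.filter (fun y => |x.1 - y.1| ≤ 1) := Finset.mem_filter.mpr ⟨hy, hc⟩
  exact le_max_of_le_left (Finset.le_sup (f := fun y => y.2 + dlt x y) hmem)

lemma rl_ge_right {D U : Finset (ℤ × ℕ)} {x u : ℤ × ℕ} (hu : u ∈ U)
    (hc : |x.1 - u.1| ≤ 1) (hlt : u.2 < x.2) : rl D U u + dlt x u ≤ rl D U x := by
  conv_rhs => rw [rl_eq]
  have hmem : u ∈ U.filter (fun u => |x.1 - u.1| ≤ 1 ∧ u.2 < x.2) :=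
    Finset.mem_filter.mpr ⟨hu, hc, hlt⟩
  exact le_max_of_le_right (Finset.le_sup (f := fun u => rl D U u + dlt x u) hmem)

lemma rl_cases (D U : Finset (ℤ × ℕ)) (x : ℤ × ℕ) :
    rl D U x = 0 ∨
    (∃ y ∈ D, |x.1 - y.1| ≤ 1 ∧ rl D U x = y.2 + dlt x y) ∨
    (∃ u ∈ U, |x.1 - u.1| ≤ 1 ∧ u.2 < x.2 ∧ rl D U x = rl D U u + dlt x u) := by
  rcases Nat.eq_zero_or_pos (rl D U x) with h0 | hpos
  · exact Or.inl h0
  by_cases hm : ((U.filter (fun u => |x.1 - u.1| ≤ 1 ∧ u.2 < x.2)).sup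
      (fun u => rl D U u + dlt x u)) ≤
      ((D.filter (fun y => |x.1 - y.1| ≤ 1)).sup (fun y => y.2 + dlt x y))
  · have heq : rl D U x =
        (D.filter (fun y => |x.1 - y.1| ≤ 1)).sup (fun y => y.2 + dlt x y) := by
      rw [rl_eq]; exact max_eq_left hm
    have hne : (D.filter (fun y => |x.1 - y.1| ≤ 1)).Nonempty := by
      rw [Finset.nonempty_iff_ne_empty]
      intro hemp
      rw [heq, hemp, Finset.sup_empty] at hpos
      simp at hpos
    obtain ⟨y, hy, he⟩ := Finset.exists_mem_eq_sup _ hne (fun y => y.2 + dlt x y)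
    rw [Finset.mem_filter] at hy
    exact Or.inr (Or.inl ⟨y, hy.1, hy.2, by rw [heq, he]⟩)
  · push_neg at hm
    have heq : rl D U x = (U.filter (fun u => |x.1 - u.1| ≤ 1 ∧ u.2 < x.2)).sup
        (fun u => rl D U u + dlt x u) := by
      rw [rl_eq]; exact max_eq_right hm.le
    have hne : (U.filter (fun u => |x.1 - u.1| ≤ 1 ∧ u.2 < x.2)).Nonempty := by
      rw [Finset.nonempty_iff_ne_empty]
      intro hemp
      rw [heq, hemp, Finset.sup_empty] at hpos
      simp at hpos
    obtain ⟨u, hu, he⟩ := Finset.exists_mem_eq_sup _ hne (fun u => rl D U u + dlt x u)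
    rw [Finset.mem_filter] at hu
    exact Or.inr (Or.inr ⟨u, hu.1, hu.2.1, hu.2.2, by rw [heq, he]⟩)

lemma rl_le {D U : Finset (ℤ × ℕ)} {x : ℤ × ℕ} {t : ℕ}
    (hD : ∀ y ∈ D, |x.1 - y.1| ≤ 1 → y.2 + dlt x y ≤ t)
    (hU : ∀ u ∈ U, |x.1 - u.1| ≤ 1 → u.2 < x.2 → rl D U u + dlt x u ≤ t) :
    rl D U x ≤ t := by
  rw [rl_eq]
  apply max_le
  · apply Finset.sup_le
    intro y hy; rw [Finset.mem_filter] at hy; exact hD y hy.1 hy.2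
  · apply Finset.sup_le
    intro u hu; rw [Finset.mem_filter] at hu; exact hU u hu.1 hu.2.1 hu.2.2

end AnimProof
namespace AnimProof

attribute [local instance] Classical.propDecidable

/-- positive-level cells in column `0` -/
def pos0 (A : Finset (ℤ × ℕ)) : Finset (ℤ × ℕ) := A.filter (fun x => x.1 = 0 ∧ 1 ≤ x.2)

/-- the lowest positive cell in column `0` -/
noncomputable def rt (A : Finset (ℤ × ℕ)) (h : (pos0 A).Nonempty) : ℤ × ℕ :=
  (0, ((pos0 A).image Prod.snd).min' (h.image _))

/-- one upward step inside `A` -/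
def stepRel (A : Finset (ℤ × ℕ)) (y x : ℤ × ℕ) : Prop :=
  x ∈ A ∧ |x.1 - y.1| ≤ 1 ∧ y.2 < x.2

/-- the upward closure of the root inside `A` (empty if there is no root) -/
noncomputable def Uset (A : Finset (ℤ × ℕ)) : Finset (ℤ × ℕ) :=
  if h : (pos0 A).Nonempty then
    A.filter (fun x => Relation.ReflTransGen (stepRel A) (rt A h) x) else ∅

lemma rt_mem {A : Finset (ℤ × ℕ)} (h : (pos0 A).Nonempty) : rt A h ∈ pos0 A := by
  have hm := ((pos0 A).image Prod.snd).min'_mem (h.image _)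
  rw [Finset.mem_image] at hm
  obtain ⟨x, hx, he⟩ := hm
  have hx' := Finset.mem_filter.mp hx
  have : x = rt A h := Prod.ext hx'.2.1 he
  rwa [← this]

lemma rt_le {A : Finset (ℤ × ℕ)} (h : (pos0 A).Nonempty) {x : ℤ × ℕ} (hx : x ∈ pos0 A) :
    (rt A h).2 ≤ x.2 :=
  Finset.min'_le _ _ (Finset.mem_image_of_mem Prod.snd hx)

lemma rt_pos {A : Finset (ℤ × ℕ)} (h : (pos0 A).Nonempty) : 1 ≤ (rt A h).2 :=
  (Finset.mem_filter.mp (rt_mem h)).2.2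

lemma rt_mem_A {A : Finset (ℤ × ℕ)} (h : (pos0 A).Nonempty) : rt A h ∈ A :=
  (Finset.mem_filter.mp (rt_mem h)).1

lemma Uset_subset {A : Finset (ℤ × ℕ)} : Uset A ⊆ A := by
  unfold Uset
  split
  · exact Finset.filter_subset _ _
  · intro x hx; simp at hx

lemma Uset_rt_mem {A : Finset (ℤ × ℕ)} (h : (pos0 A).Nonempty) : rt A h ∈ Uset A := by
  rw [Uset, dif_pos h]
  exact Finset.mem_filter.mpr ⟨rt_mem_A h, Relation.ReflTransGen.refl⟩

lemma Uset_ge_rt {A : Finset (ℤ × ℕ)} (h : (pos0 A).Nonempty) {u : ℤ × ℕ}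
    (hu : u ∈ Uset A) : (rt A h).2 ≤ u.2 := by
  rw [Uset, dif_pos h] at hu
  have hr := (Finset.mem_filter.mp hu).2
  clear hu
  induction hr with
  | refl => exact le_refl _
  | tail _ hstep ih => exact le_trans ih (le_of_lt hstep.2.2)

lemma Uset_pos {A : Finset (ℤ × ℕ)} {u : ℤ × ℕ} (hu : u ∈ Uset A) : 1 ≤ u.2 := by
  by_cases h : (pos0 A).Nonempty
  · exact le_trans (rt_pos h) (Uset_ge_rt h hu)
  · rw [Uset, dif_neg h] at hu; simp at hu

lemma Uset_closed {A : Finset (ℤ × ℕ)} {x u : ℤ × ℕ} (hx : x ∈ A) (hu : u ∈ Uset A)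
    (hc : |x.1 - u.1| ≤ 1) (hlt : u.2 < x.2) : x ∈ Uset A := by
  by_cases h : (pos0 A).Nonempty
  · rw [Uset, dif_pos h] at hu ⊢
    exact Finset.mem_filter.mpr ⟨hx, ((Finset.mem_filter.mp hu).2).tail ⟨hx, hc, hlt⟩⟩
  · rw [Uset, dif_neg h] at hu; simp at hu

lemma Uset_pred {A : Finset (ℤ × ℕ)} {u : ℤ × ℕ} (hu : u ∈ Uset A)
    (h : (pos0 A).Nonempty) (hne : u ≠ rt A h) :
    ∃ w ∈ Uset A, |u.1 - w.1| ≤ 1 ∧ w.2 < u.2 := by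
  rw [Uset, dif_pos h] at hu
  rcases Relation.ReflTransGen.cases_tail (Finset.mem_filter.mp hu).2 with he | ⟨c, hc1, hc2⟩
  · exact absurd he hne
  · have hcA : c ∈ A := by
      rcases Relation.ReflTransGen.cases_tail hc1 with he' | ⟨d, _, hd2⟩
      · rw [he']; exact rt_mem_A h
      · exact hd2.1
    refine ⟨c, ?_, hc2.2.1, hc2.2.2⟩
    rw [Uset, dif_pos h]
    exact Finset.mem_filter.mpr ⟨hcA, hc1⟩

lemma Uset_col0 {Q : Set ℤ} {A : Finset (ℤ × ℕ)} (hA : IsTriAnimal Q {0} A)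
    {x : ℤ × ℕ} (hx : x ∈ A) (hx0 : x.1 = 0) (hx2 : 1 ≤ x.2) : x ∈ Uset A := by
  have hxp : x ∈ pos0 A := Finset.mem_filter.mpr ⟨hx, hx0, hx2⟩
  have h : (pos0 A).Nonempty := ⟨x, hxp⟩
  rcases eq_or_lt_of_le (rt_le h hxp) with he | hlt
  · have : x = rt A h := Prod.ext (by rw [hx0]; rfl) he.symm
    rw [this]; exact Uset_rt_mem h
  · exact Uset_closed hx (Uset_rt_mem h) (by rw [hx0]; simp [rt]) hlt

lemma Uset_not00 {A : Finset (ℤ × ℕ)} : (0, 0) ∉ Uset A := fun h => by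
  have := Uset_pos h; simp at this

lemma src_mem {Q : Set ℤ} {s : ℤ} {A : Finset (ℤ × ℕ)} (hA : IsTriAnimal Q {s} A) :
    (s, (0 : ℕ)) ∈ A := (hA.2.1 s).mpr (by simp)

lemma lvl0_eq' {Q : Set ℤ} {s : ℤ} {A : Finset (ℤ × ℕ)} (hA : IsTriAnimal Q {s} A)
    {x : ℤ × ℕ} (hx : x ∈ A) (h0 : x.2 = 0) : x = (s, 0) := by
  have : x.1 ∈ ({s} : Finset ℤ) :=
    (hA.2.1 x.1).mp (by rwa [show (x.1, 0) = x from Prod.ext rfl h0.symm])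
  simp only [Finset.mem_singleton] at this
  exact Prod.ext this h0

lemma zero_mem {Q : Set ℤ} {A : Finset (ℤ × ℕ)} (hA : IsTriAnimal Q {0} A) :
    ((0 : ℤ), (0 : ℕ)) ∈ A := src_mem hA

lemma lvl0_eq {Q : Set ℤ} {A : Finset (ℤ × ℕ)} (hA : IsTriAnimal Q {0} A)
    {x : ℤ × ℕ} (hx : x ∈ A) (h0 : x.2 = 0) : x = (0, 0) := lvl0_eq' hA hx h0

end AnimProof
namespace AnimProof

attribute [local instance] Classical.propDecidable

noncomputable def Bp (A : Finset (ℤ × ℕ)) : Finset (ℤ × ℕ) :=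
  (Uset A).image (fun u => (u.1, rl ∅ (Uset A) u))

noncomputable def Cp (A : Finset (ℤ × ℕ)) : Finset (ℤ × ℕ) := (A.erase (0, 0)) \ Uset A

def sdn (x : ℤ × ℕ) : ℤ × ℕ := (x.1, x.2 - 1)

def sup1 (x : ℤ × ℕ) : ℤ × ℕ := (x.1, x.2 + 1)

noncomputable def Cpp (A : Finset (ℤ × ℕ)) : Finset (ℤ × ℕ) := (Cp A).image sdn

noncomputable def psi (A : Finset (ℤ × ℕ)) : Finset (ℤ × ℕ) × Finset (ℤ × ℕ) :=
  (Bp A, Cpp A)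

def Dbase (C' : Finset (ℤ × ℕ)) : Finset (ℤ × ℕ) :=
  insert ((0 : ℤ), (0 : ℕ)) (C'.image sup1)

noncomputable def phi (B C' : Finset (ℤ × ℕ)) : Finset (ℤ × ℕ) :=
  Dbase C' ∪ B.image (fun b => (b.1, rl (Dbase C') B b))

lemma pos0_ne {A : Finset (ℤ × ℕ)} {u : ℤ × ℕ} (hu : u ∈ Uset A) :
    (pos0 A).Nonempty := by
  by_contra h
  rw [Uset, dif_neg h] at hu
  simp at hu

lemma Uset_empty_iff {A : Finset (ℤ × ℕ)} : Uset A = ∅ ↔ ¬ (pos0 A).Nonempty := by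
  constructor
  · intro he h
    have := Uset_rt_mem (A := A) h
    rw [he] at this; simp at this
  · intro h; rw [Uset, dif_neg h]

lemma mu_rt {A : Finset (ℤ × ℕ)} (h : (pos0 A).Nonempty) :
    rl ∅ (Uset A) (rt A h) = 0 := by
  rcases rl_cases ∅ (Uset A) (rt A h) with h0 | ⟨y, hy, _⟩ | ⟨u, hu, _, hlt, _⟩
  · exact h0
  · simp at hy
  · exact absurd hlt (not_lt.mpr (Uset_ge_rt h hu))

lemma mu_pos {A : Finset (ℤ × ℕ)} {u : ℤ × ℕ} (hu : u ∈ Uset A)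
    (hne : u ≠ rt A (pos0_ne hu)) : 1 ≤ rl ∅ (Uset A) u := by
  obtain ⟨w, hw, hc, hlt⟩ := Uset_pred hu (pos0_ne hu) hne
  calc 1 ≤ rl ∅ (Uset A) w + dlt u w := by have := one_le_dlt u w; omega
  _ ≤ _ := rl_ge_right hw hc hlt

lemma mu_strict {A : Finset (ℤ × ℕ)} {u u' : ℤ × ℕ} (hu' : u' ∈ Uset A)
    (hc : |u.1 - u'.1| ≤ 1) (hlt : u'.2 < u.2) :
    rl ∅ (Uset A) u' < rl ∅ (Uset A) u := by
  have := rl_ge_right (D := ∅) hu' hc hlt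
  have := one_le_dlt u u'
  omega

lemma mu_inj {A : Finset (ℤ × ℕ)} {u u' : ℤ × ℕ} (hu : u ∈ Uset A) (hu' : u' ∈ Uset A)
    (h1 : u.1 = u'.1) (h2 : rl ∅ (Uset A) u = rl ∅ (Uset A) u') : u = u' := by
  rcases lt_trichotomy u.2 u'.2 with h | h | h
  · have := mu_strict hu (by rw [h1]; simp) h
    omega
  · exact Prod.ext h1 h
  · have := mu_strict hu' (by rw [h1]; simp) h
    omega

lemma mu_lt_iff {Q : Set ℤ} {A : Finset (ℤ × ℕ)} (hA : IsTriAnimal Q {0} A)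
    {u u' : ℤ × ℕ} (hu : u ∈ Uset A) (hu' : u' ∈ Uset A) (hc : |u.1 - u'.1| ≤ 1) :
    u'.2 < u.2 ↔ rl ∅ (Uset A) u' < rl ∅ (Uset A) u := by
  constructor
  · exact fun h => mu_strict hu' hc h
  · intro h
    rcases lt_trichotomy u.2 u'.2 with h2 | h2 | h2
    · have := mu_strict hu (by rw [abs_sub_comm]; exact hc) h2
      omega
    · by_cases hq : u.1 = u'.1
      · have : u = u' := Prod.ext hq h2
        rw [this] at h; omega
      · have p1 := parity hA u (Uset_subset hu)
        have p2 := parity hA u' (Uset_subset hu')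
        have hc' := abs_le.mp hc
        omega
    · exact h2

lemma Bp_anim {m : ℤ} {A : Finset (ℤ × ℕ)} (hA : IsTriAnimal (Set.Ico 0 m) {0} A)
    (h : (pos0 A).Nonempty) : IsTriAnimal (Set.Ico 0 m) {0} (Bp A) := by
  refine ⟨?_, ?_, ?_⟩
  · intro x hx
    rw [Bp, Finset.mem_image] at hx
    obtain ⟨u, hu, he⟩ := hx
    rw [← he]
    exact hA.1 u (Uset_subset hu)
  · intro q
    constructor
    · intro hq
      rw [Bp, Finset.mem_image] at hq
      obtain ⟨u, hu, he⟩ := hq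
      simp only [Prod.mk.injEq] at he
      obtain ⟨h1, h2⟩ := he
      by_cases hne : u = rt A (pos0_ne hu)
      · have : u.1 = 0 := by rw [hne]; rfl
        simp [← h1, this]
      · have := mu_pos hu hne
        omega
    · intro hq
      simp only [Finset.mem_singleton] at hq
      subst hq
      rw [Bp, Finset.mem_image]
      exact ⟨rt A h, Uset_rt_mem h, by rw [mu_rt h]; rfl⟩
  · intro x hx h1
    rw [Bp, Finset.mem_image] at hx
    obtain ⟨u, hu, he⟩ := hx
    subst he
    simp only at h1 ⊢
    rcases rl_cases ∅ (Uset A) u with h0 | ⟨y, hy, _⟩ | ⟨w, hw, hc, hlt, he⟩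
    · omega
    · simp at hy
    · have hmem : (w.1, rl ∅ (Uset A) w) ∈ Bp A := by
        rw [Bp, Finset.mem_image]; exact ⟨w, hw, rfl⟩
      refine sup_clause (x := (u.1, rl ∅ (Uset A) u)) (y := (w.1, rl ∅ (Uset A) w))
        hmem (by simpa using hc) ?_
      have hdc : dlt ((u.1, rl ∅ (Uset A) u)) ((w.1, rl ∅ (Uset A) w)) = dlt u w := rfl
      simp only [hdc]
      omega

lemma Bp_card {A : Finset (ℤ × ℕ)} : (Bp A).card = (Uset A).card := by
  rw [Bp]
  apply Finset.card_image_of_injOn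
  intro u hu u' hu' he
  simp only [Prod.mk.injEq] at he
  exact mu_inj hu hu' he.1 he.2

lemma Bp_empty_iff {A : Finset (ℤ × ℕ)} : Bp A = ∅ ↔ Uset A = ∅ := by
  rw [Bp, Finset.image_eq_empty]

end AnimProof
namespace AnimProof

attribute [local instance] Classical.propDecidable

variable {m : ℤ} {A : Finset (ℤ × ℕ)}

lemma Cp_subset : Cp A ⊆ A := fun x hx =>
  Finset.mem_of_mem_erase (Finset.mem_sdiff.mp hx).1

lemma Cp_not_U {x : ℤ × ℕ} (hx : x ∈ Cp A) : x ∉ Uset A := (Finset.mem_sdiff.mp hx).2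

lemma Cp_ne00 {x : ℤ × ℕ} (hx : x ∈ Cp A) : x ≠ (0, 0) :=
  Finset.ne_of_mem_erase (Finset.mem_sdiff.mp hx).1

lemma Cp_nocol0 (hA : IsTriAnimal (Set.Ico 0 m) {0} A) {x : ℤ × ℕ} (hx : x ∈ Cp A) :
    x.1 ≠ 0 := by
  intro h0
  rcases Nat.eq_zero_or_pos x.2 with h2 | h2
  · exact Cp_ne00 hx (lvl0_eq hA (Cp_subset hx) h2)
  · exact Cp_not_U hx (Uset_col0 hA (Cp_subset hx) h0 h2)

lemma Cp_pos (hA : IsTriAnimal (Set.Ico 0 m) {0} A) {x : ℤ × ℕ} (hx : x ∈ Cp A) :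
    1 ≤ x.2 := by
  rcases Nat.eq_zero_or_pos x.2 with h2 | h2
  · exact absurd (lvl0_eq hA (Cp_subset hx) h2) (Cp_ne00 hx)
  · exact h2

/-- supports of cells of `Cp` stay in `Cp` (or are `(0,0)` forcing the cell `(1,1)`). -/
lemma Cp_sup (hA : IsTriAnimal (Set.Ico 0 m) {0} A) {x : ℤ × ℕ} (hx : x ∈ Cp A)
    (h2 : 2 ≤ x.2) :
    ∃ y ∈ Cp A, |x.1 - y.1| ≤ 1 ∧ y.2 < x.2 ∧ y.2 + dlt x y = x.2 := by
  obtain ⟨y, hyA, hc, hlt, he⟩ := exists_sup hA (Cp_subset hx) (by omega)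
  refine ⟨y, ?_, hc, hlt, he⟩
  have hyU : y ∉ Uset A := fun hyU => Cp_not_U hx (Uset_closed (Cp_subset hx) hyU hc hlt)
  have hy00 : y ≠ (0, 0) := by
    intro h00
    have hd := dlt_le_two x y
    have hd1 := one_le_dlt x y
    rcases Nat.lt_or_ge y.2 1 with _ | hge
    · -- y = (0,0) : then x.2 = dlt ≤ 2, so x.2 = 2 and dlt = 2, so x.1 = 0
      have hy2 : y.2 = 0 := by rw [h00]
      have : dlt x y = 2 := by omega
      have hx1 : x.1 = y.1 := by
        by_contra hne
        simp only [dlt, if_neg hne, ite_false] at this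
        omega
      rw [h00] at hx1
      exact Cp_nocol0 hA hx hx1
    · rw [h00] at hge; simp at hge
  exact Finset.mem_sdiff.mpr ⟨Finset.mem_erase.mpr ⟨hy00, hyA⟩, hyU⟩

lemma Cp_lvl1 (hA : IsTriAnimal (Set.Ico 0 m) {0} A) {x : ℤ × ℕ} (hx : x ∈ Cp A)
    (h1 : x.2 = 1) : x = (1, 1) := by
  obtain ⟨y, hyA, hc, hlt, he⟩ := exists_sup hA (Cp_subset hx) (by omega)
  have hy0 : y.2 = 0 := by omega
  have hy00 : y = (0, 0) := lvl0_eq hA hyA hy0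
  have hd1 := one_le_dlt x y
  have hd : dlt x y = 1 := by omega
  have hne : x.1 ≠ y.1 := by
    intro hq
    simp only [dlt, if_pos hq, ite_true] at hd
    omega
  have hy1 : y.1 = 0 := by rw [hy00]
  have hQ := hA.1 x (Cp_subset hx)
  simp only [Set.mem_Ico] at hQ
  have hc' := abs_le.mp hc
  have hx1 : x.1 = 1 := by omega
  exact Prod.ext hx1 h1

lemma Cp_min (hA : IsTriAnimal (Set.Ico 0 m) {0} A) (hne : (Cp A).Nonempty) :
    (1, 1) ∈ Cp A := by
  obtain ⟨x, hx, hmin⟩ := Finset.exists_min_image (Cp A) (fun z => z.2) hne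
  rcases Nat.lt_or_ge x.2 2 with h2 | h2
  · have h1 : x.2 = 1 := by have := Cp_pos hA hx; omega
    rw [← Cp_lvl1 hA hx h1]; exact hx
  · obtain ⟨y, hy, _, hlt, _⟩ := Cp_sup hA hx h2
    have := hmin y hy
    omega

/-- the shifted-down `Cp` is an animal over `[1,m)` with source `{1}` (when nonempty) -/
lemma Cpp_anim (hA : IsTriAnimal (Set.Ico 0 m) {0} A) (hne : (Cp A).Nonempty) :
    IsTriAnimal (Set.Ico 1 m) {1} (Cpp A) := by
  refine ⟨?_, ?_, ?_⟩
  · intro x hx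
    rw [Cpp, Finset.mem_image] at hx
    obtain ⟨c, hc, he⟩ := hx
    have hQ := hA.1 c (Cp_subset hc)
    simp only [Set.mem_Ico] at hQ ⊢
    have h0 : c.1 ≠ 0 := Cp_nocol0 hA hc
    have hx1 : x.1 = c.1 := by rw [← he]; rfl
    omega
  · intro q
    constructor
    · intro hq
      rw [Cpp, Finset.mem_image] at hq
      obtain ⟨c, hc, he⟩ := hq
      simp only [sdn, Prod.mk.injEq] at he
      have h1 : c.2 = 1 := by have := Cp_pos hA hc; omega
      have := Cp_lvl1 hA hc h1
      simp only [Finset.mem_singleton]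
      rw [this] at he
      exact he.1.symm
    · intro hq
      simp only [Finset.mem_singleton] at hq
      subst hq
      rw [Cpp, Finset.mem_image]
      exact ⟨(1, 1), Cp_min hA hne, rfl⟩
  · intro x hx h1
    rw [Cpp, Finset.mem_image] at hx
    obtain ⟨c, hc, he⟩ := hx
    have hx1 : x.1 = c.1 := by rw [← he]; rfl
    have hx2 : x.2 = c.2 - 1 := by rw [← he]; rfl
    have hcpos := Cp_pos hA hc
    have hc2 : 2 ≤ c.2 := by omega
    obtain ⟨y, hy, hcf, hlt, heq⟩ := Cp_sup hA hc hc2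
    have hymem : sdn y ∈ Cpp A := Finset.mem_image_of_mem sdn hy
    have hypos := Cp_pos hA hy
    refine sup_clause (x := x) (y := sdn y) hymem ?_ ?_
    · simpa [sdn, hx1] using hcf
    · have hdc : dlt x (sdn y) = dlt c y := by
        apply dlt_congr hx1 rfl
      rw [hdc]
      simp only [sdn]
      -- y.2 - 1 + dlt c y = c.2 - 1 given y.2 + dlt c y = c.2, 1 ≤ y.2
      omega

lemma Cpp_card (hA : IsTriAnimal (Set.Ico 0 m) {0} A) : (Cpp A).card = (Cp A).card := by
  rw [Cpp]
  apply Finset.card_image_of_injOn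
  intro x hx y hy he
  simp only [sdn, Prod.mk.injEq] at he
  have h1 := Cp_pos hA hx
  have h2 := Cp_pos hA hy
  exact Prod.ext he.1 (by omega)

lemma Cpp_up (hA : IsTriAnimal (Set.Ico 0 m) {0} A) : (Cpp A).image sup1 = Cp A := by
  rw [Cpp, Finset.image_image]
  rw [show (Cp A).image (sup1 ∘ sdn) = (Cp A).image id from
    Finset.image_congr (fun x hx => by
      have := Cp_pos hA hx
      simp only [Function.comp, sup1, sdn, id]
      exact Prod.ext rfl (by omega))]
  exact Finset.image_id

lemma partition (hA : IsTriAnimal (Set.Ico 0 m) {0} A) :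
    A = insert (0, 0) (Cp A) ∪ Uset A := by
  ext x
  constructor
  · intro hx
    by_cases h0 : x = (0, 0)
    · rw [h0]; exact Finset.mem_union_left _ (Finset.mem_insert_self _ _)
    · by_cases hU : x ∈ Uset A
      · exact Finset.mem_union_right _ hU
      · exact Finset.mem_union_left _ (Finset.mem_insert_of_mem
          (Finset.mem_sdiff.mpr ⟨Finset.mem_erase.mpr ⟨h0, hx⟩, hU⟩))
  · intro hx
    rcases Finset.mem_union.mp hx with hx | hx
    · rcases Finset.mem_insert.mp hx with h0 | hx
      · rw [h0]; exact zero_mem hA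
      · exact Cp_subset hx
    · exact Uset_subset hx

lemma disj_CU : Disjoint (insert ((0:ℤ),(0:ℕ)) (Cp A)) (Uset A) := by
  rw [Finset.disjoint_left]
  intro x hx hU
  rcases Finset.mem_insert.mp hx with h0 | hC
  · rw [h0] at hU; exact Uset_not00 hU
  · exact Cp_not_U hC hU

lemma card_split (hA : IsTriAnimal (Set.Ico 0 m) {0} A) :
    A.card = 1 + (Cp A).card + (Uset A).card := by
  conv_lhs => rw [partition hA]
  rw [Finset.card_union_of_disjoint disj_CU,
    Finset.card_insert_of_notMem (fun h => Cp_ne00 h rfl)]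
  omega

end AnimProof
namespace AnimProof

attribute [local instance] Classical.propDecidable

variable {m : ℤ} {A : Finset (ℤ × ℕ)}

/-- any conflicting cell strictly below contributes at most the level -/
lemma le_of_below (hA : IsTriAnimal (Set.Ico 0 m) {0} A) {u y : ℤ × ℕ}
    (hu : u ∈ A) (h1 : 1 ≤ u.2) (hy : y ∈ A) (hc : |u.1 - y.1| ≤ 1) (hlt : y.2 < u.2) :
    y.2 + dlt u y ≤ u.2 := by
  have hmem : y ∈ A.filter (fun z => |u.1 - z.1| ≤ 1 ∧ z.2 < u.2) :=
    Finset.mem_filter.mpr ⟨hy, hc, hlt⟩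
  have h2 := Finset.le_sup (f := fun z => z.2 + dlt u z) hmem
  rw [tight hA hu h1] at h2
  exact h2

/-- cells of `D = insert (0,0) (Cp A)` conflicting a cell of `Uset A` lie strictly below it -/
lemma D_below (hA : IsTriAnimal (Set.Ico 0 m) {0} A) {u y : ℤ × ℕ}
    (hu : u ∈ Uset A) (hy : y ∈ insert ((0:ℤ),(0:ℕ)) (Cp A)) (hc : |u.1 - y.1| ≤ 1) :
    y.2 < u.2 := by
  rcases Finset.mem_insert.mp hy with h0 | hC
  · rw [h0]; exact Uset_pos hu
  · by_contra hge
    push_neg at hge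
    rcases eq_or_lt_of_le hge with he | hlt
    · -- same level
      by_cases hq : u.1 = y.1
      · exact Cp_not_U hC (by rw [show y = u from Prod.ext hq.symm he.symm]; exact hu)
      · have p1 := parity hA u (Uset_subset hu)
        have p2 := parity hA y (Cp_subset hC)
        have hc' := abs_le.mp hc
        omega
    · exact Cp_not_U hC (Uset_closed (Cp_subset hC) hu (by rw [abs_sub_comm]; exact hc) hlt)

/-- Key lemma: re-dropping the normalized `Bp A` onto `insert (0,0) (Cp A)`
restores the original levels. -/
lemma nu_mu (hA : IsTriAnimal (Set.Ico 0 m) {0} A) :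
    ∀ u ∈ Uset A, rl (insert ((0:ℤ),(0:ℕ)) (Cp A)) (Bp A) (u.1, rl ∅ (Uset A) u) = u.2 := by
  suffices H : ∀ n : ℕ, ∀ u ∈ Uset A, u.2 = n →
      rl (insert ((0:ℤ),(0:ℕ)) (Cp A)) (Bp A) (u.1, rl ∅ (Uset A) u) = u.2 by
    intro u hu; exact H u.2 u hu rfl
  intro n
  induction n using Nat.strong_induction_on with
  | _ n ih =>
    intro u hu hun
    subst hun
    apply le_antisymm
    · apply rl_le
      · intro y hy hc
        have hlt := D_below hA hu hy (by simpa using hc)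
        have hd : dlt ((u.1, rl ∅ (Uset A) u)) y = dlt u y := rfl
        rw [hd]
        refine le_of_below hA (Uset_subset hu) (Uset_pos hu) ?_ (by simpa using hc) hlt
        rcases Finset.mem_insert.mp hy with h0 | hC
        · rw [h0]; exact zero_mem hA
        · exact Cp_subset hC
      · intro b hb hc hblt
        rw [Bp, Finset.mem_image] at hb
        obtain ⟨w, hw, he⟩ := hb
        subst he
        simp only at hc hblt
        have hwlt : w.2 < u.2 := (mu_lt_iff hA hu hw (by simpa using hc)).mpr hblt
        rw [ih w.2 hwlt w hw rfl]
        have hd : dlt ((u.1, rl ∅ (Uset A) u)) ((w.1, rl ∅ (Uset A) w)) = dlt u w := rfl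
        rw [hd]
        exact le_of_below hA (Uset_subset hu) (Uset_pos hu) (Uset_subset hw)
          (by simpa using hc) hwlt
    · obtain ⟨y, hyA, hc, hlt, he⟩ := exists_sup hA (Uset_subset hu) (Uset_pos hu)
      by_cases hyU : y ∈ Uset A
      · have hmem : (y.1, rl ∅ (Uset A) y) ∈ Bp A := by
          rw [Bp, Finset.mem_image]; exact ⟨y, hyU, rfl⟩
        have hmlt : rl ∅ (Uset A) y < rl ∅ (Uset A) u := mu_strict hyU hc hlt
        have := rl_ge_right (D := insert ((0:ℤ),(0:ℕ)) (Cp A))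
          (x := (u.1, rl ∅ (Uset A) u)) hmem (by simpa using hc) (by simpa using hmlt)
        rw [ih y.2 hlt y hyU rfl] at this
        have hd : dlt ((u.1, rl ∅ (Uset A) u)) ((y.1, rl ∅ (Uset A) y)) = dlt u y := rfl
        rw [hd] at this
        omega
      · have hyD : y ∈ insert ((0:ℤ),(0:ℕ)) (Cp A) := by
          by_cases h0 : y = (0, 0)
          · rw [h0]; exact Finset.mem_insert_self _ _
          · exact Finset.mem_insert_of_mem
              (Finset.mem_sdiff.mpr ⟨Finset.mem_erase.mpr ⟨h0, hyA⟩, hyU⟩)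
        have := rl_ge_left (U := Bp A) (x := (u.1, rl ∅ (Uset A) u)) hyD (by simpa using hc)
        have hd : dlt ((u.1, rl ∅ (Uset A) u)) y = dlt u y := rfl
        rw [hd] at this
        omega

lemma phi_psi (hA : IsTriAnimal (Set.Ico 0 m) {0} A) : phi (Bp A) (Cpp A) = A := by
  rw [phi]
  have hD : Dbase (Cpp A) = insert ((0:ℤ),(0:ℕ)) (Cp A) := by rw [Dbase, Cpp_up hA]
  rw [hD]
  have himg : (Bp A).image
      (fun b => (b.1, rl (insert ((0:ℤ),(0:ℕ)) (Cp A)) (Bp A) b)) = Uset A := by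
    ext x
    rw [Finset.mem_image]
    constructor
    · rintro ⟨b, hb, he⟩
      rw [Bp, Finset.mem_image] at hb
      obtain ⟨u, hu, he2⟩ := hb
      subst he2
      rw [← he]
      have : ((u.1, rl ∅ (Uset A) u).1,
          rl (insert ((0:ℤ),(0:ℕ)) (Cp A)) (Bp A) (u.1, rl ∅ (Uset A) u)) = u :=
        Prod.ext rfl (nu_mu hA u hu)
      rw [this]
      exact hu
    · intro hx
      refine ⟨(x.1, rl ∅ (Uset A) x), ?_, ?_⟩
      · rw [Bp, Finset.mem_image]; exact ⟨x, hx, rfl⟩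
      · exact Prod.ext rfl (nu_mu hA x hx)
  rw [himg]
  exact (partition hA).symm

end AnimProof
namespace AnimProof

attribute [local instance] Classical.propDecidable

variable {m : ℤ} {B C' : Finset (ℤ × ℕ)}

/-- levels of cells of `Dbase C'` -/
lemma Dbase_cases {x : ℤ × ℕ} (hx : x ∈ Dbase C') :
    x = (0, 0) ∨ ∃ c ∈ C', x = sup1 c := by
  rcases Finset.mem_insert.mp hx with h | h
  · exact Or.inl h
  · rw [Finset.mem_image] at h
    obtain ⟨c, hc, he⟩ := h
    exact Or.inr ⟨c, hc, he.symm⟩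

lemma not00_sup1 {c : ℤ × ℕ} : sup1 c ≠ ((0:ℤ), (0:ℕ)) := by
  simp [sup1]

lemma Dbase_anim (hm : (1:ℤ) ≤ m) (hC : C' = ∅ ∨ IsTriAnimal (Set.Ico 1 m) {1} C') :
    IsTriAnimal (Set.Ico 0 m) {0} (Dbase C') := by
  refine ⟨?_, ?_, ?_⟩
  · intro x hx
    rcases Dbase_cases hx with h | ⟨c, hc, he⟩
    · rw [h]; simp only [Set.mem_Ico]; omega
    · rcases hC with rfl | hC
      · simp at hc
      · have := hC.1 c hc
        simp only [Set.mem_Ico] at this ⊢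
        rw [he]
        simp only [sup1]
        omega
  · intro q
    constructor
    · intro hq
      rcases Dbase_cases hq with h | ⟨c, hc, he⟩
      · simp only [Prod.mk.injEq] at h
        simp [h.1]
      · simp only [sup1, Prod.mk.injEq] at he
        omega
    · intro hq
      simp only [Finset.mem_singleton] at hq
      subst hq
      exact Finset.mem_insert_self _ _
  · intro x hx h1
    rcases Dbase_cases hx with h | ⟨c, hc, he⟩
    · rw [h] at h1; simp at h1
    · rcases hC with rfl | hC
      · simp at hc
      · rcases Nat.eq_zero_or_pos c.2 with hc0 | hcpos
      
        · have hc1 : c = (1, 0) := lvl0_eq' hC hc hc0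
          have hx11 : x = (1, 1) := by rw [he, hc1]; rfl
          left
          rw [hx11]
          exact Finset.mem_insert_self _ _
        · obtain ⟨y, hy, hcf, hlt, heq⟩ := exists_sup hC hc hcpos
          have hymem : sup1 y ∈ Dbase C' :=
            Finset.mem_insert_of_mem (Finset.mem_image_of_mem sup1 hy)
          refine sup_clause (x := x) (y := sup1 y) hymem ?_ ?_
          · have : x.1 = c.1 := by rw [he]; rfl
            simpa [sup1, this] using hcf
          · have hx1 : x.1 = c.1 := by rw [he]; rfl
            have hx2 : x.2 = c.2 + 1 := by rw [he]; rfl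
            have hdc : dlt x (sup1 y) = dlt c y := dlt_congr hx1 rfl
            rw [hdc]
            simp only [sup1]
            omega

/-- every re-dropped cell lands at positive level -/
lemma nu_pos (hB : IsTriAnimal (Set.Ico 0 m) {0} B) {b : ℤ × ℕ} (hb : b ∈ B) :
    1 ≤ rl (Dbase C') B b := by
  rcases Nat.eq_zero_or_pos b.2 with h0 | hpos
  · have hb00 : b = (0, 0) := lvl0_eq hB hb h0
    have h00 : ((0:ℤ),(0:ℕ)) ∈ Dbase C' := Finset.mem_insert_self _ _
    have := rl_ge_left (U := B) (x := b) h00 (by rw [hb00]; simp)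
    have := one_le_dlt b ((0:ℤ),(0:ℕ))
    omega
  · obtain ⟨y, hy, hcf, hlt, heq⟩ := exists_sup hB hb hpos
    have := rl_ge_right (D := Dbase C') hy hcf hlt
    have := one_le_dlt b y
    omega

lemma nu_strict {b b' : ℤ × ℕ} (hb' : b' ∈ B)
    (hc : |b.1 - b'.1| ≤ 1) (hlt : b'.2 < b.2) :
    rl (Dbase C') B b' < rl (Dbase C') B b := by
  have := rl_ge_right (D := Dbase C') hb' hc hlt
  have := one_le_dlt b b'
  omega

lemma nu_lt_iff (hB : IsTriAnimal (Set.Ico 0 m) {0} B) {b b' : ℤ × ℕ}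
    (hb : b ∈ B) (hb' : b' ∈ B) (hc : |b.1 - b'.1| ≤ 1) :
    b'.2 < b.2 ↔ rl (Dbase C') B b' < rl (Dbase C') B b := by
  constructor
  · exact fun h => nu_strict hb' hc h
  · intro h
    rcases lt_trichotomy b.2 b'.2 with h2 | h2 | h2
    · have := nu_strict (C' := C') hb (by rw [abs_sub_comm]; exact hc) h2
      omega
    · by_cases hq : b.1 = b'.1
      · have : b = b' := Prod.ext hq h2
        rw [this] at h; omega
      · have p1 := parity hB b hb
        have p2 := parity hB b' hb'
        have hc' := abs_le.mp hc
        omega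
    · exact h2

lemma nu_inj (hB : IsTriAnimal (Set.Ico 0 m) {0} B) {b b' : ℤ × ℕ}
    (hb : b ∈ B) (hb' : b' ∈ B) (h1 : b.1 = b'.1)
    (h2 : rl (Dbase C') B b = rl (Dbase C') B b') : b = b' := by
  rcases lt_trichotomy b.2 b'.2 with h | h | h
  · have := nu_strict (C' := C') hb (by rw [h1]; simp) h
    omega
  · exact Prod.ext h1 h
  · have := nu_strict (C' := C') hb' (by rw [h1]; simp) h
    omega

/-- dropped cells never collide with the base -/
lemma nu_not_D (hB : IsTriAnimal (Set.Ico 0 m) {0} B) {b : ℤ × ℕ} (hb : b ∈ B) :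
    (b.1, rl (Dbase C') B b) ∉ Dbase C' := by
  intro hmem
  have h1 := nu_pos (C' := C') hB hb
  rcases Dbase_cases hmem with h | ⟨c, hc, he⟩
  · simp only [Prod.mk.injEq] at h
    omega
  · have hcol : (sup1 c).1 = b.1 := by rw [← he]
    have hlv : (sup1 c).2 = rl (Dbase C') B b := by rw [← he]
    have hmem2 : sup1 c ∈ Dbase C' :=
      Finset.mem_insert_of_mem (Finset.mem_image_of_mem sup1 hc)
    have := rl_ge_left (U := B) (x := b) hmem2 (by rw [hcol]; simp)
    have hd : dlt b (sup1 c) = 2 := by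
      simp only [dlt, if_pos hcol.symm, ite_true]
    omega

lemma phi_anim (hm : (1:ℤ) ≤ m) (hB : B = ∅ ∨ IsTriAnimal (Set.Ico 0 m) {0} B)
    (hC : C' = ∅ ∨ IsTriAnimal (Set.Ico 1 m) {1} C') :
    IsTriAnimal (Set.Ico 0 m) {0} (phi B C') := by
  have hD := Dbase_anim hm hC
  refine ⟨?_, ?_, ?_⟩
  · intro x hx
    rcases Finset.mem_union.mp hx with hx | hx
    · exact hD.1 x hx
    · rw [Finset.mem_image] at hx
      obtain ⟨b, hb, he⟩ := hx
      rcases hB with rfl | hB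
      · simp at hb
      · rw [← he]
        exact hB.1 b hb
  · intro q
    constructor
    · intro hq
      rcases Finset.mem_union.mp hq with hq | hq
      · exact (hD.2.1 q).mp hq
      · rw [Finset.mem_image] at hq
        obtain ⟨b, hb, he⟩ := hq
        rcases hB with rfl | hB
        · simp at hb
        · have := nu_pos (C' := C') hB hb
          have h2 : rl (Dbase C') B b = 0 := congrArg Prod.snd he
          omega
    · intro hq
      simp only [Finset.mem_singleton] at hq
      subst hq
      exact Finset.mem_union_left _ (Finset.mem_insert_self _ _)
  · intro x hx h1
    have hDsub : Dbase C' ⊆ phi B C' := Finset.subset_union_left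
    rcases Finset.mem_union.mp hx with hx | hx
    · rcases hD.2.2 x hx h1 with h | h | h
      · exact Or.inl (hDsub h)
      · exact Or.inr (Or.inl (hDsub h))
      · exact Or.inr (Or.inr ⟨h.1, hDsub h.2⟩)
    · rw [Finset.mem_image] at hx
      obtain ⟨b, hb, he⟩ := hx
      rcases hB with rfl | hB
      · simp at hb
      · subst he
        rcases rl_cases (Dbase C') B b with h0 | ⟨y, hy, hc, heq⟩ | ⟨b', hb', hc, hlt, heq⟩
        · have := nu_pos (C' := C') hB hb
          omega
        · refine sup_clause (x := (b.1, rl (Dbase C') B b)) (y := y) (hDsub hy) ?_ ?_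
          · simpa using hc
          · have hd : dlt ((b.1, rl (Dbase C') B b)) y = dlt b y := rfl
            rw [hd]
            omega
        · have hmem : (b'.1, rl (Dbase C') B b') ∈ phi B C' :=
            Finset.mem_union_right _ (Finset.mem_image_of_mem _ hb')
          refine sup_clause (x := (b.1, rl (Dbase C') B b))
            (y := (b'.1, rl (Dbase C') B b')) hmem (by simpa using hc) ?_
          have hd : dlt ((b.1, rl (Dbase C') B b)) ((b'.1, rl (Dbase C') B b')) = dlt b b' :=
            rfl
          rw [hd]
          simp only
          omega

lemma phi_card (hB : B = ∅ ∨ IsTriAnimal (Set.Ico 0 m) {0} B) :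
    (phi B C').card = 1 + B.card + C'.card := by
  rw [phi]
  have hdisj : Disjoint (Dbase C') (B.image (fun b => (b.1, rl (Dbase C') B b))) := by
    rw [Finset.disjoint_right]
    intro x hx hxD
    rw [Finset.mem_image] at hx
    obtain ⟨b, hb, he⟩ := hx
    rcases hB with rfl | hB
    · simp at hb
    · exact nu_not_D hB hb (by rwa [he])
  rw [Finset.card_union_of_disjoint hdisj]
  have hc1 : (Dbase C').card = 1 + C'.card := by
    rw [Dbase, Finset.card_insert_of_notMem (fun h => by
      rw [Finset.mem_image] at h
      obtain ⟨c, _, he⟩ := h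
      exact not00_sup1 he)]
    rw [Finset.card_image_of_injective _ (fun a b hab => by
      simp only [sup1, Prod.mk.injEq] at hab
      exact Prod.ext hab.1 (by omega))]
    omega
  have hc2 : (B.image (fun b => (b.1, rl (Dbase C') B b))).card = B.card := by
    rcases hB with rfl | hB
    · simp
    · apply Finset.card_image_of_injOn
      intro b hb b' hb' he
      simp only [Prod.mk.injEq] at he
      exact nu_inj hB hb hb' he.1 he.2
  rw [hc1, hc2]
  omega

end AnimProof
namespace AnimProof

attribute [local instance] Classical.propDecidable

variable {m : ℤ} {B C' : Finset (ℤ × ℕ)}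

lemma sdn_sup1 (C' : Finset (ℤ × ℕ)) : (C'.image sup1).image sdn = C' := by
  rw [Finset.image_image]
  rw [show C'.image (sdn ∘ sup1) = C'.image id from
    Finset.image_congr (fun x _ => by simp [Function.comp, sup1, sdn, id])]
  exact Finset.image_id

lemma psi_phi_empty (hC : C' = ∅ ∨ IsTriAnimal (Set.Ico 1 m) {1} C') :
    psi (phi ∅ C') = (∅, C') := by
  have hA : phi ∅ C' = Dbase C' := by
    rw [phi, Finset.image_empty, Finset.union_empty]
  have hpos : pos0 (phi ∅ C') = ∅ := by
    rw [hA]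
    rw [pos0, Finset.filter_eq_empty_iff]
    intro x hx
    rcases Dbase_cases hx with h | ⟨c, hc, he⟩
    · rw [h]; simp
    · rcases hC with rfl | hC
      · simp at hc
      · have := hC.1 c hc
        simp only [Set.mem_Ico] at this
        have : x.1 = c.1 := by rw [he]; rfl
        intro hcon
        omega
  have hU : Uset (phi ∅ C') = ∅ :=
    Uset_empty_iff.mpr (by rw [hpos]; simp)
  have hB : Bp (phi ∅ C') = ∅ := by rw [Bp, hU, Finset.image_empty]
  have hCp : Cp (phi ∅ C') = C'.image sup1 := by
    rw [Cp, hU, Finset.sdiff_empty, hA, Dbase, Finset.erase_insert]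
    intro h
    rw [Finset.mem_image] at h
    obtain ⟨c, _, he⟩ := h
    exact not00_sup1 he
  rw [psi, hB, Cpp, hCp, sdn_sup1]

section Banim

variable (hm : (1:ℤ) ≤ m) (hBa : IsTriAnimal (Set.Ico 0 m) {0} B)
  (hC : C' = ∅ ∨ IsTriAnimal (Set.Ico 1 m) {1} C')

include hBa

lemma nu00_mem : ((0:ℤ), rl (Dbase C') B ((0:ℤ),(0:ℕ))) ∈ pos0 (phi B C') := by
  apply Finset.mem_filter.mpr
  refine ⟨?_, rfl, nu_pos hBa (zero_mem hBa)⟩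
  exact Finset.mem_union_right _ (Finset.mem_image_of_mem _ (zero_mem hBa))

include hC in
lemma col0_nu {x : ℤ × ℕ} (hx : x ∈ pos0 (phi B C')) :
    rl (Dbase C') B ((0:ℤ),(0:ℕ)) ≤ x.2 := by
  obtain ⟨hxA, hx0, hx2⟩ := Finset.mem_filter.mp hx
  rcases Finset.mem_union.mp hxA with hxD | hxI
  · rcases Dbase_cases hxD with h | ⟨c, hc, he⟩
    · rw [h] at hx2; simp at hx2
    · rcases hC with rfl | hC
      · simp at hc
      · have := hC.1 c hc
        simp only [Set.mem_Ico] at this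
        have hcol : x.1 = c.1 := by rw [he]; rfl
        omega
  · rw [Finset.mem_image] at hxI
    obtain ⟨b, hb, he⟩ := hxI
    have hb1 : b.1 = 0 := by rw [← hx0, ← he]
    rcases Nat.eq_zero_or_pos b.2 with h0 | hpos
    · have hb00 : b = (0, 0) := lvl0_eq hBa hb h0
      have hx2' : x.2 = rl (Dbase C') B ((0:ℤ),(0:ℕ)) := by rw [← he, hb00]
      omega
    · have hstrict := nu_strict (C' := C') (b := b) (zero_mem hBa)
        (by rw [hb1]; simp) (by simpa using hpos)
      have hx2' : x.2 = rl (Dbase C') B b := by rw [← he]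
      omega

include hC in
lemma rt_phi (hne : (pos0 (phi B C')).Nonempty) :
    rt (phi B C') hne = ((0:ℤ), rl (Dbase C') B ((0:ℤ),(0:ℕ))) := by
  refine Prod.ext rfl ?_
  apply le_antisymm
  · exact rt_le hne (nu00_mem hBa)
  · exact col0_nu hBa hC (rt_mem hne)

include hC in
lemma U_sub_img (hne : (pos0 (phi B C')).Nonempty) :
    Uset (phi B C') ⊆ B.image (fun b => (b.1, rl (Dbase C') B b)) := by
  intro u hu
  rw [Uset, dif_pos hne] at hu
  have hr := (Finset.mem_filter.mp hu).2
  clear hu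
  induction hr with
  | refl =>
    rw [rt_phi hBa hC hne]
    exact Finset.mem_image_of_mem _ (zero_mem hBa)
  | @tail mid nxt rtg hstep ih =>
    obtain ⟨hxA, hcf, hlt⟩ := hstep
    rcases Finset.mem_union.mp hxA with hxD | hxI
    · exfalso
      rw [Finset.mem_image] at ih
      obtain ⟨b, hb, he⟩ := ih
      rcases Dbase_cases hxD with h | ⟨c, hc, he2⟩
      · rw [h] at hlt; simp at hlt
      · -- nxt ∈ shifted C' conflicts b from above: contradiction with rl_ge_left
        have h1 : mid.1 = b.1 := by rw [← he]
        have h2 : mid.2 = rl (Dbase C') B b := by rw [← he]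
        have hcb : |b.1 - nxt.1| ≤ 1 := by
          rw [← h1, abs_sub_comm]; exact hcf
        have hgl := rl_ge_left (U := B) (x := b) hxD hcb
        have hdd := one_le_dlt b nxt
        omega
    · exact hxI

include hC in
lemma img_sub_U :
    ∀ b ∈ B, (b.1, rl (Dbase C') B b) ∈ Uset (phi B C') := by
  have hne : (pos0 (phi B C')).Nonempty := ⟨_, nu00_mem hBa⟩
  suffices H : ∀ n : ℕ, ∀ b ∈ B, b.2 = n → (b.1, rl (Dbase C') B b) ∈ Uset (phi B C') by
    intro b hb; exact H b.2 b hb rfl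
  intro n
  induction n using Nat.strong_induction_on with
  | _ n ih =>
    intro b hb hbn
    rcases Nat.eq_zero_or_pos b.2 with h0 | hpos
    · have hb00 : b = (0, 0) := lvl0_eq hBa hb h0
      have : (b.1, rl (Dbase C') B b) = rt (phi B C') hne := by
        rw [rt_phi hBa hC hne, hb00]
      rw [this]
      exact Uset_rt_mem hne
    · obtain ⟨b', hb', hcf, hlt, _⟩ := exists_sup hBa hb hpos
      have hmem' := ih b'.2 (by omega) b' hb' rfl
      apply Uset_closed _ hmem'
      · simpa using hcf
      · simpa using nu_strict (C' := C') hb' hcf hlt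
      · exact Finset.mem_union_right _ (Finset.mem_image_of_mem _ hb)

include hC in
lemma Uset_phi :
    Uset (phi B C') = B.image (fun b => (b.1, rl (Dbase C') B b)) := by
  have hne : (pos0 (phi B C')).Nonempty := ⟨_, nu00_mem hBa⟩
  apply Finset.Subset.antisymm (U_sub_img hBa hC hne)
  intro x hx
  rw [Finset.mem_image] at hx
  obtain ⟨b, hb, he⟩ := hx
  rw [← he]
  exact img_sub_U hBa hC b hb

include hC in
lemma mu_nu :
    ∀ b ∈ B, rl ∅ (Uset (phi B C')) (b.1, rl (Dbase C') B b) = b.2 := by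
  suffices H : ∀ n : ℕ, ∀ b ∈ B, b.2 = n →
      rl ∅ (Uset (phi B C')) (b.1, rl (Dbase C') B b) = b.2 by
    intro b hb; exact H b.2 b hb rfl
  intro n
  induction n using Nat.strong_induction_on with
  | _ n ih =>
    intro b hb hbn
    subst hbn
    apply le_antisymm
    · apply rl_le
      · intro y hy; simp at hy
      · intro u' hu' hcf hult
        rw [Uset_phi hBa hC, Finset.mem_image] at hu'
        obtain ⟨b', hb', he⟩ := hu'
        subst he
        simp only at hcf hult ⊢
        have hblt : b'.2 < b.2 := (nu_lt_iff hBa hb hb' (by simpa using hcf)).mpr hult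
        rw [ih b'.2 hblt b' hb' rfl]
        have hd : dlt ((b.1, rl (Dbase C') B b)) ((b'.1, rl (Dbase C') B b')) = dlt b b' :=
          rfl
        rw [hd]
        exact le_of_below hBa hb (by omega) hb' (by simpa using hcf) hblt
    · rcases Nat.eq_zero_or_pos b.2 with h0 | hpos
      · omega
      · obtain ⟨b', hb', hcf, hlt, heq⟩ := exists_sup hBa hb hpos
        have hmem' := img_sub_U hBa hC b' hb'
        have := rl_ge_right (D := (∅ : Finset (ℤ × ℕ)))
          (x := (b.1, rl (Dbase C') B b)) hmem' (by simpa using hcf)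
          (by simpa using nu_strict (C' := C') hb' hcf hlt)
        rw [ih b'.2 hlt b' hb' rfl] at this
        have hd : dlt ((b.1, rl (Dbase C') B b)) ((b'.1, rl (Dbase C') B b')) = dlt b b' :=
          rfl
        rw [hd] at this
        omega

include hC in
lemma Bp_phi : Bp (phi B C') = B := by
  ext x
  rw [Bp, Finset.mem_image]
  constructor
  · rintro ⟨u, hu, he⟩
    rw [Uset_phi hBa hC, Finset.mem_image] at hu
    obtain ⟨b, hb, he2⟩ := hu
    subst he2
    rw [← he]
    have : ((b.1, rl (Dbase C') B b).1,
        rl ∅ (Uset (phi B C')) (b.1, rl (Dbase C') B b)) = b :=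
      Prod.ext rfl (mu_nu hBa hC b hb)
    rw [this]
    exact hb
  · intro hx
    refine ⟨(x.1, rl (Dbase C') B x), img_sub_U hBa hC x hx, ?_⟩
    exact Prod.ext rfl (mu_nu hBa hC x hx)

include hC in
lemma Cpp_phi : Cpp (phi B C') = C' := by
  have hCp : Cp (phi B C') = C'.image sup1 := by
    ext x
    rw [Cp, Finset.mem_sdiff, Finset.mem_erase]
    constructor
    · rintro ⟨⟨hne00, hxA⟩, hnU⟩
      rcases Finset.mem_union.mp hxA with hxD | hxI
      · rcases Dbase_cases hxD with h | ⟨c, hc, he⟩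
        · exact absurd h hne00
        · rw [he]; exact Finset.mem_image_of_mem sup1 hc
      · exfalso
        apply hnU
        rw [Uset_phi hBa hC]
        exact hxI
    · intro hx
      rw [Finset.mem_image] at hx
      obtain ⟨c, hc, he⟩ := hx
      refine ⟨⟨by rw [← he]; exact not00_sup1, ?_⟩, ?_⟩
      · exact Finset.mem_union_left _
          (Finset.mem_insert_of_mem (by rw [← he]; exact Finset.mem_image_of_mem sup1 hc))
      · intro hxU
        rw [Uset_phi hBa hC, Finset.mem_image] at hxU
        obtain ⟨b, hb, he2⟩ := hxU
        apply nu_not_D (C' := C') hBa hb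
        rw [he2, ← he]
        exact Finset.mem_insert_of_mem (Finset.mem_image_of_mem sup1 hc)
  rw [Cpp, hCp, sdn_sup1]

end Banim

lemma psi_phi (hB : B = ∅ ∨ IsTriAnimal (Set.Ico 0 m) {0} B)
    (hC : C' = ∅ ∨ IsTriAnimal (Set.Ico 1 m) {1} C') :
    psi (phi B C') = (B, C') := by
  rcases hB with rfl | hB
  · exact psi_phi_empty hC
  · rw [psi, Bp_phi hB hC, Cpp_phi hB hC]

end AnimProof
namespace AnimProof

attribute [local instance] Classical.propDecidable

lemma empty_not_anim {Q : Set ℤ} {s : ℤ} : ¬ IsTriAnimal Q {s} (∅ : Finset (ℤ × ℕ)) :=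
  fun h => by simpa using src_mem h

lemma anim_card_pos {Q : Set ℤ} {s : ℤ} {A : Finset (ℤ × ℕ)} (hA : IsTriAnimal Q {s} A) :
    1 ≤ A.card := Finset.card_pos.mpr ⟨_, src_mem hA⟩

lemma level_bound {Q : Set ℤ} {S : Finset ℤ} {A : Finset (ℤ × ℕ)}
    (hA : IsTriAnimal Q S A) : ∀ x ∈ A, x.2 < 2 * A.card := by
  suffices H : ∀ n : ℕ, ∀ x ∈ A, x.2 = n →
      ∃ c : Finset (ℤ × ℕ), c ⊆ A ∧ x ∈ c ∧ (∀ z ∈ c, z.2 ≤ x.2) ∧ x.2 < 2 * c.card by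
    intro x hx
    obtain ⟨c, hcsub, _, _, hlt⟩ := H x.2 x hx rfl
    have := Finset.card_le_card hcsub
    omega
  intro n
  induction n using Nat.strong_induction_on with
  | _ n ih =>
    intro x hx hxn
    rcases Nat.eq_zero_or_pos x.2 with h0 | hpos
    · exact ⟨{x}, by simpa using hx, Finset.mem_singleton_self x,
        by intro z hz; rw [Finset.mem_singleton] at hz; rw [hz],
        by simp; omega⟩
    · obtain ⟨y, hyA, _, hlt, he⟩ := exists_sup hA hx hpos
      obtain ⟨c, hcsub, hyc, hcb, hclt⟩ := ih y.2 (by omega) y hyA rfl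
      have hxc : x ∉ c := fun hxc => by have := hcb x hxc; omega
      refine ⟨insert x c, ?_, Finset.mem_insert_self _ _, ?_, ?_⟩
      · intro z hz
        rcases Finset.mem_insert.mp hz with rfl | hz
        · exact hx
        · exact hcsub hz
      · intro z hz
        rcases Finset.mem_insert.mp hz with rfl | hz
        · omega
        · have := hcb z hz; omega
      · rw [Finset.card_insert_of_notMem hxc]
        have hd := dlt_le_two x y
        omega

lemma col_bound {Q : Set ℤ} {s : ℤ} {A : Finset (ℤ × ℕ)}
    (hA : IsTriAnimal Q {s} A) : ∀ x ∈ A, |x.1 - s| ≤ (x.2 : ℤ) := by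
  suffices H : ∀ n : ℕ, ∀ x ∈ A, x.2 = n → |x.1 - s| ≤ (x.2 : ℤ) by
    intro x hx; exact H x.2 x hx rfl
  intro n
  induction n using Nat.strong_induction_on with
  | _ n ih =>
    intro x hx hxn
    rcases Nat.eq_zero_or_pos x.2 with h0 | hpos
    · rw [lvl0_eq' hA hx h0]
      simp
    · obtain ⟨y, hyA, hc, hlt, he⟩ := exists_sup hA hx hpos
      have hy := ih y.2 (by omega) y hyA rfl
      have hc' := abs_le.mp hc
      have hy' := abs_le.mp hy
      have hd := one_le_dlt x y
      rw [abs_le]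
      constructor <;> omega

/-- the set of animals of a given area -/
def animSet (Q : Set ℤ) (S : Finset ℤ) (n : ℕ) : Set (Finset (ℤ × ℕ)) :=
  {A : Finset (ℤ × ℕ) | IsTriAnimal Q S A ∧ A.card = n}

lemma animSet_finite (Q : Set ℤ) (s : ℤ) (n : ℕ) : (animSet Q {s} n).Finite := by
  apply Set.Finite.subset
    (Finset.finite_toSet ((Finset.Ico (s - 2*n) (s + 2*n)) ×ˢ (Finset.range (2*n))).powerset)
  intro A hA
  obtain ⟨hAa, hAc⟩ := hA
  rw [Finset.mem_coe, Finset.mem_powerset]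
  intro x hx
  have h1 := level_bound hAa x hx
  have h2 := col_bound hAa x hx
  have h2' := abs_le.mp h2
  rw [hAc] at h1
  rw [Finset.mem_product, Finset.mem_Ico, Finset.mem_range]
  constructor
  · constructor <;> omega
  · omega

lemma triCount_eq_card (Q : Set ℤ) (s : ℤ) (n : ℕ) :
    triCount Q {s} n = ((animSet_finite Q s n).toFinset).card := by
  rw [triCount]
  exact Set.ncard_eq_toFinset_card _ (animSet_finite Q s n)

lemma triCount_zero (Q : Set ℤ) (s : ℤ) : triCount Q {s} 0 = 0 := by
  rw [triCount_eq_card]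
  rw [Finset.card_eq_zero, Finset.eq_empty_iff_forall_notMem]
  intro A hA
  rw [Set.Finite.mem_toFinset] at hA
  have := anim_card_pos hA.1
  have := hA.2
  omega

/-- parts of area `a`: either the empty configuration (`a = 0`) or an animal -/
noncomputable def partSet (Q : Set ℤ) (s : ℤ) (a : ℕ) : Finset (Finset (ℤ × ℕ)) :=
  if a = 0 then {∅} else (animSet_finite Q s a).toFinset

lemma mem_partSet {Q : Set ℤ} {s : ℤ} {a : ℕ} {B : Finset (ℤ × ℕ)} :
    B ∈ partSet Q s a ↔ ((B = ∅ ∨ IsTriAnimal Q {s} B) ∧ B.card = a) := by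
  rw [partSet]
  split
  · next h =>
    subst h
    simp only [Finset.mem_singleton]
    constructor
    · rintro rfl
      exact ⟨Or.inl rfl, Finset.card_empty⟩
    · rintro ⟨hB | hB, hc⟩
      · exact hB
      · exact absurd (anim_card_pos hB) (by omega)
  · next h =>
    rw [Set.Finite.mem_toFinset]
    constructor
    · rintro ⟨hB, hc⟩
      exact ⟨Or.inr hB, hc⟩
    · rintro ⟨hB | hB, hc⟩
      · subst hB
        simp at hc
        omega
      · exact ⟨hB, hc⟩

lemma partSet_card (Q : Set ℤ) (s : ℤ) (a : ℕ) :
    (partSet Q s a).card = if a = 0 then 1 else triCount Q {s} a := by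
  rw [partSet]
  split
  · simp
  · rw [triCount_eq_card]

/-- The master counting identity. -/
lemma main_count (m : ℤ) (hm : (1:ℤ) ≤ m) (n : ℕ) (hn : 1 ≤ n) :
    triCount (Set.Ico 0 m) {0} n =
      ∑ p ∈ Finset.HasAntidiagonal.antidiagonal (n - 1),
        (if p.1 = 0 then 1 else triCount (Set.Ico 0 m) {0} p.1) *
        (if p.2 = 0 then 1 else triCount (Set.Ico 1 m) {1} p.2) := by
  rw [triCount_eq_card]
  have hbij : ((animSet_finite (Set.Ico 0 m) 0 n).toFinset).card =
      ((Finset.HasAntidiagonal.antidiagonal (n - 1)).biUnion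
        (fun p => (partSet (Set.Ico 0 m) 0 p.1) ×ˢ (partSet (Set.Ico 1 m) 1 p.2))).card := by
    apply Finset.card_bij (fun A _ => psi A)
    · -- maps into
      intro A hA
      rw [Set.Finite.mem_toFinset] at hA
      obtain ⟨hAa, hAc⟩ := hA
      have hBor : Bp A = ∅ ∨ IsTriAnimal (Set.Ico 0 m) {0} (Bp A) := by
        by_cases h : (pos0 A).Nonempty
        · exact Or.inr (Bp_anim hAa h)
        · exact Or.inl (by rw [Bp_empty_iff]; exact Uset_empty_iff.mpr h)
      have hCor : Cpp A = ∅ ∨ IsTriAnimal (Set.Ico 1 m) {1} (Cpp A) := by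
        by_cases h : (Cp A).Nonempty
        · exact Or.inr (Cpp_anim hAa h)
        · exact Or.inl (by rw [Cpp, Finset.not_nonempty_iff_eq_empty.mp h]; simp)
      have hcard : (Bp A).card + (Cpp A).card = n - 1 := by
        have h1 := card_split hAa
        have h2 := Bp_card (A := A)
        have h3 := Cpp_card hAa
        omega
      rw [Finset.mem_biUnion]
      refine ⟨((Bp A).card, (Cpp A).card), ?_, ?_⟩
      · rw [Finset.HasAntidiagonal.mem_antidiagonal]
        exact hcard
      · rw [Finset.mem_product]
        exact ⟨mem_partSet.mpr ⟨hBor, rfl⟩, mem_partSet.mpr ⟨hCor, rfl⟩⟩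
    · -- injective
      intro A hA A' hA' he
      rw [Set.Finite.mem_toFinset] at hA hA'
      have h1 := phi_psi hA.1
      have h2 := phi_psi hA'.1
      rw [psi] at he
      have hB : Bp A = Bp A' := congrArg Prod.fst he
      have hC : Cpp A = Cpp A' := congrArg Prod.snd he
      rw [← h1, ← h2, hB, hC]
    · -- surjective
      intro p hp
      rw [Finset.mem_biUnion] at hp
      obtain ⟨q, hq, hpq⟩ := hp
      rw [Finset.HasAntidiagonal.mem_antidiagonal] at hq
      rw [Finset.mem_product] at hpq
      obtain ⟨hB, hC⟩ := hpq
      rw [mem_partSet] at hB hC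
      refine ⟨phi p.1 p.2, ?_, ?_⟩
      · rw [Set.Finite.mem_toFinset]
        refine ⟨phi_anim hm hB.1 hC.1, ?_⟩
        rw [phi_card hB.1]
        have h1 := hB.2
        have h2 := hC.2
        omega
      · rw [psi_phi hB.1 hC.1]
  rw [hbij, Finset.card_biUnion]
  · apply Finset.sum_congr rfl
    intro p hp
    rw [Finset.card_product, partSet_card, partSet_card]
  · intro p hp q hq hne
    rw [Function.onFun, Finset.disjoint_left]
    intro x hxp hxq
    rw [Finset.mem_product, mem_partSet, mem_partSet] at hxp hxq
    exact hne (Prod.ext (by rw [← hxp.1.2, ← hxq.1.2]) (by rw [← hxp.2.2, ← hxq.2.2]))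

end AnimProof
namespace AnimProof

attribute [local instance] Classical.propDecidable

def tau (d : ℤ) (x : ℤ × ℕ) : ℤ × ℕ := (x.1 + d, x.2)

lemma tau_inj (d : ℤ) : Function.Injective (tau d) := by
  intro x y h
  simp only [tau, Prod.mk.injEq] at h
  exact Prod.ext (by omega) h.2

lemma shift_anim {a b s : ℤ} (d : ℤ) {A : Finset (ℤ × ℕ)}
    (hA : IsTriAnimal (Set.Ico a b) {s} A) :
    IsTriAnimal (Set.Ico (a + d) (b + d)) {s + d} (A.image (tau d)) := by
  have hmem : ∀ z : ℤ × ℕ, z ∈ A.image (tau d) ↔ (z.1 - d, z.2) ∈ A := by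
    intro z
    rw [Finset.mem_image]
    constructor
    · rintro ⟨x, hx, he⟩
      have : (z.1 - d, z.2) = x := by
        rw [← he]; simp [tau]
      rwa [this]
    · intro hz
      exact ⟨(z.1 - d, z.2), hz, by simp [tau]⟩
  refine ⟨?_, ?_, ?_⟩
  · intro x hx
    rw [hmem] at hx
    have := hA.1 _ hx
    simp only [Set.mem_Ico] at this ⊢
    omega
  · intro q
    rw [hmem]
    have := hA.2.1 (q - d)
    simp only [Finset.mem_singleton] at this ⊢
    rw [this]
    omega
  · intro x hx h1
    rw [hmem] at hx
    rcases hA.2.2 _ hx h1 with h | h | ⟨h2, h⟩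
    · left
      rw [hmem]
      rw [show x.1 - 1 - d = x.1 - d - 1 from by ring]
      exact h
    · right; left
      rw [hmem]
      rw [show x.1 + 1 - d = x.1 - d + 1 from by ring]
      exact h
    · right; right
      refine ⟨h2, ?_⟩
      rw [hmem]
      exact h

lemma triCount_shift (d a b s : ℤ) (n : ℕ) :
    triCount (Set.Ico (a + d) (b + d)) {s + d} n = triCount (Set.Ico a b) {s} n := by
  rw [triCount, triCount]
  have hset : {A : Finset (ℤ × ℕ) | IsTriAnimal (Set.Ico (a+d) (b+d)) {s+d} A ∧ A.card = n}
      = (Finset.image (tau d)) '' {A : Finset (ℤ × ℕ) | IsTriAnimal (Set.Ico a b) {s} A ∧ A.card = n} := by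
    ext A'
    constructor
    · rintro ⟨hA', hc⟩
      refine ⟨A'.image (tau (-d)), ⟨?_, ?_⟩, ?_⟩
      · have := shift_anim (-d) hA'
        have e1 : a + d + -d = a := by ring
        have e2 : b + d + -d = b := by ring
        have e3 : s + d + -d = s := by ring
        rwa [e1, e2, e3] at this
      · rw [Finset.card_image_of_injective _ (tau_inj (-d)), hc]
      · rw [Finset.image_image]
        rw [show (A'.image (tau d ∘ tau (-d))) = A'.image id from
          Finset.image_congr (fun x _ => by simp [Function.comp, tau])]
        exact Finset.image_id
    · rintro ⟨A, ⟨hA, hc⟩, he⟩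
      subst he
      exact ⟨shift_anim d hA, by rw [Finset.card_image_of_injective _ (tau_inj d), hc]⟩
  rw [hset, Set.ncard_image_of_injective _ (Finset.image_injective (tau_inj d))]

lemma triCount_one_shift (m : ℤ) (n : ℕ) :
    triCount (Set.Ico 1 m) {1} n = triCount (Set.Ico 0 (m - 1)) {0} n := by
  have := triCount_shift 1 0 (m - 1) 0 n
  norm_num at this
  exact this

/-- width-`m` generating function -/
noncomputable def E (m : ℤ) : PowerSeries ℤ := triGF (Set.Ico 0 m) {0}

lemma coeff_oneE (m : ℤ) (a : ℕ) :
    PowerSeries.coeff a (1 + E m) =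
      if a = 0 then 1 else (triCount (Set.Ico 0 m) {0} a : ℤ) := by
  rw [map_add, E, triGF, PowerSeries.coeff_mk, PowerSeries.coeff_one]
  split
  · next h => subst h; rw [triCount_zero]; norm_num
  · rw [zero_add]

lemma recursion (m : ℤ) (hm : (1:ℤ) ≤ m) :
    E m = PowerSeries.X * ((1 + E m) * (1 + E (m - 1))) := by
  apply PowerSeries.ext
  intro n
  match n with
  | 0 =>
    have hl : PowerSeries.coeff 0 (E m) = (triCount (Set.Ico 0 m) {0} 0 : ℤ) := by
      rw [E, triGF, PowerSeries.coeff_mk]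
    rw [hl, triCount_zero,
      PowerSeries.coeff_zero_eq_constantCoeff, map_mul, PowerSeries.constantCoeff_X, zero_mul]
    norm_num
  | k + 1 =>
    rw [PowerSeries.coeff_succ_X_mul, PowerSeries.coeff_mul]
    have hl : PowerSeries.coeff (k+1) (E m) = (triCount (Set.Ico 0 m) {0} (k+1) : ℤ) := by
      rw [E, triGF, PowerSeries.coeff_mk]
    rw [hl, main_count m hm (k+1) (by omega)]
    simp only [Nat.add_sub_cancel]
    rw [Nat.cast_sum]
    apply Finset.sum_congr rfl
    intro p hp
    rw [Nat.cast_mul, coeff_oneE, coeff_oneE, triCount_one_shift m p.2]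
    congr 1 <;> (split <;> simp)

lemma Tnat_succ (n : ℕ) : Tnat (n + 2) = Tnat (n + 1) - Polynomial.X * Tnat n := by
  rw [Tnat]

lemma E_zero : E 0 = 0 := by
  apply PowerSeries.ext
  intro n
  rw [E, triGF, PowerSeries.coeff_mk, map_zero]
  have : triCount (Set.Ico (0:ℤ) 0) {0} n = 0 := by
    rw [triCount_eq_card, Finset.card_eq_zero, Finset.eq_empty_iff_forall_notMem]
    intro A hA
    rw [Set.Finite.mem_toFinset] at hA
    have := hA.1.1 _ (zero_mem hA.1)
    simp at this
  rw [this]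
  norm_num

lemma main_induction : ∀ M : ℕ,
    (1 + E (M : ℤ)) * ((Tnat (M + 1) : Polynomial ℤ) : PowerSeries ℤ)
      = ((Tnat M : Polynomial ℤ) : PowerSeries ℤ) := by
  intro M
  induction M with
  | zero =>
    rw [Nat.cast_zero, E_zero]
    show (1 + 0) * ((Tnat 1 : Polynomial ℤ) : PowerSeries ℤ) = _
    rw [show Tnat 1 = 1 from by rw [Tnat], show Tnat 0 = 1 from by rw [Tnat]]
    ring
  | succ M ih =>
    have hR : E ((M + 1 : ℕ) : ℤ) =
        PowerSeries.X * ((1 + E ((M + 1 : ℕ) : ℤ)) * (1 + E (M : ℤ))) := by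
      have := recursion ((M + 1 : ℕ) : ℤ) (by push_cast; omega)
      rwa [show ((M + 1 : ℕ) : ℤ) - 1 = (M : ℤ) from by push_cast; ring] at this
    rw [Tnat_succ, Polynomial.coe_sub, Polynomial.coe_mul, Polynomial.coe_X]
    linear_combination ((Tnat (M + 1) : Polynomial ℤ) : PowerSeries ℤ) * hR
      + (1 + E ((M + 1 : ℕ) : ℤ)) * PowerSeries.X * ih

end AnimProof
theorem stmt7 (m : ℕ) (hm : 1 ≤ m) :
    (1 + triGF (Set.Ico 0 (m : ℤ)) {0}) * ((Tpoly m : Polynomial ℤ) : PowerSeries ℤ)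
      = ((Tpoly ((m : ℤ) - 1) : Polynomial ℤ) : PowerSeries ℤ) := by
  have e1 : ((m : ℤ) + 1).toNat = m + 1 := by omega
  have e2 : ((m : ℤ) - 1 + 1).toNat = m := by omega
  have h1 : Tpoly (m : ℤ) = Tnat (m + 1) := by rw [Tpoly, e1]
  have h2 : Tpoly ((m : ℤ) - 1) = Tnat m := by rw [Tpoly, e2]
  rw [h1, h2]
  exact AnimProof.main_induction m
end

section
/- For every integer m ≥ 1, the identity (1 + 𝒜_{2m}(t)) · T̂_{2m}(t) = T_{2m−1}(t) holds in the ring of formal power series ℤ[[t]], where the polynomials are regarded as power series. -/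
/-- A triangular-lattice directed animal over the cyclic position set `ZMod N`
with source `S`: sites on line `0` are exactly the source, and every higher site
is supported at the left, at the right, or at the center (two lines below),
neighbours `q ± 1` being computed modulo `N`. -/
def IsTriAnimalZ (N : ℕ) (S : Finset (ZMod N)) (A : Finset (ZMod N × ℕ)) : Prop :=
  (∀ q : ZMod N, (q, 0) ∈ A ↔ q ∈ S) ∧
  ∀ x ∈ A, 1 ≤ x.2 →
    (x.1 - 1, x.2 - 1) ∈ A ∨ (x.1 + 1, x.2 - 1) ∈ A ∨ (2 ≤ x.2 ∧ (x.1, x.2 - 2) ∈ A)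

/-- A square-lattice directed animal over the cyclic position set `ZMod N`. -/
def IsSqAnimalZ (N : ℕ) (S : Finset (ZMod N)) (A : Finset (ZMod N × ℕ)) : Prop :=
  (∀ q : ZMod N, (q, 0) ∈ A ↔ q ∈ S) ∧
  ∀ x ∈ A, 1 ≤ x.2 →
    (x.1 - 1, x.2 - 1) ∈ A ∨ (x.1 + 1, x.2 - 1) ∈ A

/-- Number of triangular-lattice directed animals over `ZMod N` with source `S` and area `n`. -/
noncomputable def triCountZ (N : ℕ) (S : Finset (ZMod N)) (n : ℕ) : ℕ :=
  {A : Finset (ZMod N × ℕ) | IsTriAnimalZ N S A ∧ A.card = n}.ncard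

/-- Number of square-lattice directed animals over `ZMod N` with source `S` and area `n`. -/
noncomputable def sqCountZ (N : ℕ) (S : Finset (ZMod N)) (n : ℕ) : ℕ :=
  {A : Finset (ZMod N × ℕ) | IsSqAnimalZ N S A ∧ A.card = n}.ncard

/-- Generating function of triangular-lattice directed animals over `ZMod N` with source `S`. -/
noncomputable def triGFZ (N : ℕ) (S : Finset (ZMod N)) : PowerSeries ℤ :=
  PowerSeries.mk fun n => (triCountZ N S n : ℤ)


namespace Stmt8Aux
open Finset
open scoped Classical

variable {N : ℕ}

/-- Independent set in the cycle `C_N`. -/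
def Ind (T : Finset (ZMod N)) : Prop := ∀ q ∈ T, q + 1 ∉ T

/-- A heap with level-0 slice contained in `{0}`. -/
def Anim (A : Finset (ZMod N × ℕ)) : Prop :=
  (∀ x ∈ A, x.2 = 0 → x.1 = 0) ∧
  (∀ x ∈ A, 1 ≤ x.2 →
    ((x.1 - 1, x.2 - 1) ∈ A ∨ (x.1 + 1, x.2 - 1) ∈ A ∨ (2 ≤ x.2 ∧ (x.1, x.2 - 2) ∈ A)))

lemma ind_sub {T T' : Finset (ZMod N)} (h : T' ⊆ T) (hT : Ind T) : Ind T' :=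
  fun q hq h1 => hT q (h hq) (h h1)

lemma ind_pred {T : Finset (ZMod N)} (hT : Ind T) {q : ZMod N} (hq : q ∈ T) : q - 1 ∉ T := by
  intro h
  exact hT _ h (by simpa using hq)

lemma val_add_one [NeZero N] (q : ZMod N) (h2 : 2 ≤ N) :
    (q + 1).val = (q.val + 1) % N := by
  haveI : Fact (1 < N) := ⟨h2⟩
  rw [ZMod.val_add, ZMod.val_one]

/-- parity: in an `Anim`, every cell has level ≡ position (mod 2). -/
lemma anim_parity [NeZero N] (h2 : 2 ≤ N) (hd : 2 ∣ N) {A : Finset (ZMod N × ℕ)}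
    (hA : Anim A) : ∀ ℓ : ℕ, ∀ q : ZMod N, (q, ℓ) ∈ A → q.val % 2 = ℓ % 2 := by
  intro ℓ
  induction ℓ using Nat.strong_induction_on with
  | _ ℓ ih =>
    intro q hq
    rcases Nat.eq_zero_or_pos ℓ with h0 | h1
    · subst h0
      have := hA.1 _ hq rfl
      simp only at this
      subst this
      simp [ZMod.val_zero]
    · have hsup := hA.2 (q, ℓ) hq h1
      dsimp only at hsup
      rcases hsup with h | h | ⟨h2', h⟩
      · -- (q-1, ℓ-1) ∈ A
        have hp := ih (ℓ - 1) (by omega) _ h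
        have : q = (q - 1) + 1 := by ring
        rw [this, val_add_one _ h2]
        have := Nat.mod_mod_of_dvd ((q - 1).val + 1) hd
        omega
      · -- (q+1, ℓ-1) ∈ A
        have hp := ih (ℓ - 1) (by omega) _ h
        rw [val_add_one _ h2] at hp
        have := Nat.mod_mod_of_dvd (q.val + 1) hd
        omega
      · have hp := ih (ℓ - 2) (by omega) _ h
        omega

/-- no two cells in adjacent columns at the same level -/
lemma no_adj_same [NeZero N] (h2 : 2 ≤ N) (hd : 2 ∣ N) {A : Finset (ZMod N × ℕ)}
    (hA : Anim A) {q : ZMod N} {ℓ : ℕ} (hx : (q, ℓ) ∈ A) {q' : ZMod N}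
    (hadj : q' = q + 1 ∨ q' = q - 1) (hy : (q', ℓ) ∈ A) : False := by
  have p1 := anim_parity h2 hd hA ℓ q hx
  have p2 := anim_parity h2 hd hA ℓ q' hy
  rcases hadj with rfl | rfl
  · rw [val_add_one _ h2] at p2
    have := Nat.mod_mod_of_dvd (q.val + 1) hd
    omega
  · have hq : q = (q - 1) + 1 := by ring
    rw [hq, val_add_one _ h2] at p1
    have := Nat.mod_mod_of_dvd ((q - 1).val + 1) hd
    omega

/-- no two cells in the same column at consecutive levels -/
lemma no_col_succ [NeZero N] (h2 : 2 ≤ N) (hd : 2 ∣ N) {A : Finset (ZMod N × ℕ)}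
    (hA : Anim A) {q : ZMod N} {ℓ ℓ' : ℕ} (hx : (q, ℓ) ∈ A) (hy : (q, ℓ') ∈ A)
    (h : ℓ' = ℓ + 1) : False := by
  have p1 := anim_parity h2 hd hA ℓ q hx
  have p2 := anim_parity h2 hd hA ℓ' q hy
  omega

/-- level bound: each level is at most `2·card - 2`. -/
lemma anim_level_bound {A : Finset (ZMod N × ℕ)} (hA : Anim A) :
    ∀ ℓ : ℕ, ∀ q : ZMod N, (q, ℓ) ∈ A → ℓ + 2 ≤ 2 * A.card := by
  suffices h : ∀ ℓ : ℕ, ∀ q : ZMod N, (q, ℓ) ∈ A →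
      ℓ + 2 ≤ 2 * (A.filter (fun y => y.2 ≤ ℓ)).card by
    intro ℓ q hq
    exact le_trans (h ℓ q hq) (by
      have := Finset.card_filter_le A (fun y => y.2 ≤ ℓ)
      omega)
  intro ℓ
  induction ℓ using Nat.strong_induction_on with
  | _ ℓ ih =>
    intro q hq
    rcases Nat.eq_zero_or_pos ℓ with h0 | h1
    · subst h0
      have : (q, 0) ∈ A.filter (fun y => y.2 ≤ 0) := by simp [hq]
      have := Finset.card_pos.mpr ⟨_, this⟩
      omega
    · have key : ∃ ℓ' : ℕ, ℓ' < ℓ ∧ ℓ ≤ ℓ' + 2 ∧ ∃ q' : ZMod N, (q', ℓ') ∈ A := by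
        rcases hA.2 _ hq h1 with h | h | ⟨h2', h⟩
        · exact ⟨ℓ - 1, by omega, by omega, _, h⟩
        · exact ⟨ℓ - 1, by omega, by omega, _, h⟩
        · exact ⟨ℓ - 2, by omega, by omega, _, h⟩
      obtain ⟨ℓ', hlt, hle, q', hq'⟩ := key
      have hih := ih ℓ' hlt q' hq'
      have hsub : insert (q, ℓ) (A.filter (fun y => y.2 ≤ ℓ')) ⊆ A.filter (fun y => y.2 ≤ ℓ) := by
        intro y hy
        rcases Finset.mem_insert.mp hy with rfl | hy
        · simp [hq]
        · rw [Finset.mem_filter] at hy ⊢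
          exact ⟨hy.1, le_trans hy.2 (by omega)⟩
      have hcard := Finset.card_le_card hsub
      rw [Finset.card_insert_of_notMem (by simp; omega)] at hcard
      omega

lemma anim_zero_mem {A : Finset (ZMod N × ℕ)} (hA : Anim A) (hne : A.Nonempty) :
    ((0 : ZMod N), 0) ∈ A := by
  obtain ⟨x, hx, hmin⟩ := Finset.exists_min_image A (fun y => y.2) hne
  rcases Nat.eq_zero_or_pos x.2 with h0 | h1
  · have := hA.1 _ hx h0
    have hx' : x = (x.1, x.2) := rfl
    rw [hx', this, h0] at hx
    exact hx
  · exfalso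
    rcases hA.2 _ hx h1 with h | h | ⟨h2', h⟩
    · exact absurd (hmin _ h) (by simp; omega)
    · exact absurd (hmin _ h) (by simp; omega)
    · exact absurd (hmin _ h) (by simp; omega)

end Stmt8Aux
namespace Stmt8Aux
open Finset
open scoped Classical

variable {N : ℕ}

/-- weight of a cell `x` seen from column `q`. -/
def wt (q : ZMod N) (x : ZMod N × ℕ) : ℕ :=
  if x.1 = q then x.2 + 2 else if x.1 = q + 1 ∨ x.1 = q - 1 then x.2 + 1 else 0

/-- landing level for a new piece at column `q`. -/
noncomputable def lam (A : Finset (ZMod N × ℕ)) (q : ZMod N) : ℕ := A.sup (wt q)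

/-- `(q,ℓ)` is an active (removable) top piece. -/
def IsActive (A : Finset (ZMod N × ℕ)) (q : ZMod N) (ℓ : ℕ) : Prop :=
  (q, ℓ) ∈ A ∧ ∀ x ∈ A, (x.1 = q → x.2 ≤ ℓ) ∧ ((x.1 = q + 1 ∨ x.1 = q - 1) → x.2 ≤ ℓ)

/-- topmost level of column `q`. -/
noncomputable def topL (A : Finset (ZMod N × ℕ)) (q : ZMod N) : ℕ :=
  (A.filter (fun x => x.1 = q)).sup (fun x => x.2)

noncomputable def ActSet [NeZero N] (A : Finset (ZMod N × ℕ)) (T : Finset (ZMod N)) :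
    Finset (ZMod N) :=
  Finset.univ.filter (fun q =>
    (q ∈ T ∧ (q = 0 ∨ 1 ≤ lam A q)) ∨
    (q ∉ T ∧ q + 1 ∉ T ∧ q - 1 ∉ T ∧ ∃ ℓ, IsActive A q ℓ ∧ (q = 0 ∨ 1 ≤ ℓ)))

noncomputable def pivot (S : Finset (ZMod N)) [NeZero N] : ZMod N :=
  if h : S.Nonempty then (((S.image ZMod.val).min' (h.image _) : ℕ) : ZMod N) else 0

lemma pivot_mem [NeZero N] {S : Finset (ZMod N)} (h : S.Nonempty) : pivot S ∈ S := by
  rw [pivot, dif_pos h]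
  have := Finset.min'_mem (S.image ZMod.val) (h.image _)
  rw [Finset.mem_image] at this
  obtain ⟨q, hq, hval⟩ := this
  rw [← hval, ZMod.natCast_rightInverse q]
  exact hq

lemma pivot_min [NeZero N] {S : Finset (ZMod N)} (h : S.Nonempty) {q : ZMod N} (hq : q ∈ S) :
    (pivot S).val ≤ q.val := by
  rw [pivot, dif_pos h]
  have hle := Finset.min'_le (S.image ZMod.val) q.val (Finset.mem_image_of_mem _ hq)
  have hlt : (S.image ZMod.val).min' (h.image _) < N := by
    have := Finset.min'_mem (S.image ZMod.val) (h.image _)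
    rw [Finset.mem_image] at this
    obtain ⟨r, _, hval⟩ := this
    rw [← hval]; exact ZMod.val_lt r
  rw [ZMod.val_cast_of_lt hlt]
  exact hle

lemma pivot_eq [NeZero N] {S : Finset (ZMod N)} {q : ZMod N} (hq : q ∈ S)
    (hmin : ∀ r ∈ S, q.val ≤ r.val) : pivot S = q := by
  have h : S.Nonempty := ⟨q, hq⟩
  have h1 := pivot_min h hq
  have h2 := hmin _ (pivot_mem h)
  have : (pivot S).val = q.val := le_antisymm h1 h2
  exact ZMod.val_injective _ this

lemma wt_le_lam {A : Finset (ZMod N × ℕ)} {q : ZMod N} {x : ZMod N × ℕ} (hx : x ∈ A) :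
    wt q x ≤ lam A q := Finset.le_sup hx

lemma lam_col_le {A : Finset (ZMod N × ℕ)} {q : ZMod N} {ℓ : ℕ} (h : (q, ℓ) ∈ A) :
    ℓ + 2 ≤ lam A q := by
  have := wt_le_lam (q := q) h
  rw [wt] at this
  simpa using this

lemma lam_adj_le {A : Finset (ZMod N × ℕ)} {q q' : ZMod N} {ℓ : ℕ} (h : (q', ℓ) ∈ A)
    (hadj : q' = q + 1 ∨ q' = q - 1) (hne : q' ≠ q) : ℓ + 1 ≤ lam A q := by
  have := wt_le_lam (q := q) h
  rw [wt] at this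
  simp only [hne, if_false] at this
  simpa [hadj] using this

lemma lam_not_mem {A : Finset (ZMod N × ℕ)} {q : ZMod N} : (q, lam A q) ∉ A := by
  intro h
  have := lam_col_le h
  omega

/-- if `lam ≥ 1` then the new piece has a support. -/
lemma lam_attained {A : Finset (ZMod N × ℕ)} {q : ZMod N} (h : 1 ≤ lam A q) :
    (q - 1, lam A q - 1) ∈ A ∨ (q + 1, lam A q - 1) ∈ A ∨
      (2 ≤ lam A q ∧ (q, lam A q - 2) ∈ A) := by
  have hne : A.Nonempty := by
    rcases A.eq_empty_or_nonempty with rfl | h'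
    · simp [lam] at h
    · exact h'
  obtain ⟨x, hx, hsup⟩ := Finset.exists_mem_eq_sup A hne (wt q)
  rw [lam] at *
  rw [hsup] at h ⊢
  rw [wt] at *
  by_cases h1 : x.1 = q
  · simp only [h1, if_true]
    right; right
    constructor
    · omega
    · have : (x.1, x.2) = (q, x.2 + 2 - 2) := by rw [h1]; simp
      rw [← this]; exact hx
  · simp only [h1, if_false] at h ⊢
    by_cases h2 : x.1 = q + 1 ∨ x.1 = q - 1
    · simp only [h2, if_true]
      rcases h2 with h2 | h2
      · right; left
        have : (x.1, x.2) = (q + 1, x.2 + 1 - 1) := by rw [h2]; simp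
        rw [← this]; exact hx
      · left
        have : (x.1, x.2) = (q - 1, x.2 + 1 - 1) := by rw [h2]; simp
        rw [← this]; exact hx
    · simp [h2] at h

lemma lam_le_of_bounds {A : Finset (ZMod N × ℕ)} {q : ZMod N} {c : ℕ}
    (hcol : ∀ ℓ, (q, ℓ) ∈ A → ℓ + 2 ≤ c)
    (hadj : ∀ q' ℓ, (q' = q + 1 ∨ q' = q - 1) → (q', ℓ) ∈ A → ℓ + 1 ≤ c) :
    lam A q ≤ c := by
  apply Finset.sup_le
  intro x hx
  rw [wt]
  by_cases h1 : x.1 = q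
  · simp only [h1, if_true]
    exact hcol x.2 (by rw [← h1]; exact hx)
  · simp only [h1, if_false]
    by_cases h2 : x.1 = q + 1 ∨ x.1 = q - 1
    · simp only [h2, if_true]
      exact hadj x.1 x.2 h2 (by exact hx)
    · simp [h2]

lemma isActive_topL {A : Finset (ZMod N × ℕ)} {q : ZMod N} {ℓ : ℕ}
    (h : IsActive A q ℓ) : topL A q = ℓ := by
  apply le_antisymm
  · apply Finset.sup_le
    intro x hx
    rw [Finset.mem_filter] at hx
    exact (h.2 x hx.1).1 hx.2
  · have hm : (q, ℓ) ∈ A.filter (fun x => x.1 = q) := by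
      rw [Finset.mem_filter]; exact ⟨h.1, rfl⟩
    exact Finset.le_sup (f := fun x => x.2) hm

lemma isActive_unique {A : Finset (ZMod N × ℕ)} {q : ZMod N} {ℓ ℓ' : ℕ}
    (h : IsActive A q ℓ) (h' : IsActive A q ℓ') : ℓ = ℓ' := by
  have := (h'.2 _ h.1).1 rfl
  have := (h.2 _ h'.1).1 rfl
  omega

lemma mem_actSet_iff [NeZero N] {A : Finset (ZMod N × ℕ)} {T : Finset (ZMod N)} {q : ZMod N} :
    q ∈ ActSet A T ↔
      ((q ∈ T ∧ (q = 0 ∨ 1 ≤ lam A q)) ∨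
       (q ∉ T ∧ q + 1 ∉ T ∧ q - 1 ∉ T ∧ ∃ ℓ, IsActive A q ℓ ∧ (q = 0 ∨ 1 ≤ ℓ))) := by
  rw [ActSet, Finset.mem_filter]
  simp

end Stmt8Aux

namespace Stmt8Aux
open Finset
open scoped Classical

variable {N : ℕ} [NeZero N]

lemma add_one_ne (h2 : 2 ≤ N) (q : ZMod N) : q + 1 ≠ q := by
  haveI : Fact (1 < N) := ⟨h2⟩
  intro h
  have h1 : (1 : ZMod N) = 0 := by
    have := congrArg (fun z => z - q) h
    simpa [add_comm] using this
  exact one_ne_zero h1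

lemma sub_one_ne (h2 : 2 ≤ N) (q : ZMod N) : q - 1 ≠ q := by
  haveI : Fact (1 < N) := ⟨h2⟩
  intro h
  have h1 : (1 : ZMod N) = 0 := by
    have := congrArg (fun z => q - z) h
    simpa [sub_sub_cancel] using this
  exact one_ne_zero h1

lemma caseD (h2 : 2 ≤ N) {A : Finset (ZMod N × ℕ)} {T : Finset (ZMod N)}
    (hA : Anim A) (hT : Ind T) {q₀ : ZMod N}
    (hmem : q₀ ∈ ActSet A T) (hq : q₀ ∈ T) :
    Anim (insert (q₀, lam A q₀) A) ∧
    Ind (T.erase q₀) ∧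
    (q₀, lam A q₀) ∉ A ∧
    q₀ ∈ ActSet (insert (q₀, lam A q₀) A) (T.erase q₀) ∧
    (∀ r ∈ ActSet (insert (q₀, lam A q₀) A) (T.erase q₀), r ≠ q₀ → r ∈ ActSet A T) ∧
    topL (insert (q₀, lam A q₀) A) q₀ = lam A q₀ ∧
    q₀ ∉ T.erase q₀ := by
  have hwit : q₀ = 0 ∨ 1 ≤ lam A q₀ := by
    rw [mem_actSet_iff] at hmem
    rcases hmem with ⟨_, h⟩ | ⟨h, _⟩
    · exact h
    · exact absurd hq h
  set lm := lam A q₀ with hlm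
  have hnotmem : (q₀, lm) ∉ A := lam_not_mem
  have hact' : IsActive (insert (q₀, lm) A) q₀ lm := by
    refine ⟨Finset.mem_insert_self _ _, ?_⟩
    intro x hx
    rcases Finset.mem_insert.mp hx with rfl | hx
    · exact ⟨fun _ => le_refl _, fun _ => le_refl _⟩
    · constructor
      · intro hcol
        have hm : (q₀, x.2) ∈ A := by
          have hx' : x = (q₀, x.2) := by rw [← hcol]
          rw [← hx']; exact hx
        have := lam_col_le hm
        omega
      · intro hadj
        rcases hadj with hadj | hadj
        · have hm : (q₀ + 1, x.2) ∈ A := by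
            have hx' : x = (q₀ + 1, x.2) := by rw [← hadj]
            rw [← hx']; exact hx
          have := lam_adj_le hm (Or.inl rfl) (add_one_ne h2 q₀)
          omega
        · have hm : (q₀ - 1, x.2) ∈ A := by
            have hx' : x = (q₀ - 1, x.2) := by rw [← hadj]
            rw [← hx']; exact hx
          have := lam_adj_le hm (Or.inr rfl) (sub_one_ne h2 q₀)
          omega
  refine ⟨?_, ind_sub (Finset.erase_subset _ _) hT, hnotmem, ?_, ?_, isActive_topL hact',
    Finset.notMem_erase _ _⟩
  · constructor
    · intro x hx h0
      rcases Finset.mem_insert.mp hx with rfl | hx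
      · dsimp only at h0 ⊢
        rcases hwit with h | h
        · exact h
        · omega
      · exact hA.1 x hx h0
    · intro x hx h1
      rcases Finset.mem_insert.mp hx with rfl | hx
      · dsimp only at h1 ⊢
        rcases lam_attained h1 with h | h | ⟨hge, h⟩
        · exact Or.inl (Finset.mem_insert_of_mem h)
        · exact Or.inr (Or.inl (Finset.mem_insert_of_mem h))
        · exact Or.inr (Or.inr ⟨hge, Finset.mem_insert_of_mem h⟩)
      · rcases hA.2 x hx h1 with h | h | ⟨hge, h⟩
        · exact Or.inl (Finset.mem_insert_of_mem h)
        · exact Or.inr (Or.inl (Finset.mem_insert_of_mem h))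
        · exact Or.inr (Or.inr ⟨hge, Finset.mem_insert_of_mem h⟩)
  · rw [mem_actSet_iff]
    right
    refine ⟨Finset.notMem_erase _ _, ?_, ?_, lm, hact', hwit⟩
    · intro h
      exact hT q₀ hq (Finset.mem_of_mem_erase h)
    · intro h
      exact ind_pred hT hq (Finset.mem_of_mem_erase h)
  · intro r hr hrne
    rw [mem_actSet_iff] at hr ⊢
    rcases hr with ⟨hrT, hrw⟩ | ⟨hr1, hr2, hr3, ℓr, hactr, hwitr⟩
    · have hrT' : r ∈ T := Finset.mem_of_mem_erase hrT
      left
      refine ⟨hrT', ?_⟩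
      rcases hrw with h | h
      · exact Or.inl h
      · right
        rw [lam, Finset.sup_insert] at h
        rcases le_or_gt 1 (lam A r) with h' | h'
        · exact h'
        · exfalso
          have hwt : 1 ≤ wt r (q₀, lm) := by
            have hz : lam A r = 0 := by omega
            rw [lam] at hz
            rw [hz] at h
            simpa using h
          rw [wt] at hwt
          dsimp only at hwt
          by_cases hc : q₀ = r
          · exact hrne hc.symm
          · simp only [hc, if_false] at hwt
            by_cases hc2 : q₀ = r + 1 ∨ q₀ = r - 1
            · rcases hc2 with hc2 | hc2
              · exact hT r hrT' (hc2 ▸ hq)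
              · have hmm : r - 1 ∈ T := hc2 ▸ hq
                exact ind_pred hT hrT' hmm
            · simp [hc2] at hwt
    · -- A-side
      have hcolmem : (r, ℓr) ∈ A := by
        rcases Finset.mem_insert.mp hactr.1 with heq | hmem'
        · exfalso
          rw [Prod.mk.injEq] at heq
          exact hrne heq.1
        · exact hmem'
      have hadj_le : (q₀ = r + 1 ∨ q₀ = r - 1) → lm ≤ ℓr := by
        intro h
        have := (hactr.2 (q₀, lm) (Finset.mem_insert_self _ _)).2
        dsimp only at this
        exact this h
      have hq1 : q₀ ≠ r + 1 := by
        intro h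
        have h1 := hadj_le (Or.inl h)
        have hr_eq : r = q₀ - 1 := by rw [h]; ring
        have h3 := lam_adj_le (q := q₀) hcolmem (Or.inr hr_eq) hrne
        rw [← hlm] at h3
        omega
      have hq2 : q₀ ≠ r - 1 := by
        intro h
        have h1 := hadj_le (Or.inr h)
        have hr_eq : r = q₀ + 1 := by rw [h]; ring
        have h3 := lam_adj_le (q := q₀) hcolmem (Or.inl hr_eq) hrne
        rw [← hlm] at h3
        omega
      right
      refine ⟨?_, ?_, ?_, ℓr, ⟨hcolmem, fun x hx => hactr.2 x (Finset.mem_insert_of_mem hx)⟩, hwitr⟩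
      · intro h
        exact hr1 (Finset.mem_erase.mpr ⟨hrne, h⟩)
      · intro h
        exact hr2 (Finset.mem_erase.mpr ⟨fun he => hq1 he.symm, h⟩)
      · intro h
        exact hr3 (Finset.mem_erase.mpr ⟨fun he => hq2 he.symm, h⟩)

end Stmt8Aux

namespace Stmt8Aux
open Finset
open scoped Classical

variable {N : ℕ} [NeZero N]

lemma caseU (h2 : 2 ≤ N) (hd : 2 ∣ N) {A : Finset (ZMod N × ℕ)} {T : Finset (ZMod N)}
    (hA : Anim A) (hT : Ind T) {q₀ : ZMod N}
    (hmem : q₀ ∈ ActSet A T) (hq : q₀ ∉ T) :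
    ∃ ℓ : ℕ,
    topL A q₀ = ℓ ∧ (q₀, ℓ) ∈ A ∧
    Anim (A.erase (q₀, ℓ)) ∧
    Ind (insert q₀ T) ∧
    q₀ ∈ ActSet (A.erase (q₀, ℓ)) (insert q₀ T) ∧
    (∀ r ∈ ActSet (A.erase (q₀, ℓ)) (insert q₀ T), r ≠ q₀ → r ∈ ActSet A T) ∧
    lam (A.erase (q₀, ℓ)) q₀ = ℓ ∧
    q₀ ∈ insert q₀ T := by
  rw [mem_actSet_iff] at hmem
  rcases hmem with ⟨h, _⟩ | ⟨_, hnT1, hnT2, ℓ, hact, hwit⟩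
  · exact absurd h hq
  refine ⟨ℓ, isActive_topL hact, hact.1, ?_, ?_, ?_, ?_, ?_, Finset.mem_insert_self _ _⟩
  -- names
  case _ => -- Anim of erase
    constructor
    · intro x hx h0
      exact hA.1 x (Finset.mem_of_mem_erase hx) h0
    · intro x hx h1
      have hxA : x ∈ A := Finset.mem_of_mem_erase hx
      have hxne : x ≠ (q₀, ℓ) := (Finset.mem_erase.mp hx).1
      rcases hA.2 x hxA h1 with h | h | ⟨hge, h⟩
      · left
        rw [Finset.mem_erase]
        refine ⟨?_, h⟩
        intro heq
        rw [Prod.mk.injEq] at heq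
        have hcol : x.1 = q₀ + 1 := by rw [← heq.1]; ring
        have := (hact.2 x hxA).2 (Or.inl hcol)
        omega
      · right; left
        rw [Finset.mem_erase]
        refine ⟨?_, h⟩
        intro heq
        rw [Prod.mk.injEq] at heq
        have hcol : x.1 = q₀ - 1 := by rw [← heq.1]; ring
        have := (hact.2 x hxA).2 (Or.inr hcol)
        omega
      · right; right
        refine ⟨hge, ?_⟩
        rw [Finset.mem_erase]
        refine ⟨?_, h⟩
        intro heq
        rw [Prod.mk.injEq] at heq
        have := (hact.2 x hxA).1 heq.1
        omega
  case _ => -- Ind of insert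
    intro q hqm
    rcases Finset.mem_insert.mp hqm with rfl | hqm
    · intro hcon
      rcases Finset.mem_insert.mp hcon with heq | hcon
      · exact add_one_ne h2 q heq
      · exact hnT1 hcon
    · intro hcon
      rcases Finset.mem_insert.mp hcon with heq | hcon
      · rw [← heq] at hnT2
        exact hnT2 (by simpa using hqm)
      · exact hT q hqm hcon
  case _ => -- q₀ in new active set
    rw [mem_actSet_iff]
    left
    refine ⟨Finset.mem_insert_self _ _, ?_⟩
    rcases hwit with h | h
    · exact Or.inl h
    · right
      rcases hA.2 (q₀, ℓ) hact.1 (by dsimp only; omega) with hs | hs | ⟨hge, hs⟩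
      · dsimp only at hs
        have hm : (q₀ - 1, ℓ - 1) ∈ A.erase (q₀, ℓ) := by
          rw [Finset.mem_erase]
          refine ⟨?_, hs⟩
          intro heq
          rw [Prod.mk.injEq] at heq
          exact sub_one_ne h2 q₀ heq.1
        have hwt := wt_le_lam (q := q₀) hm
        rw [wt] at hwt
        dsimp only at hwt
        rw [if_neg (sub_one_ne h2 q₀)] at hwt
        rw [if_pos (Or.inr rfl)] at hwt
        omega
      · dsimp only at hs
        have hm : (q₀ + 1, ℓ - 1) ∈ A.erase (q₀, ℓ) := by
          rw [Finset.mem_erase]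
          refine ⟨?_, hs⟩
          intro heq
          rw [Prod.mk.injEq] at heq
          exact add_one_ne h2 q₀ heq.1
        have hwt := wt_le_lam (q := q₀) hm
        rw [wt] at hwt
        dsimp only at hwt
        rw [if_neg (add_one_ne h2 q₀)] at hwt
        rw [if_pos (Or.inl rfl)] at hwt
        omega
      · dsimp only at hs hge
        have hm : (q₀, ℓ - 2) ∈ A.erase (q₀, ℓ) := by
          rw [Finset.mem_erase]
          refine ⟨?_, hs⟩
          intro heq
          rw [Prod.mk.injEq] at heq
          omega
        have hwt := wt_le_lam (q := q₀) hm
        rw [wt] at hwt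
        dsimp only at hwt
        rw [if_pos rfl] at hwt
        omega
  case _ => -- minimality transfer
    intro r hr hrne
    rw [mem_actSet_iff] at hr ⊢
    rcases hr with ⟨hrT, hrw⟩ | ⟨hr1, hr2, hr3, ℓr, hactr, hwitr⟩
    · have hrT' : r ∈ T := by
        rcases Finset.mem_insert.mp hrT with h | h
        · exact absurd h hrne
        · exact h
      left
      refine ⟨hrT', ?_⟩
      rcases hrw with h | h
      · exact Or.inl h
      · right
        have hle : lam (A.erase (q₀, ℓ)) r ≤ lam A r :=
          Finset.sup_mono (Finset.erase_subset _ _)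
        omega
    · have hrq1 : r + 1 ≠ q₀ := by
        intro h
        exact hr2 (Finset.mem_insert.mpr (Or.inl h))
      have hrq2 : r - 1 ≠ q₀ := by
        intro h
        exact hr3 (Finset.mem_insert.mpr (Or.inl h))
      have hrT : r ∉ T := fun h => hr1 (Finset.mem_insert_of_mem h)
      have hrT1 : r + 1 ∉ T := fun h => hr2 (Finset.mem_insert_of_mem h)
      have hrT2 : r - 1 ∉ T := fun h => hr3 (Finset.mem_insert_of_mem h)
      right
      refine ⟨hrT, hrT1, hrT2, ℓr, ⟨Finset.mem_of_mem_erase hactr.1, ?_⟩, hwitr⟩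
      intro x hx
      by_cases hxe : x = (q₀, ℓ)
      · subst hxe
        dsimp only
        constructor
        · intro hcol
          exact absurd hcol.symm hrne
        · intro hadj
          rcases hadj with h | h
          · exact absurd h.symm hrq1
          · exact absurd h.symm hrq2
      · exact hactr.2 x (Finset.mem_erase.mpr ⟨hxe, hx⟩)
  case _ => -- lam of erase equals ℓ
    apply le_antisymm
    · apply lam_le_of_bounds
      · intro ℓ' hm
        have hmA : (q₀, ℓ') ∈ A := Finset.mem_of_mem_erase hm
        have hne' : ℓ' ≠ ℓ := by
          intro h
          exact (Finset.mem_erase.mp hm).1 (by rw [h])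
        have hle := (hact.2 _ hmA).1 rfl
        dsimp only at hle
        have hnsucc : ℓ ≠ ℓ' + 1 := by
          intro h
          exact no_col_succ h2 hd hA hmA hact.1 h
        omega
      · intro q' ℓ' hadj hm
        have hmA : (q', ℓ') ∈ A := Finset.mem_of_mem_erase hm
        have hle := (hact.2 _ hmA).2 (by dsimp only; exact hadj)
        dsimp only at hle
        have hne' : ℓ' ≠ ℓ := by
          intro h
          exact no_adj_same h2 hd hA hact.1 hadj (h ▸ hmA)
        omega
    · rcases Nat.eq_zero_or_pos ℓ with h0 | h1
      · omega
      · rcases hA.2 (q₀, ℓ) hact.1 (by dsimp only; omega) with hs | hs | ⟨hge, hs⟩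
        · dsimp only at hs
          have hm : (q₀ - 1, ℓ - 1) ∈ A.erase (q₀, ℓ) := by
            rw [Finset.mem_erase]
            refine ⟨?_, hs⟩
            intro heq
            rw [Prod.mk.injEq] at heq
            exact sub_one_ne h2 q₀ heq.1
          have hwt := wt_le_lam (q := q₀) hm
          rw [wt] at hwt
          dsimp only at hwt
          rw [if_neg (sub_one_ne h2 q₀), if_pos (Or.inr rfl)] at hwt
          omega
        · dsimp only at hs
          have hm : (q₀ + 1, ℓ - 1) ∈ A.erase (q₀, ℓ) := by
            rw [Finset.mem_erase]
            refine ⟨?_, hs⟩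
            intro heq
            rw [Prod.mk.injEq] at heq
            exact add_one_ne h2 q₀ heq.1
          have hwt := wt_le_lam (q := q₀) hm
          rw [wt] at hwt
          dsimp only at hwt
          rw [if_neg (add_one_ne h2 q₀), if_pos (Or.inl rfl)] at hwt
          omega
        · dsimp only at hs hge
          have hm : (q₀, ℓ - 2) ∈ A.erase (q₀, ℓ) := by
            rw [Finset.mem_erase]
            refine ⟨?_, hs⟩
            intro heq
            rw [Prod.mk.injEq] at heq
            omega
          have hwt := wt_le_lam (q := q₀) hm
          rw [wt] at hwt
          dsimp only at hwt
          rw [if_pos rfl] at hwt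
          omega

end Stmt8Aux

namespace Stmt8Aux
open Finset
open scoped Classical

variable {N : ℕ} [NeZero N]

noncomputable def move (p : Finset (ZMod N × ℕ) × Finset (ZMod N)) :
    Finset (ZMod N × ℕ) × Finset (ZMod N) :=
  if pivot (ActSet p.1 p.2) ∈ p.2 then
    (insert (pivot (ActSet p.1 p.2), lam p.1 (pivot (ActSet p.1 p.2))) p.1,
      p.2.erase (pivot (ActSet p.1 p.2)))
  else
    (p.1.erase (pivot (ActSet p.1 p.2), topL p.1 (pivot (ActSet p.1 p.2))),
      insert (pivot (ActSet p.1 p.2)) p.2)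

theorem move_spec (h2 : 2 ≤ N) (hd : 2 ∣ N) {A : Finset (ZMod N × ℕ)} {T : Finset (ZMod N)}
    (hA : Anim A) (hT : Ind T) (hne : (ActSet A T).Nonempty) :
    Anim (move (A, T)).1 ∧ Ind (move (A, T)).2 ∧
    (move (A, T)).1.card + (move (A, T)).2.card = A.card + T.card ∧
    ((move (A, T)).2.card = T.card + 1 ∨ T.card = (move (A, T)).2.card + 1) ∧
    (ActSet (move (A, T)).1 (move (A, T)).2).Nonempty ∧
    move (move (A, T)) = (A, T) := by
  set q₀ := pivot (ActSet A T) with hq₀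
  have hmemq : q₀ ∈ ActSet A T := pivot_mem hne
  by_cases hq : q₀ ∈ T
  · obtain ⟨hAnim, hInd, hnm, hact0, hmin, htop, hq0ne⟩ := caseD h2 hA hT hmemq hq
    have hmv : move (A, T) = (insert (q₀, lam A q₀) A, T.erase q₀) := by
      rw [move]
      dsimp only
      rw [← hq₀, if_pos hq]
    have hpiv : pivot (ActSet (insert (q₀, lam A q₀) A) (T.erase q₀)) = q₀ := by
      apply pivot_eq hact0
      intro r hr
      by_cases h : r = q₀
      · rw [h]
      · exact pivot_min hne (hmin r hr h)
    have hmv2 : move (insert (q₀, lam A q₀) A, T.erase q₀) = (A, T) := by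
      rw [move]
      dsimp only
      rw [hpiv, if_neg hq0ne, htop, Finset.erase_insert hnm, Finset.insert_erase hq]
    rw [hmv]
    refine ⟨hAnim, hInd, ?_, ?_, ⟨q₀, hact0⟩, hmv2⟩
    · dsimp only
      rw [Finset.card_insert_of_notMem hnm, Finset.card_erase_of_mem hq]
      have : 1 ≤ T.card := Finset.card_pos.mpr ⟨q₀, hq⟩
      omega
    · dsimp only
      rw [Finset.card_erase_of_mem hq]
      have : 1 ≤ T.card := Finset.card_pos.mpr ⟨q₀, hq⟩
      omega
  · obtain ⟨ℓ, htop, hmemA, hAnim, hInd, hact0, hmin, hlam, hmemT'⟩ :=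
      caseU h2 hd hA hT hmemq hq
    have hmv : move (A, T) = (A.erase (q₀, ℓ), insert q₀ T) := by
      rw [move]
      dsimp only
      rw [← hq₀, if_neg hq, htop]
    have hpiv : pivot (ActSet (A.erase (q₀, ℓ)) (insert q₀ T)) = q₀ := by
      apply pivot_eq hact0
      intro r hr
      by_cases h : r = q₀
      · rw [h]
      · exact pivot_min hne (hmin r hr h)
    have hmv2 : move (A.erase (q₀, ℓ), insert q₀ T) = (A, T) := by
      rw [move]
      dsimp only
      rw [hpiv, if_pos hmemT', hlam, Finset.insert_erase hmemA, Finset.erase_insert hq]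
    rw [hmv]
    refine ⟨hAnim, hInd, ?_, ?_, ⟨q₀, hact0⟩, hmv2⟩
    · dsimp only
      rw [Finset.card_erase_of_mem hmemA, Finset.card_insert_of_notMem hq]
      have : 1 ≤ A.card := Finset.card_pos.mpr ⟨_, hmemA⟩
      omega
    · dsimp only
      rw [Finset.card_insert_of_notMem hq]
      omega

lemma actSet_nonempty_left (h2 : 2 ≤ N) {A : Finset (ZMod N × ℕ)} {T : Finset (ZMod N)}
    (hA : Anim A) (hne : A.Nonempty) : (ActSet A T).Nonempty := by
  obtain ⟨x, hx, hmax⟩ := Finset.exists_max_image A (fun y => y.2) hne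
  have hxm : (x.1, x.2) ∈ A := by rw [Prod.mk.eta]; exact hx
  have hact : IsActive A x.1 x.2 :=
    ⟨hxm, fun y hy => ⟨fun _ => hmax y hy, fun _ => hmax y hy⟩⟩
  by_cases h1 : x.1 ∈ T
  · refine ⟨x.1, mem_actSet_iff.mpr (Or.inl ⟨h1, Or.inr ?_⟩)⟩
    have := lam_col_le hxm
    omega
  · by_cases hp : x.1 + 1 ∈ T
    · refine ⟨x.1 + 1, mem_actSet_iff.mpr (Or.inl ⟨hp, Or.inr ?_⟩)⟩
      have hm : (x.1 + 1 - 1, x.2) ∈ A := by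
        simpa using hxm
      have := lam_adj_le hm (Or.inr rfl) (sub_one_ne h2 (x.1 + 1))
      omega
    · by_cases hm' : x.1 - 1 ∈ T
      · refine ⟨x.1 - 1, mem_actSet_iff.mpr (Or.inl ⟨hm', Or.inr ?_⟩)⟩
        have hm : (x.1 - 1 + 1, x.2) ∈ A := by
          simpa using hxm
        have := lam_adj_le hm (Or.inl rfl) (add_one_ne h2 (x.1 - 1))
        omega
      · refine ⟨x.1, mem_actSet_iff.mpr (Or.inr ⟨h1, hp, hm', x.2, hact, ?_⟩)⟩
        rcases Nat.eq_zero_or_pos x.2 with h0 | hpos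
        · exact Or.inl (hA.1 x hx h0)
        · exact Or.inr hpos

lemma fix_char (h2 : 2 ≤ N) {A : Finset (ZMod N × ℕ)} {T : Finset (ZMod N)} (hA : Anim A) :
    (¬ (ActSet A T).Nonempty) ↔ (A = ∅ ∧ 0 ∉ T) := by
  constructor
  · intro h
    constructor
    · by_contra hne
      exact h (actSet_nonempty_left h2 hA (Finset.nonempty_iff_ne_empty.mpr hne))
    · intro h0
      exact h ⟨0, mem_actSet_iff.mpr (Or.inl ⟨h0, Or.inl rfl⟩)⟩
  · rintro ⟨rfl, h0⟩ ⟨q, hqm⟩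
    rw [mem_actSet_iff] at hqm
    rcases hqm with ⟨hqT, hw⟩ | ⟨_, _, _, ℓ, hact, _⟩
    · rcases hw with rfl | hw
      · exact h0 hqT
      · simp [lam] at hw
    · exact absurd hact.1 (Finset.notMem_empty _)

end Stmt8Aux

namespace Stmt8Aux
open Finset
open scoped Classical

variable (N : ℕ) [NeZero N]

noncomputable def box (n : ℕ) : Finset (ZMod N × ℕ) :=
  Finset.univ ×ˢ Finset.range (2 * n + 1)

noncomputable def animF (n : ℕ) : Finset (Finset (ZMod N × ℕ)) :=
  ((box N n).powerset).filter (fun A => Anim A ∧ A.card = n)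

noncomputable def indF (n : ℕ) : Finset (Finset (ZMod N)) :=
  Finset.univ.filter (fun T => Ind T ∧ T.card = n)

noncomputable def indF0 (n : ℕ) : Finset (Finset (ZMod N)) :=
  Finset.univ.filter (fun T => Ind T ∧ (0 : ZMod N) ∉ T ∧ T.card = n)

noncomputable def pairsF (n : ℕ) : Finset (Finset (ZMod N × ℕ) × Finset (ZMod N)) :=
  (((box N n).powerset) ×ˢ (Finset.univ : Finset (Finset (ZMod N)))).filter
    (fun p => Anim p.1 ∧ Ind p.2 ∧ p.1.card + p.2.card = n)

variable {N}

lemma subset_box {A : Finset (ZMod N × ℕ)} {n : ℕ} (hA : Anim A) (hc : A.card ≤ n) :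
    A ⊆ box N n := by
  intro x hx
  rw [box, Finset.mem_product]
  refine ⟨Finset.mem_univ _, ?_⟩
  rw [Finset.mem_range]
  have hxm : (x.1, x.2) ∈ A := by rw [Prod.mk.eta]; exact hx
  have := anim_level_bound hA x.2 x.1 hxm
  omega

lemma mem_pairsF {p : Finset (ZMod N × ℕ) × Finset (ZMod N)} {n : ℕ} :
    p ∈ pairsF N n ↔ p.1 ⊆ box N n ∧ Anim p.1 ∧ Ind p.2 ∧ p.1.card + p.2.card = n := by
  rw [pairsF, Finset.mem_filter, Finset.mem_product, Finset.mem_powerset]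
  simp only [Finset.mem_univ, and_true]

theorem sum_moving (h2 : 2 ≤ N) (hd : 2 ∣ N) (n : ℕ) :
    ∑ p ∈ (pairsF N n).filter (fun p => (ActSet p.1 p.2).Nonempty),
      (-1 : ℤ) ^ p.2.card = 0 := by
  have key : ∀ p, p ∈ (pairsF N n).filter (fun p => (ActSet p.1 p.2).Nonempty) →
      (move p ∈ (pairsF N n).filter (fun p => (ActSet p.1 p.2).Nonempty)) ∧
      ((-1 : ℤ) ^ p.2.card + (-1 : ℤ) ^ (move p).2.card = 0) ∧
      move p ≠ p ∧ move (move p) = p := by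
    intro p hp
    rw [Finset.mem_filter, mem_pairsF] at hp
    obtain ⟨⟨hbox, hA, hT, hcard⟩, hne⟩ := hp
    have hps := move_spec h2 hd hA hT hne
    rw [Prod.mk.eta] at hps
    refine ⟨?_, ?_, ?_, hps.2.2.2.2.2⟩
    · rw [Finset.mem_filter, mem_pairsF]
      refine ⟨⟨?_, hps.1, hps.2.1, by omega⟩, hps.2.2.2.2.1⟩
      exact subset_box hps.1 (by omega)
    · rcases hps.2.2.2.1 with h | h
      · rw [h, pow_succ]; ring
      · rw [h, pow_succ]; ring
    · intro he
      have hcc := congrArg (fun x => x.2.card) he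
      rcases hps.2.2.2.1 with h | h
      · omega
      · omega
  exact Finset.sum_involution (fun p hp => move p)
    (fun p hp => (key p hp).2.1)
    (fun p hp _ => (key p hp).2.2.1)
    (fun p hp => (key p hp).1)
    (fun p hp => (key p hp).2.2.2)

theorem sum_fixed (h2 : 2 ≤ N) (n : ℕ) :
    ∑ p ∈ (pairsF N n).filter (fun p => ¬ (ActSet p.1 p.2).Nonempty),
      (-1 : ℤ) ^ p.2.card = (-1) ^ n * ((indF0 N n).card : ℤ) := by
  have hset : (pairsF N n).filter (fun p => ¬ (ActSet p.1 p.2).Nonempty)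
      = (indF0 N n).image (fun T => (∅, T)) := by
    ext p
    rw [Finset.mem_filter, mem_pairsF, Finset.mem_image]
    constructor
    · rintro ⟨⟨hbox, hA, hT, hcard⟩, hne⟩
      have := (fix_char h2 hA).mp hne
      refine ⟨p.2, ?_, ?_⟩
      · rw [indF0, Finset.mem_filter]
        have hc : p.1.card = 0 := by rw [this.1]; simp
        exact ⟨Finset.mem_univ _, hT, this.2, by omega⟩
      · rw [← this.1, Prod.mk.eta]
    · rintro ⟨T, hTm, rfl⟩
      rw [indF0, Finset.mem_filter] at hTm
      have hAe : Anim (∅ : Finset (ZMod N × ℕ)) := ⟨by simp, by simp⟩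
      refine ⟨⟨Finset.empty_subset _, hAe, hTm.2.1, by simpa using hTm.2.2.2⟩, ?_⟩
      rw [fix_char h2 hAe]
      exact ⟨rfl, hTm.2.2.1⟩
  rw [hset, Finset.sum_image (by intro a _ b _ h; exact (Prod.mk.injEq _ _ _ _ ▸ h : _ ∧ _).2)]
  have : ∀ T ∈ indF0 N n, (-1 : ℤ) ^ T.card = (-1) ^ n := by
    intro T hT
    rw [indF0, Finset.mem_filter] at hT
    rw [hT.2.2.2]
  rw [Finset.sum_congr rfl (fun T hT => this T hT), Finset.sum_const, nsmul_eq_mul]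
  ring

theorem main_id (h2 : 2 ≤ N) (hd : 2 ∣ N) (n : ℕ) :
    ∑ p ∈ pairsF N n, (-1 : ℤ) ^ p.2.card = (-1) ^ n * ((indF0 N n).card : ℤ) := by
  rw [← Finset.sum_filter_add_sum_filter_not (pairsF N n)
    (fun p => (ActSet p.1 p.2).Nonempty), sum_moving h2 hd n, sum_fixed h2 n, zero_add]

theorem pairs_sum_eq (n : ℕ) :
    ∑ p ∈ pairsF N n, (-1 : ℤ) ^ p.2.card
      = ∑ kl ∈ Finset.HasAntidiagonal.antidiagonal n,
          ((animF N kl.1).card : ℤ) * ((-1) ^ kl.2 * ((indF N kl.2).card : ℤ)) := by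
  have hbi : pairsF N n = (Finset.HasAntidiagonal.antidiagonal n).biUnion
      (fun kl => (animF N kl.1) ×ˢ (indF N kl.2)) := by
    ext p
    rw [mem_pairsF, Finset.mem_biUnion]
    constructor
    · rintro ⟨hbox, hA, hT, hcard⟩
      refine ⟨(p.1.card, p.2.card), ?_, ?_⟩
      · rw [Finset.HasAntidiagonal.mem_antidiagonal]; exact hcard
      · rw [Finset.mem_product]
        constructor
        · rw [animF, Finset.mem_filter, Finset.mem_powerset]
          exact ⟨subset_box hA (le_refl _), hA, rfl⟩
        · rw [indF, Finset.mem_filter]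
          exact ⟨Finset.mem_univ _, hT, rfl⟩
    · rintro ⟨kl, hkl, hm⟩
      rw [Finset.HasAntidiagonal.mem_antidiagonal] at hkl
      rw [Finset.mem_product, animF, indF, Finset.mem_filter, Finset.mem_filter,
        Finset.mem_powerset] at hm
      obtain ⟨⟨_, hA, hc1⟩, _, hT, hc2⟩ := hm
      exact ⟨subset_box hA (by omega), hA, hT, by omega⟩
  have hdisj : (↑(Finset.HasAntidiagonal.antidiagonal n) : Set (ℕ × ℕ)).PairwiseDisjoint
      (fun kl => (animF N kl.1) ×ˢ (indF N kl.2)) := by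
    intro kl hkl kl' hkl' hne
    simp only [Function.onFun]
    rw [Finset.disjoint_left]
    intro p hp hp'
    rw [Finset.mem_product, animF, indF, Finset.mem_filter, Finset.mem_filter] at hp hp'
    apply hne
    have h1 := hp.1.2.2
    have h2 := hp.2.2.2
    have h1' := hp'.1.2.2
    have h2' := hp'.2.2.2
    have e1 : kl.1 = kl'.1 := by omega
    have e2 : kl.2 = kl'.2 := by omega
    exact Prod.ext e1 e2
  rw [hbi, Finset.sum_biUnion hdisj]
  apply Finset.sum_congr rfl
  intro kl _
  rw [Finset.sum_product]
  have hinner : ∀ A ∈ animF N kl.1,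
      ∑ T ∈ indF N kl.2, (-1 : ℤ) ^ T.card = (-1) ^ kl.2 * ((indF N kl.2).card : ℤ) := by
    intro A _
    have hcst : ∀ T ∈ indF N kl.2, (-1 : ℤ) ^ T.card = (-1) ^ kl.2 := by
      intro T hT
      rw [indF, Finset.mem_filter] at hT
      rw [hT.2.2]
    rw [Finset.sum_congr rfl hcst, Finset.sum_const, nsmul_eq_mul]
    ring
  rw [Finset.sum_congr rfl hinner, Finset.sum_const, nsmul_eq_mul]

end Stmt8Aux

namespace Stmt8Aux
open Finset
open scoped Classical

/-- independent sets in the path with `k` vertices `0,…,k-1`. -/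
noncomputable def pathF (k n : ℕ) : Finset (Finset ℕ) :=
  ((Finset.range k).powerset).filter (fun S => (∀ i ∈ S, i + 1 ∉ S) ∧ S.card = n)

lemma mem_pathF {k n : ℕ} {S : Finset ℕ} :
    S ∈ pathF k n ↔ S ⊆ Finset.range k ∧ (∀ i ∈ S, i + 1 ∉ S) ∧ S.card = n := by
  rw [pathF, Finset.mem_filter, Finset.mem_powerset]

lemma pathF_zero (k : ℕ) : pathF k 0 = {∅} := by
  ext S
  rw [mem_pathF, Finset.mem_singleton]
  constructor
  · rintro ⟨_, _, hc⟩
    exact Finset.card_eq_zero.mp hc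
  · rintro rfl
    exact ⟨Finset.empty_subset _, by simp, rfl⟩

lemma pathF_zero_card (k : ℕ) : (pathF k 0).card = 1 := by rw [pathF_zero]; rfl

lemma pathF_nil {n : ℕ} (hn : 1 ≤ n) : (pathF 0 n).card = 0 := by
  rw [Finset.card_eq_zero]
  ext S
  rw [mem_pathF]
  simp only [Finset.range_zero, Finset.subset_empty, Finset.notMem_empty, iff_false]
  rintro ⟨rfl, _, hc⟩
  simp at hc
  omega

lemma pathF_one {n : ℕ} (hn : 2 ≤ n) : (pathF 1 n).card = 0 := by
  rw [Finset.card_eq_zero]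
  ext S
  rw [mem_pathF]
  simp only [Finset.notMem_empty, iff_false]
  rintro ⟨hsub, _, hc⟩
  have := Finset.card_le_card hsub
  simp at this
  omega

lemma pathF_one_one : (pathF 1 1).card = 1 := by
  have : pathF 1 1 = {{0}} := by
    ext S
    rw [mem_pathF, Finset.mem_singleton]
    constructor
    · rintro ⟨hsub, _, hc⟩
      obtain ⟨a, ha⟩ := Finset.card_eq_one.mp hc
      subst ha
      have := hsub (Finset.mem_singleton_self a)
      simp only [Finset.range_one, Finset.mem_singleton] at this
      rw [this]
    · rintro rfl
      refine ⟨?_, ?_, rfl⟩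
      · intro i hi
        simp only [Finset.mem_singleton] at hi
        simp [hi]
      · intro i hi
        simp only [Finset.mem_singleton] at hi ⊢
        omega
  rw [this]; rfl

lemma pathF_rec (k n : ℕ) (hn : 1 ≤ n) :
    (pathF (k + 2) n).card = (pathF (k + 1) n).card + (pathF k (n - 1)).card := by
  have hsplit := Finset.card_filter_add_card_filter_not
    (s := pathF (k + 2) n) (p := fun S => (k + 1) ∈ S)
  have h1 : (pathF (k + 2) n).filter (fun S => ¬ (k + 1) ∈ S) = pathF (k + 1) n := by
    ext S
    rw [Finset.mem_filter, mem_pathF, mem_pathF]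
    constructor
    · rintro ⟨⟨hsub, hadj, hc⟩, hnotin⟩
      refine ⟨?_, hadj, hc⟩
      intro i hi
      have := hsub hi
      rw [Finset.mem_range] at this ⊢
      have : i ≠ k + 1 := fun h => hnotin (h ▸ hi)
      omega
    · rintro ⟨hsub, hadj, hc⟩
      have hk1 : (k + 1) ∉ S := by
        intro h
        have := hsub h
        rw [Finset.mem_range] at this
        omega
      refine ⟨⟨?_, hadj, hc⟩, hk1⟩
      intro i hi
      have := hsub hi
      rw [Finset.mem_range] at this ⊢
      omega
  have h2 : ((pathF (k + 2) n).filter (fun S => (k + 1) ∈ S)).card = (pathF k (n - 1)).card := by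
    have hi : ∀ S, S ∈ (pathF (k + 2) n).filter (fun S => (k + 1) ∈ S) →
        S.erase (k + 1) ∈ pathF k (n - 1) := by
      intro S hS
      rw [Finset.mem_filter, mem_pathF] at hS
      obtain ⟨⟨hsub, hadj, hc⟩, hin⟩ := hS
      rw [mem_pathF]
      have hknotin : k ∉ S := by
        intro hk
        exact hadj k hk hin
      refine ⟨?_, ?_, ?_⟩
      · intro i hi
        rw [Finset.mem_erase] at hi
        have := hsub hi.2
        rw [Finset.mem_range] at this ⊢
        have : i ≠ k := fun h => hknotin (h ▸ hi.2)
        omega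
      · intro i hi
        rw [Finset.mem_erase] at hi
        intro hcon
        rw [Finset.mem_erase] at hcon
        exact hadj i hi.2 hcon.2
      · rw [Finset.card_erase_of_mem hin, hc]
    have hj : ∀ R, R ∈ pathF k (n - 1) →
        insert (k + 1) R ∈ (pathF (k + 2) n).filter (fun S => (k + 1) ∈ S) := by
      intro R hR
      rw [mem_pathF] at hR
      obtain ⟨hsub, hadj, hc⟩ := hR
      have hknotin : (k + 1) ∉ R := by
        intro h
        have := hsub h
        rw [Finset.mem_range] at this
        omega
      rw [Finset.mem_filter, mem_pathF]
      refine ⟨⟨?_, ?_, ?_⟩, Finset.mem_insert_self _ _⟩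
      · intro i hi
        rcases Finset.mem_insert.mp hi with rfl | hi
        · rw [Finset.mem_range]; omega
        · have := hsub hi
          rw [Finset.mem_range] at this ⊢
          omega
      · intro i hi
        rcases Finset.mem_insert.mp hi with rfl | hi
        · intro hcon
          rcases Finset.mem_insert.mp hcon with h | h
          · omega
          · have := hsub h
            rw [Finset.mem_range] at this
            omega
        · intro hcon
          rcases Finset.mem_insert.mp hcon with h | h
          · have := hsub hi
            rw [Finset.mem_range] at this
            omega
          · exact hadj i hi h
      · rw [Finset.card_insert_of_notMem hknotin, hc]
        omega
    have li : ∀ S, S ∈ (pathF (k + 2) n).filter (fun S => (k + 1) ∈ S) →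
        insert (k + 1) (S.erase (k + 1)) = S := by
      intro S hS
      rw [Finset.mem_filter] at hS
      exact Finset.insert_erase hS.2
    have ri : ∀ R, R ∈ pathF k (n - 1) → (insert (k + 1) R).erase (k + 1) = R := by
      intro R hR
      rw [mem_pathF] at hR
      apply Finset.erase_insert
      intro h
      have := hR.1 h
      rw [Finset.mem_range] at this
      omega
    exact Finset.card_bij' (fun S _ => S.erase (k + 1)) (fun R _ => insert (k + 1) R)
      (fun S hS => hi S hS) (fun R hR => hj R hR) (fun S hS => li S hS) (fun R hR => ri R hR)
  have h1c : ((pathF (k + 2) n).filter (fun S => ¬ (k + 1) ∈ S)).card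
      = (pathF (k + 1) n).card := by rw [h1]
  omega

lemma Tnat_coeff : ∀ k n : ℕ, (Tnat (k + 1)).coeff n = (-1 : ℤ) ^ n * ((pathF k n).card : ℤ) := by
  intro k
  induction k using Nat.strong_induction_on with
  | _ k ih =>
    intro n
    match k with
    | 0 =>
      show (Tnat 1).coeff n = _
      rw [Tnat]
      rcases Nat.eq_zero_or_pos n with rfl | hn
      · simp [pathF_zero_card]
      · rw [Polynomial.coeff_one, if_neg (by omega), pathF_nil hn]
        simp
    | 1 =>
      show (Tnat 2).coeff n = _
      have ht : Tnat 2 = 1 - Polynomial.X := by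
        rw [show Tnat 2 = Tnat 1 - Polynomial.X * Tnat 0 from rfl, Tnat, Tnat, mul_one]
      rw [ht]
      match n with
      | 0 => rw [pathF_zero_card]; simp
      | 1 =>
        rw [pathF_one_one, Polynomial.coeff_sub, Polynomial.coeff_one, if_neg one_ne_zero,
          Polynomial.coeff_X_one]
        simp
      | (j + 2) =>
        rw [pathF_one (by omega)]
        rw [Polynomial.coeff_sub, Polynomial.coeff_one, Polynomial.coeff_X,
          if_neg (by omega), if_neg (by omega)]
        simp
    | (j + 2) =>
      show (Tnat (j + 3)).coeff n = _
      rw [show Tnat (j + 3) = Tnat (j + 2) - Polynomial.X * Tnat (j + 1) from rfl]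
      rw [Polynomial.coeff_sub]
      match n with
      | 0 =>
        rw [ih (j + 1) (by omega) 0]
        have : (Polynomial.X * Tnat (j + 1)).coeff 0 = 0 := by
          rw [Polynomial.mul_coeff_zero, Polynomial.coeff_X_zero, zero_mul]
        rw [this, pathF_zero_card, pathF_zero_card]
        simp
      | (i + 1) =>
        rw [Polynomial.coeff_X_mul, ih (j + 1) (by omega) (i + 1), ih j (by omega) i]
        rw [pathF_rec j (i + 1) (by omega)]
        have : (i + 1) - 1 = i := by omega
        rw [this]
        push_cast
        ring

end Stmt8Aux

namespace Stmt8Aux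
open Finset
open scoped Classical

variable {N : ℕ} [NeZero N]

lemma val_pos {q : ZMod N} (h : q ≠ 0) : 1 ≤ q.val := by
  have := (ZMod.val_eq_zero q).not.mpr h
  omega

lemma cast_val (q : ZMod N) : ((q.val : ℕ) : ZMod N) = q := ZMod.natCast_rightInverse q

lemma val_succ_eq (h2 : 2 ≤ N) {q q' : ZMod N} (h : q'.val = q.val + 1) : q' = q + 1 := by
  apply ZMod.val_injective
  rw [h, val_add_one _ h2]
  have := ZMod.val_lt q'
  rw [Nat.mod_eq_of_lt (by omega)]

lemma indF0_card (h2 : 2 ≤ N) (n : ℕ) : (indF0 N n).card = (pathF (N - 1) n).card := by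
  have hi : ∀ T, T ∈ indF0 N n → T.image (fun q => q.val - 1) ∈ pathF (N - 1) n := by
    intro T hT
    rw [indF0, Finset.mem_filter] at hT
    obtain ⟨-, hInd, h0, hc⟩ := hT
    have hval : ∀ q ∈ T, 1 ≤ q.val ∧ q.val < N := by
      intro q hq
      exact ⟨val_pos (fun h => h0 (h ▸ hq)), ZMod.val_lt q⟩
    rw [mem_pathF]
    refine ⟨?_, ?_, ?_⟩
    · intro i hi
      rw [Finset.mem_image] at hi
      obtain ⟨q, hq, rfl⟩ := hi
      rw [Finset.mem_range]
      have := hval q hq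
      omega
    · intro i hi hcon
      rw [Finset.mem_image] at hi hcon
      obtain ⟨q, hq, hq1⟩ := hi
      obtain ⟨q', hq', hq'1⟩ := hcon
      have h1 := hval q hq
      have h2' := hval q' hq'
      have hvv : q'.val = q.val + 1 := by omega
      have : q' = q + 1 := val_succ_eq h2 hvv
      exact hInd q hq (this ▸ hq')
    · rw [Finset.card_image_of_injOn, hc]
      intro q hq q' hq' he
      have h1 := hval q hq
      have h2' := hval q' hq'
      dsimp only at he
      apply ZMod.val_injective
      omega
  have hj : ∀ S, S ∈ pathF (N - 1) n →
      S.image (fun i => ((i + 1 : ℕ) : ZMod N)) ∈ indF0 N n := by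
    intro S hS
    rw [mem_pathF] at hS
    obtain ⟨hsub, hadj, hc⟩ := hS
    have hlt : ∀ i ∈ S, i + 1 < N := by
      intro i hi
      have := hsub hi
      rw [Finset.mem_range] at this
      omega
    rw [indF0, Finset.mem_filter]
    refine ⟨Finset.mem_univ _, ?_, ?_, ?_⟩
    · intro q hq hcon
      rw [Finset.mem_image] at hq hcon
      obtain ⟨i, hiS, rfl⟩ := hq
      obtain ⟨j, hjS, hj1⟩ := hcon
      have hcast : ((i + 1 : ℕ) : ZMod N) + 1 = ((i + 2 : ℕ) : ZMod N) := by push_cast; ring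
      rw [hcast] at hj1
      have hv1 : ((j + 1 : ℕ) : ZMod N).val = j + 1 := ZMod.val_cast_of_lt (hlt j hjS)
      have hv2 : ((i + 2 : ℕ) : ZMod N).val = (i + 2) % N := ZMod.val_natCast N _
      rw [← hj1, hv1] at hv2
      have hile : i + 2 ≤ N := by have := hlt i hiS; omega
      rcases eq_or_lt_of_le hile with he | hl
      · rw [← he, Nat.mod_self] at hv2
        omega
      · rw [Nat.mod_eq_of_lt hl] at hv2
        have : j = i + 1 := by omega
        exact hadj i hiS (this ▸ hjS)
    · intro hcon
      rw [Finset.mem_image] at hcon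
      obtain ⟨i, hiS, hi1⟩ := hcon
      have := ZMod.val_cast_of_lt (hlt i hiS)
      rw [hi1, ZMod.val_zero] at this
      omega
    · rw [Finset.card_image_of_injOn, hc]
      intro i hiS j hjS he
      dsimp only at he
      have h1 := ZMod.val_cast_of_lt (hlt i hiS)
      have h2' := ZMod.val_cast_of_lt (hlt j hjS)
      rw [he] at h1
      omega
  have li : ∀ T, T ∈ indF0 N n →
      (T.image (fun q => q.val - 1)).image (fun i => ((i + 1 : ℕ) : ZMod N)) = T := by
    intro T hT
    rw [indF0, Finset.mem_filter] at hT
    obtain ⟨-, hInd, h0, hc⟩ := hT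
    rw [Finset.image_image]
    ext q
    rw [Finset.mem_image]
    constructor
    · rintro ⟨q', hq', rfl⟩
      have h1 : 1 ≤ q'.val := val_pos (fun h => h0 (h ▸ hq'))
      have : q'.val - 1 + 1 = q'.val := by omega
      simp only [Function.comp]
      rw [this, cast_val]
      exact hq'
    · intro hq
      refine ⟨q, hq, ?_⟩
      have h1 : 1 ≤ q.val := val_pos (fun h => h0 (h ▸ hq))
      simp only [Function.comp]
      have : q.val - 1 + 1 = q.val := by omega
      rw [this, cast_val]
  have ri : ∀ S, S ∈ pathF (N - 1) n →
      (S.image (fun i => ((i + 1 : ℕ) : ZMod N))).image (fun q => q.val - 1) = S := by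
    intro S hS
    rw [mem_pathF] at hS
    obtain ⟨hsub, hadj, hc⟩ := hS
    have hlt : ∀ i ∈ S, i + 1 < N := by
      intro i hi
      have := hsub hi
      rw [Finset.mem_range] at this
      omega
    rw [Finset.image_image]
    ext i
    rw [Finset.mem_image]
    constructor
    · rintro ⟨j, hj, rfl⟩
      simp only [Function.comp]
      rw [ZMod.val_cast_of_lt (hlt j hj)]
      simpa using hj
    · intro hiS
      refine ⟨i, hiS, ?_⟩
      simp only [Function.comp]
      rw [ZMod.val_cast_of_lt (hlt i hiS)]
      omega
  exact Finset.card_bij' (fun T _ => T.image (fun q => q.val - 1))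
    (fun S _ => S.image (fun i => ((i + 1 : ℕ) : ZMod N)))
    (fun T hT => hi T hT) (fun S hS => hj S hS) (fun T hT => li T hT) (fun S hS => ri S hS)

end Stmt8Aux

namespace Stmt8Aux
open Finset
open scoped Classical

variable {N : ℕ} [NeZero N]

lemma neg_one_eq_cast (h2 : 2 ≤ N) : ((N - 1 : ℕ) : ZMod N) = -1 := by
  have h1 : 1 ≤ N := by omega
  push_cast [Nat.cast_sub h1]
  rw [ZMod.natCast_self]
  ring

lemma indF_with_zero_card (h2 : 2 ≤ N) (n : ℕ) (hn : 1 ≤ n) :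
    ((indF N n).filter (fun T => (0 : ZMod N) ∈ T)).card = (pathF (N - 3) (n - 1)).card := by
  have hi : ∀ T, T ∈ (indF N n).filter (fun T => (0 : ZMod N) ∈ T) →
      (T.erase 0).image (fun q => q.val - 2) ∈ pathF (N - 3) (n - 1) := by
    intro T hT
    rw [Finset.mem_filter, indF, Finset.mem_filter] at hT
    obtain ⟨⟨-, hInd, hc⟩, h0⟩ := hT
    have hone : (1 : ZMod N) ∉ T := by
      have := hInd 0 h0
      simpa using this
    have hneg : (-1 : ZMod N) ∉ T := by
      have := ind_pred hInd h0
      simpa using this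
    have hval : ∀ q ∈ T.erase 0, 2 ≤ q.val ∧ q.val ≤ N - 2 := by
      intro q hq
      rw [Finset.mem_erase] at hq
      have hv1 : 1 ≤ q.val := val_pos hq.1
      have hv2 : q.val < N := ZMod.val_lt q
      have hne1 : q.val ≠ 1 := by
        intro h
        have : q = 1 := by
          have := cast_val q
          rw [h] at this
          simpa using this.symm
        exact hone (this ▸ hq.2)
      have hneN : q.val ≠ N - 1 := by
        intro h
        have : q = -1 := by
          have := cast_val q
          rw [h, neg_one_eq_cast h2] at this
          exact this.symm
        exact hneg (this ▸ hq.2)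
      omega
    rw [mem_pathF]
    refine ⟨?_, ?_, ?_⟩
    · intro i hi
      rw [Finset.mem_image] at hi
      obtain ⟨q, hq, rfl⟩ := hi
      rw [Finset.mem_range]
      have := hval q hq
      have := ZMod.val_lt q
      omega
    · intro i hi hcon
      rw [Finset.mem_image] at hi hcon
      obtain ⟨q, hq, hq1⟩ := hi
      obtain ⟨q', hq', hq'1⟩ := hcon
      have h1 := hval q hq
      have h2' := hval q' hq'
      have hvv : q'.val = q.val + 1 := by omega
      have heq : q' = q + 1 := val_succ_eq h2 hvv
      exact hInd q (Finset.mem_of_mem_erase hq) (heq ▸ Finset.mem_of_mem_erase hq')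
    · rw [Finset.card_image_of_injOn, Finset.card_erase_of_mem h0, hc]
      intro q hq q' hq' he
      have h1 := hval q hq
      have h2' := hval q' hq'
      dsimp only at he
      apply ZMod.val_injective
      omega
  have hj : ∀ R, R ∈ pathF (N - 3) (n - 1) →
      insert (0 : ZMod N) (R.image (fun i => ((i + 2 : ℕ) : ZMod N)))
        ∈ (indF N n).filter (fun T => (0 : ZMod N) ∈ T) := by
    intro R hR
    rw [mem_pathF] at hR
    obtain ⟨hsub, hadj, hc⟩ := hR
    have hlt : ∀ i ∈ R, i + 2 < N - 1 := by
      intro i hi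
      have := hsub hi
      rw [Finset.mem_range] at this
      omega
    have h0notin : (0 : ZMod N) ∉ R.image (fun i => ((i + 2 : ℕ) : ZMod N)) := by
      intro hcon
      rw [Finset.mem_image] at hcon
      obtain ⟨i, hiR, hi1⟩ := hcon
      have := ZMod.val_cast_of_lt (show i + 2 < N by have := hlt i hiR; omega)
      rw [hi1, ZMod.val_zero] at this
      omega
    rw [Finset.mem_filter, indF, Finset.mem_filter]
    refine ⟨⟨Finset.mem_univ _, ?_, ?_⟩, Finset.mem_insert_self _ _⟩
    · -- Ind
      intro q hq hcon
      rcases Finset.mem_insert.mp hq with rfl | hq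
      · rcases Finset.mem_insert.mp hcon with h | h
        · exact add_one_ne h2 0 h
        · rw [Finset.mem_image] at h
          obtain ⟨i, hiR, hi1⟩ := h
          haveI : Fact (1 < N) := ⟨h2⟩
          have := ZMod.val_cast_of_lt (show i + 2 < N by have := hlt i hiR; omega)
          rw [hi1, zero_add, ZMod.val_one] at this
          omega
      · rw [Finset.mem_image] at hq
        obtain ⟨i, hiR, rfl⟩ := hq
        have hcast : ((i + 2 : ℕ) : ZMod N) + 1 = ((i + 3 : ℕ) : ZMod N) := by push_cast; ring
        rw [hcast] at hcon
        have hv3 : ((i + 3 : ℕ) : ZMod N).val = i + 3 :=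
          ZMod.val_cast_of_lt (by have := hlt i hiR; omega)
        rcases Finset.mem_insert.mp hcon with h | h
        · rw [h, ZMod.val_zero] at hv3
          omega
        · rw [Finset.mem_image] at h
          obtain ⟨j, hjR, hj1⟩ := h
          have hvj : ((j + 2 : ℕ) : ZMod N).val = j + 2 :=
            ZMod.val_cast_of_lt (by have := hlt j hjR; omega)
          rw [hj1] at hvj
          rw [hvj] at hv3
          have : j = i + 1 := by omega
          exact hadj i hiR (this ▸ hjR)
    · -- card
      rw [Finset.card_insert_of_notMem h0notin, Finset.card_image_of_injOn, hc]
      · omega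
      · intro i hiR j hjR he
        dsimp only at he
        have h1 := ZMod.val_cast_of_lt (show i + 2 < N by have := hlt i hiR; omega)
        have h2' := ZMod.val_cast_of_lt (show j + 2 < N by have := hlt j hjR; omega)
        rw [he] at h1
        omega
  have li : ∀ T, T ∈ (indF N n).filter (fun T => (0 : ZMod N) ∈ T) →
      insert (0 : ZMod N) (((T.erase 0).image (fun q => q.val - 2)).image
        (fun i => ((i + 2 : ℕ) : ZMod N))) = T := by
    intro T hT
    rw [Finset.mem_filter, indF, Finset.mem_filter] at hT
    obtain ⟨⟨-, hInd, hc⟩, h0⟩ := hT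
    have hone : (1 : ZMod N) ∉ T := by
      have := hInd 0 h0
      simpa using this
    have himg : ((T.erase 0).image (fun q => q.val - 2)).image
        (fun i => ((i + 2 : ℕ) : ZMod N)) = T.erase 0 := by
      rw [Finset.image_image]
      ext q
      rw [Finset.mem_image]
      constructor
      · rintro ⟨q', hq', rfl⟩
        rw [Finset.mem_erase] at hq'
        have hv1 : 1 ≤ q'.val := val_pos hq'.1
        have hne1 : q'.val ≠ 1 := by
          intro h
          have : q' = 1 := by
            have := cast_val q'
            rw [h] at this
            simpa using this.symm
          exact hone (this ▸ hq'.2)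
        simp only [Function.comp]
        have : q'.val - 2 + 2 = q'.val := by omega
        rw [this, cast_val]
        rw [Finset.mem_erase]
        exact hq'
      · intro hq
        refine ⟨q, hq, ?_⟩
        rw [Finset.mem_erase] at hq
        have hv1 : 1 ≤ q.val := val_pos hq.1
        have hne1 : q.val ≠ 1 := by
          intro h
          have : q = 1 := by
            have := cast_val q
            rw [h] at this
            simpa using this.symm
          exact hone (this ▸ hq.2)
        simp only [Function.comp]
        have : q.val - 2 + 2 = q.val := by omega
        rw [this, cast_val]
    rw [himg, Finset.insert_erase h0]
  have ri : ∀ R, R ∈ pathF (N - 3) (n - 1) →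
      ((insert (0 : ZMod N) (R.image (fun i => ((i + 2 : ℕ) : ZMod N)))).erase 0).image
        (fun q => q.val - 2) = R := by
    intro R hR
    rw [mem_pathF] at hR
    obtain ⟨hsub, hadj, hc⟩ := hR
    have hlt : ∀ i ∈ R, i + 2 < N := by
      intro i hi
      have := hsub hi
      rw [Finset.mem_range] at this
      omega
    have h0notin : (0 : ZMod N) ∉ R.image (fun i => ((i + 2 : ℕ) : ZMod N)) := by
      intro hcon
      rw [Finset.mem_image] at hcon
      obtain ⟨i, hiR, hi1⟩ := hcon
      have := ZMod.val_cast_of_lt (hlt i hiR)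
      rw [hi1, ZMod.val_zero] at this
      omega
    rw [Finset.erase_insert h0notin, Finset.image_image]
    ext i
    rw [Finset.mem_image]
    constructor
    · rintro ⟨j, hj, rfl⟩
      simp only [Function.comp]
      rw [ZMod.val_cast_of_lt (hlt j hj)]
      simpa using hj
    · intro hiR
      refine ⟨i, hiR, ?_⟩
      simp only [Function.comp]
      rw [ZMod.val_cast_of_lt (hlt i hiR)]
      omega
  exact Finset.card_bij' (fun T _ => (T.erase 0).image (fun q => q.val - 2))
    (fun R _ => insert (0 : ZMod N) (R.image (fun i => ((i + 2 : ℕ) : ZMod N))))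
    (fun T hT => hi T hT) (fun R hR => hj R hR) (fun T hT => li T hT) (fun R hR => ri R hR)

lemma indF_card (h2 : 2 ≤ N) (n : ℕ) (hn : 1 ≤ n) :
    (indF N n).card = (pathF (N - 1) n).card + (pathF (N - 3) (n - 1)).card := by
  have hsplit := Finset.card_filter_add_card_filter_not
    (s := indF N n) (p := fun T => (0 : ZMod N) ∈ T)
  have h1 : (indF N n).filter (fun T => ¬ (0 : ZMod N) ∈ T) = indF0 N n := by
    ext T
    rw [Finset.mem_filter, indF, indF0, Finset.mem_filter, Finset.mem_filter]
    constructor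
    · rintro ⟨⟨hu, hInd, hc⟩, h0⟩
      exact ⟨hu, hInd, h0, hc⟩
    · rintro ⟨hu, hInd, h0, hc⟩
      exact ⟨⟨hu, hInd, hc⟩, h0⟩
  have h1c : ((indF N n).filter (fun T => ¬ (0 : ZMod N) ∈ T)).card = (pathF (N - 1) n).card := by
    rw [h1, indF0_card h2]
  have h2c := indF_with_zero_card h2 n hn
  omega

lemma indF_zero_card : (indF N 0).card = 1 := by
  have : indF N 0 = {∅} := by
    ext T
    rw [indF, Finset.mem_filter, Finset.mem_singleton]
    constructor
    · rintro ⟨-, -, hc⟩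
      exact Finset.card_eq_zero.mp hc
    · rintro rfl
      exact ⟨Finset.mem_univ _, by intro q hq; simp at hq, rfl⟩
  rw [this]; rfl

end Stmt8Aux

namespace Stmt8Aux
open Finset
open scoped Classical

variable {N : ℕ} [NeZero N]

lemma isTri_iff {A : Finset (ZMod N × ℕ)} :
    IsTriAnimalZ N {0} A ↔ Anim A ∧ ((0 : ZMod N), 0) ∈ A := by
  constructor
  · rintro ⟨h1, hsup⟩
    refine ⟨⟨?_, hsup⟩, (h1 0).mpr (Finset.mem_singleton_self 0)⟩
    intro x hx h0
    have hx0 : (x.1, 0) ∈ A := by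
      have : x = (x.1, 0) := by
        rw [← h0]
      rw [← this]; exact hx
    have := (h1 x.1).mp hx0
    simpa using this
  · rintro ⟨⟨hsl, hsup⟩, h00⟩
    refine ⟨?_, hsup⟩
    intro q
    constructor
    · intro h
      have := hsl (q, 0) h rfl
      simpa using this
    · intro h
      rw [Finset.mem_singleton] at h
      rw [h]
      exact h00

lemma triCount_eq {n : ℕ} (hn : 1 ≤ n) : triCountZ N {0} n = (animF N n).card := by
  rw [triCountZ]
  have hset : {A : Finset (ZMod N × ℕ) | IsTriAnimalZ N {0} A ∧ A.card = n}
      = ↑(animF N n) := by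
    ext A
    rw [Set.mem_setOf_eq, Finset.mem_coe, animF, Finset.mem_filter, Finset.mem_powerset]
    constructor
    · rintro ⟨hTri, hc⟩
      have := isTri_iff.mp hTri
      exact ⟨subset_box this.1 (le_of_eq hc), this.1, hc⟩
    · rintro ⟨hsub, hAnim, hc⟩
      refine ⟨isTri_iff.mpr ⟨hAnim, ?_⟩, hc⟩
      apply anim_zero_mem hAnim
      rw [← Finset.card_pos, hc]
      omega
  rw [hset, Set.ncard_coe_finset]

lemma triCount_zero : triCountZ N {0} 0 = 0 := by
  rw [triCountZ]
  have hset : {A : Finset (ZMod N × ℕ) | IsTriAnimalZ N {0} A ∧ A.card = 0}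
      = (∅ : Set (Finset (ZMod N × ℕ))) := by
    ext A
    simp only [Set.mem_setOf_eq, Set.mem_empty_iff_false, iff_false, not_and]
    intro hTri
    have h00 := (isTri_iff.mp hTri).2
    intro hc
    rw [Finset.card_eq_zero] at hc
    rw [hc] at h00
    exact Finset.notMem_empty _ h00
  rw [hset, Set.ncard_empty]

lemma animF_zero_card : (animF N 0).card = 1 := by
  have : animF N 0 = {∅} := by
    ext A
    rw [animF, Finset.mem_filter, Finset.mem_powerset, Finset.mem_singleton]
    constructor
    · rintro ⟨-, -, hc⟩
      exact Finset.card_eq_zero.mp hc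
    · rintro rfl
      exact ⟨Finset.empty_subset _, ⟨by simp, by simp⟩, rfl⟩
  rw [this]; rfl

lemma gf_coeff (k : ℕ) :
    (PowerSeries.coeff k) (1 + triGFZ N {0}) = ((animF N k).card : ℤ) := by
  rw [map_add, triGFZ, PowerSeries.coeff_mk, PowerSeries.coeff_one]
  rcases Nat.eq_zero_or_pos k with rfl | hk
  · rw [if_pos rfl, triCount_zero, animF_zero_card]
    norm_num
  · rw [if_neg (by omega), triCount_eq hk]
    norm_num

end Stmt8Aux

section Final
open Finset Stmt8Aux
open scoped Classical

lemma Tnat_coeff_zero_s8 (n : ℕ) :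
    (Tnat 0).coeff n = (-1 : ℤ) ^ n * ((pathF 0 n).card : ℤ) := by
  have h : Tnat 0 = Tnat 1 := rfl
  rw [h, Tnat_coeff 0 n]

lemma Tpoly_odd_coeff (m : ℕ) (hm : 1 ≤ m) (n : ℕ) :
    (Tpoly (2 * (m : ℤ) - 1)).coeff n = (-1 : ℤ) ^ n * ((pathF (2 * m - 1) n).card : ℤ) := by
  have h1 : (2 * (m : ℤ) - 1 + 1) = ((2 * m : ℕ) : ℤ) := by push_cast; ring
  rw [Tpoly, h1, Int.toNat_natCast]
  rw [show 2 * m = (2 * m - 1) + 1 from by omega]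
  exact Tnat_coeff (2 * m - 1) n

lemma Tpoly_odd3_coeff (m : ℕ) (hm : 1 ≤ m) (n : ℕ) :
    (Tpoly (2 * (m : ℤ) - 3)).coeff n = (-1 : ℤ) ^ n * ((pathF (2 * m - 3) n).card : ℤ) := by
  have hm2 : 2 ≤ 2 * m := by omega
  have h1 : (2 * (m : ℤ) - 3 + 1) = ((2 * m - 2 : ℕ) : ℤ) := by
    rw [Nat.cast_sub hm2]
    push_cast
    ring
  rw [Tpoly, h1, Int.toNat_natCast]
  rcases Nat.lt_or_ge m 2 with h | h
  · have hm1 : m = 1 := by omega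
    subst hm1
    have e1 : 2 * 1 - 2 = 0 := by omega
    rw [e1]
    exact Tnat_coeff_zero_s8 n
  · rw [show 2 * m - 2 = (2 * m - 3) + 1 from by omega]
    exact Tnat_coeff (2 * m - 3) n

lemma That_coeff (m : ℕ) (hm : 1 ≤ m) (n : ℕ) [NeZero (2 * m)] :
    (Thatpoly (m : ℤ)).coeff n = (-1 : ℤ) ^ n * ((indF (2 * m) n).card : ℤ) := by
  have h2 : 2 ≤ 2 * m := by omega
  rw [Thatpoly, Polynomial.coeff_sub]
  rcases Nat.eq_zero_or_pos n with rfl | hn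
  · have hX : (Polynomial.X * Tpoly (2 * (m : ℤ) - 3)).coeff 0 = 0 := by
      rw [Polynomial.mul_coeff_zero, Polynomial.coeff_X_zero, zero_mul]
    rw [hX, Tpoly_odd_coeff m hm 0, pathF_zero_card, indF_zero_card]
    norm_num
  · obtain ⟨i, rfl⟩ : ∃ i, n = i + 1 := ⟨n - 1, by omega⟩
    rw [Polynomial.coeff_X_mul, Tpoly_odd_coeff m hm (i + 1), Tpoly_odd3_coeff m hm i]
    have hrw := indF_card (N := 2 * m) h2 (i + 1) (by omega)
    have e1 : 2 * m - 1 = 2 * m - 1 := rfl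
    have e2 : i + 1 - 1 = i := by omega
    rw [e2] at hrw
    rw [hrw]
    push_cast
    ring

theorem stmt8 (m : ℕ) (hm : 1 ≤ m) :
    (1 + triGFZ (2 * m) {0}) * ((Thatpoly m : Polynomial ℤ) : PowerSeries ℤ)
      = ((Tpoly (2 * (m : ℤ) - 1) : Polynomial ℤ) : PowerSeries ℤ) := by
  haveI : NeZero (2 * m) := ⟨by omega⟩
  have h2 : 2 ≤ 2 * m := by omega
  have hd : 2 ∣ 2 * m := ⟨m, rfl⟩
  apply PowerSeries.ext
  intro n
  rw [PowerSeries.coeff_mul]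
  have hterm : ∀ kl ∈ Finset.HasAntidiagonal.antidiagonal n,
      (PowerSeries.coeff kl.1) (1 + triGFZ (2 * m) {0}) *
        (PowerSeries.coeff kl.2) ((Thatpoly m : Polynomial ℤ) : PowerSeries ℤ)
      = ((animF (2 * m) kl.1).card : ℤ) * ((-1) ^ kl.2 * ((indF (2 * m) kl.2).card : ℤ)) := by
    intro kl _
    rw [gf_coeff kl.1, Polynomial.coeff_coe, That_coeff m hm kl.2]
  rw [Finset.sum_congr rfl hterm, ← pairs_sum_eq, main_id h2 hd n, Polynomial.coeff_coe,
    Tpoly_odd_coeff m hm n]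
  rw [indF0_card h2 n]

end Final
end
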